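/- arXiv:2207.06648 — 8 statements merged into one kernel-verified Lean document; each statement's English description precedes it below -/
import Mathlib

section
/- Let ω be a bounded covector field on K. For x ∈ K define 𝒮(ω)(x) := Σ_{k≥0} ω(f^k x) ∘ P^s(f^k x) ∘ Df^k(x) − Σ_{k≥1} ω(f^{-k} x) ∘ P^u(f^{-k} x) ∘ Df^{-k}(x). Then both series converge absolutely in E*, sup_{x∈K} ‖𝒮(ω)(x)‖ < ∞, and along every orbit x_n := f^n(x₀) in K the covectors ν_n := 𝒮(ω)(x_n) satisfy the inhomogeneous adjoint equation ν_n = ν_{n+1} ∘ Df(x_n) + ω(x_n) for all n ∈ ℤ. -/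
open Function Set Filter MeasureTheory Topology

theorem adjoint_shadowing_expansion_discrete
    {E : Type*} [NormedAddCommGroup E] [NormedSpace ℝ E] [FiniteDimensional ℝ E]
    (f g : E → E) (hgf : Function.LeftInverse g f) (hfg : Function.RightInverse g f)
    (hf : ContDiff ℝ 1 f) (hg : ContDiff ℝ 1 g)
    (K : Set E) (hKc : IsCompact K) (hfK : f '' K = K)
    (Vs Vu : E → Submodule ℝ E)
    (hsplit : ∀ x ∈ K, IsCompl (Vs x) (Vu x))
    (hequivs : ∀ x ∈ K, (Vs x).map (fderiv ℝ f x : E →ₗ[ℝ] E) = Vs (f x))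
    (hequivu : ∀ x ∈ K, (Vu x).map (fderiv ℝ f x : E →ₗ[ℝ] E) = Vu (f x))
    (C lam : ℝ) (hC : 0 < C) (hlam0 : 0 < lam) (hlam1 : lam < 1)
    (hyps : ∀ (n : ℕ), ∀ x ∈ K, ∀ v ∈ Vs x, ‖fderiv ℝ (f^[n]) x v‖ ≤ C * lam ^ n * ‖v‖)
    (hypu : ∀ (n : ℕ), ∀ x ∈ K, ∀ v ∈ Vu x, ‖fderiv ℝ (g^[n]) x v‖ ≤ C * lam ^ n * ‖v‖)
    (Ps Pu : E → E →L[ℝ] E)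
    (hproj : ∀ x ∈ K, ∀ v : E, Ps x v ∈ Vs x ∧ Pu x v ∈ Vu x ∧ Ps x v + Pu x v = v)
    (hPbdd : ∃ M : ℝ, ∀ x ∈ K, ‖Ps x‖ + ‖Pu x‖ ≤ M)
    (ω : E → E →L[ℝ] ℝ) (hωb : ∃ M : ℝ, ∀ x ∈ K, ‖ω x‖ ≤ M)
    (ν : E → E →L[ℝ] ℝ)
    (hν : ∀ x : E, ν x =
      (∑' k : ℕ, ((ω (f^[k] x)).comp (Ps (f^[k] x))).comp (fderiv ℝ (f^[k]) x)) -
      ∑' k : ℕ, ((ω (g^[k+1] x)).comp (Pu (g^[k+1] x))).comp (fderiv ℝ (g^[k+1]) x)) :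
    (∀ x ∈ K,
      Summable (fun k : ℕ =>
        ‖((ω (f^[k] x)).comp (Ps (f^[k] x))).comp (fderiv ℝ (f^[k]) x)‖) ∧
      Summable (fun k : ℕ =>
        ‖((ω (g^[k+1] x)).comp (Pu (g^[k+1] x))).comp (fderiv ℝ (g^[k+1]) x)‖)) ∧
    (∃ M : ℝ, ∀ x ∈ K, ‖ν x‖ ≤ M) ∧
    (∀ orb : ℤ → E, orb 0 ∈ K → (∀ n : ℤ, orb (n + 1) = f (orb n)) →
      ∀ n : ℤ, ν (orb n) = (ν (orb (n + 1))).comp (fderiv ℝ f (orb n)) + ω (orb n)) := by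
  obtain ⟨MP, hMP⟩ := hPbdd
  obtain ⟨Mω, hMω⟩ := hωb
  have hfd : Differentiable ℝ f := hf.differentiable one_ne_zero
  have hgd : Differentiable ℝ g := hg.differentiable one_ne_zero
  have hfdn : ∀ n : ℕ, Differentiable ℝ (f^[n]) := fun n => hfd.iterate n
  have hgdn : ∀ n : ℕ, Differentiable ℝ (g^[n]) := fun n => hgd.iterate n
  have hKf : ∀ x ∈ K, f x ∈ K := fun x hx => hfK ▸ Set.mem_image_of_mem f hx
  have hKg : ∀ x ∈ K, g x ∈ K := by
    intro x hx
    rw [← hfK] at hx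
    obtain ⟨y, hy, rfl⟩ := hx
    rwa [hgf y]
  have hKfn : ∀ (n : ℕ), ∀ x ∈ K, f^[n] x ∈ K := by
    intro n
    induction n with
    | zero => simpa using fun x hx => hx
    | succ n ih =>
      intro x hx
      rw [Function.iterate_succ_apply']
      exact hKf _ (ih x hx)
  have hKgn : ∀ (n : ℕ), ∀ x ∈ K, g^[n] x ∈ K := by
    intro n
    induction n with
    | zero => simpa using fun x hx => hx
    | succ n ih =>
      intro x hx
      rw [Function.iterate_succ_apply']
      exact hKg _ (ih x hx)
  -- chain rules
  have hDfs : ∀ (n : ℕ) (x : E),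
      fderiv ℝ (f^[n+1]) x = (fderiv ℝ f (f^[n] x)).comp (fderiv ℝ (f^[n]) x) := by
    intro n x
    rw [Function.iterate_succ']
    exact fderiv_comp x (hfd _) (hfdn n x)
  have hDgs : ∀ (n : ℕ) (x : E),
      fderiv ℝ (g^[n+1]) x = (fderiv ℝ g (g^[n] x)).comp (fderiv ℝ (g^[n]) x) := by
    intro n x
    rw [Function.iterate_succ']
    exact fderiv_comp x (hgd _) (hgdn n x)
  have hDfs' : ∀ (n : ℕ) (x : E),
      fderiv ℝ (f^[n+1]) x = (fderiv ℝ (f^[n]) (f x)).comp (fderiv ℝ f x) := by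
    intro n x
    rw [Function.iterate_succ]
    exact fderiv_comp x (hfdn n _) (hfd x)
  -- inverse derivatives
  have hinv : ∀ x : E, (fderiv ℝ g (f x)).comp (fderiv ℝ f x) = ContinuousLinearMap.id ℝ E := by
    intro x
    have h1 : fderiv ℝ (g ∘ f) x = (fderiv ℝ g (f x)).comp (fderiv ℝ f x) :=
      fderiv_comp x (hgd _) (hfd x)
    have h2 : (g ∘ f) = id := funext hgf
    rw [h2, fderiv_id] at h1
    exact h1.symm
  -- derivative of g^[k+1] ∘ f
  have hGF : ∀ (k : ℕ) (x : E),
      (fderiv ℝ (g^[k+1]) (f x)).comp (fderiv ℝ f x) = fderiv ℝ (g^[k]) x := by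
    intro k x
    have h2 : g^[k+1] ∘ f = g^[k] := by
      funext y
      simp [Function.iterate_succ_apply, hgf y]
    have h1 : fderiv ℝ (g^[k+1] ∘ f) x = (fderiv ℝ (g^[k+1]) (f x)).comp (fderiv ℝ f x) :=
      fderiv_comp x (hgdn _ _) (hfd x)
    rw [h2] at h1
    exact h1.symm
  -- equivariance of derivatives, membership versions
  have hVsF : ∀ x ∈ K, ∀ v ∈ Vs x, fderiv ℝ f x v ∈ Vs (f x) := by
    intro x hx v hv
    rw [← hequivs x hx]
    exact Submodule.mem_map_of_mem hv
  have hVuF : ∀ x ∈ K, ∀ v ∈ Vu x, fderiv ℝ f x v ∈ Vu (f x) := by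
    intro x hx v hv
    rw [← hequivu x hx]
    exact Submodule.mem_map_of_mem hv
  have hVsG : ∀ x ∈ K, ∀ v ∈ Vs x, fderiv ℝ g x v ∈ Vs (g x) := by
    intro x hx v hv
    have hgx : g x ∈ K := hKg x hx
    have hx' : x = f (g x) := (hfg x).symm
    have hv' : v ∈ Vs (f (g x)) := by rwa [← hx']
    rw [← hequivs (g x) hgx] at hv'
    obtain ⟨w, hw, hwv⟩ := hv'
    have : fderiv ℝ g x (fderiv ℝ f (g x) w) = w := by
      have := congrArg (fun (L : E →L[ℝ] E) => L w) (hinv (g x))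
      simpa [hfg x] using this
    rw [← hwv, ContinuousLinearMap.coe_coe, this]
    exact hw
  have hVuG : ∀ x ∈ K, ∀ v ∈ Vu x, fderiv ℝ g x v ∈ Vu (g x) := by
    intro x hx v hv
    have hgx : g x ∈ K := hKg x hx
    have hx' : x = f (g x) := (hfg x).symm
    have hv' : v ∈ Vu (f (g x)) := by rwa [← hx']
    rw [← hequivu (g x) hgx] at hv'
    obtain ⟨w, hw, hwv⟩ := hv'
    have : fderiv ℝ g x (fderiv ℝ f (g x) w) = w := by
      have := congrArg (fun (L : E →L[ℝ] E) => L w) (hinv (g x))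
      simpa [hfg x] using this
    rw [← hwv, ContinuousLinearMap.coe_coe, this]
    exact hw
  -- iterated versions
  have hVsFn : ∀ (n : ℕ), ∀ x ∈ K, ∀ v ∈ Vs x, fderiv ℝ (f^[n]) x v ∈ Vs (f^[n] x) := by
    intro n
    induction n with
    | zero => intro x hx v hv; simpa using hv
    | succ n ih =>
      intro x hx v hv
      rw [hDfs n x]
      rw [Function.iterate_succ_apply']
      exact hVsF _ (hKfn n x hx) _ (ih x hx v hv)
  have hVuFn : ∀ (n : ℕ), ∀ x ∈ K, ∀ v ∈ Vu x, fderiv ℝ (f^[n]) x v ∈ Vu (f^[n] x) := by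
    intro n
    induction n with
    | zero => intro x hx v hv; simpa using hv
    | succ n ih =>
      intro x hx v hv
      rw [hDfs n x]
      rw [Function.iterate_succ_apply']
      exact hVuF _ (hKfn n x hx) _ (ih x hx v hv)
  have hVsGn : ∀ (n : ℕ), ∀ x ∈ K, ∀ v ∈ Vs x, fderiv ℝ (g^[n]) x v ∈ Vs (g^[n] x) := by
    intro n
    induction n with
    | zero => intro x hx v hv; simpa using hv
    | succ n ih =>
      intro x hx v hv
      rw [hDgs n x]
      rw [Function.iterate_succ_apply']
      exact hVsG _ (hKgn n x hx) _ (ih x hx v hv)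
  have hVuGn : ∀ (n : ℕ), ∀ x ∈ K, ∀ v ∈ Vu x, fderiv ℝ (g^[n]) x v ∈ Vu (g^[n] x) := by
    intro n
    induction n with
    | zero => intro x hx v hv; simpa using hv
    | succ n ih =>
      intro x hx v hv
      rw [hDgs n x]
      rw [Function.iterate_succ_apply']
      exact hVuG _ (hKgn n x hx) _ (ih x hx v hv)
  -- uniqueness of decomposition
  have huniq : ∀ y ∈ K, ∀ a ∈ Vs y, ∀ b ∈ Vu y, ∀ a' ∈ Vs y, ∀ b' ∈ Vu y,
      a + b = a' + b' → a = a' ∧ b = b' := by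
    intro y hy a ha b hb a' ha' b' hb' hab
    have hd : Disjoint (Vs y) (Vu y) := (hsplit y hy).disjoint
    have heq : a - a' = b' - b := by
      rw [sub_eq_sub_iff_add_eq_add, hab, add_comm]
    have h1 : a - a' ∈ Vs y := Submodule.sub_mem _ ha ha'
    have h2 : a - a' ∈ Vu y := by
      rw [heq]; exact Submodule.sub_mem _ hb' hb
    have h0 : a - a' = 0 := Submodule.disjoint_def.mp hd _ h1 h2
    refine ⟨sub_eq_zero.mp h0, ?_⟩
    have hb0 : b' - b = 0 := by rw [← heq, h0]
    exact (sub_eq_zero.mp hb0).symm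
  -- projection commutation
  have hPsComm : ∀ (n : ℕ), ∀ x ∈ K, ∀ v : E,
      Ps (f^[n] x) (fderiv ℝ (f^[n]) x v) = fderiv ℝ (f^[n]) x (Ps x v) ∧
      Pu (f^[n] x) (fderiv ℝ (f^[n]) x v) = fderiv ℝ (f^[n]) x (Pu x v) := by
    intro n x hx v
    have hy : f^[n] x ∈ K := hKfn n x hx
    set D := fderiv ℝ (f^[n]) x
    obtain ⟨h1, h2, h3⟩ := hproj _ hy (D v)
    have h4 : D (Ps x v) ∈ Vs (f^[n] x) := hVsFn n x hx _ (hproj x hx v).1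
    have h5 : D (Pu x v) ∈ Vu (f^[n] x) := hVuFn n x hx _ (hproj x hx v).2.1
    have h6 : Ps (f^[n] x) (D v) + Pu (f^[n] x) (D v) = D (Ps x v) + D (Pu x v) := by
      rw [h3, ← map_add]
      rw [(hproj x hx v).2.2]
    exact huniq _ hy _ h1 _ h2 _ h4 _ h5 h6
  have hPuCommG : ∀ (n : ℕ), ∀ x ∈ K, ∀ v : E,
      Pu (g^[n] x) (fderiv ℝ (g^[n]) x v) = fderiv ℝ (g^[n]) x (Pu x v) := by
    intro n x hx v
    have hy : g^[n] x ∈ K := hKgn n x hx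
    set D := fderiv ℝ (g^[n]) x
    obtain ⟨h1, h2, h3⟩ := hproj _ hy (D v)
    have h4 : D (Ps x v) ∈ Vs (g^[n] x) := hVsGn n x hx _ (hproj x hx v).1
    have h5 : D (Pu x v) ∈ Vu (g^[n] x) := hVuGn n x hx _ (hproj x hx v).2.1
    have h6 : Ps (g^[n] x) (D v) + Pu (g^[n] x) (D v) = D (Ps x v) + D (Pu x v) := by
      rw [h3, ← map_add]
      rw [(hproj x hx v).2.2]
    exact (huniq _ hy _ h1 _ h2 _ h4 _ h5 h6).2
  -- norm bounds
  have hPsn : ∀ x ∈ K, ‖Ps x‖ ≤ MP := fun x hx =>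
    le_trans (le_add_of_nonneg_right (norm_nonneg _)) (hMP x hx)
  have hPun : ∀ x ∈ K, ‖Pu x‖ ≤ MP := fun x hx =>
    le_trans (le_add_of_nonneg_left (norm_nonneg _)) (hMP x hx)
  have hAbd : ∀ (k : ℕ), ∀ x ∈ K,
      ‖((ω (f^[k] x)).comp (Ps (f^[k] x))).comp (fderiv ℝ (f^[k]) x)‖
        ≤ Mω * C * MP * lam ^ k := by
    intro k x hx
    have hy := hKfn k x hx
    have hMω0 : (0:ℝ) ≤ Mω := le_trans (norm_nonneg _) (hMω x hx)
    have hMP0 : (0:ℝ) ≤ MP := le_trans (norm_nonneg _) (hPsn x hx)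
    apply ContinuousLinearMap.opNorm_le_bound
    · positivity
    intro v
    simp only [ContinuousLinearMap.comp_apply]
    rw [(hPsComm k x hx v).1]
    calc ‖(ω (f^[k] x)) (fderiv ℝ (f^[k]) x (Ps x v))‖
        ≤ ‖ω (f^[k] x)‖ * ‖fderiv ℝ (f^[k]) x (Ps x v)‖ := (ω _).le_opNorm _
      _ ≤ Mω * (C * lam ^ k * (MP * ‖v‖)) := by
          have h1 : ‖Ps x v‖ ≤ MP * ‖v‖ :=
            ((Ps x).le_opNorm v).trans
              (mul_le_mul_of_nonneg_right (hPsn x hx) (norm_nonneg _))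
          have h2 : ‖fderiv ℝ (f^[k]) x (Ps x v)‖ ≤ C * lam ^ k * (MP * ‖v‖) := by
            refine (hyps k x hx _ (hproj x hx v).1).trans ?_
            have hpos : (0:ℝ) ≤ C * lam ^ k := by positivity
            exact mul_le_mul_of_nonneg_left h1 hpos
          exact mul_le_mul (hMω _ hy) h2 (norm_nonneg _) hMω0
      _ = Mω * C * MP * lam ^ k * ‖v‖ := by ring
  have hBbd : ∀ (k : ℕ), ∀ x ∈ K,
      ‖((ω (g^[k+1] x)).comp (Pu (g^[k+1] x))).comp (fderiv ℝ (g^[k+1]) x)‖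
        ≤ Mω * C * MP * lam * lam ^ k := by
    intro k x hx
    have hy := hKgn (k+1) x hx
    have hMω0 : (0:ℝ) ≤ Mω := le_trans (norm_nonneg _) (hMω x hx)
    have hMP0 : (0:ℝ) ≤ MP := le_trans (norm_nonneg _) (hPsn x hx)
    apply ContinuousLinearMap.opNorm_le_bound
    · positivity
    intro v
    simp only [ContinuousLinearMap.comp_apply]
    rw [hPuCommG (k+1) x hx v]
    calc ‖(ω (g^[k+1] x)) (fderiv ℝ (g^[k+1]) x (Pu x v))‖
        ≤ ‖ω (g^[k+1] x)‖ * ‖fderiv ℝ (g^[k+1]) x (Pu x v)‖ := (ω _).le_opNorm _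
      _ ≤ Mω * (C * lam ^ (k+1) * (MP * ‖v‖)) := by
          have h1 : ‖Pu x v‖ ≤ MP * ‖v‖ :=
            ((Pu x).le_opNorm v).trans
              (mul_le_mul_of_nonneg_right (hPun x hx) (norm_nonneg _))
          have h2 : ‖fderiv ℝ (g^[k+1]) x (Pu x v)‖ ≤ C * lam ^ (k+1) * (MP * ‖v‖) := by
            refine (hypu (k+1) x hx _ (hproj x hx v).2.1).trans ?_
            have hpos : (0:ℝ) ≤ C * lam ^ (k+1) := by positivity
            exact mul_le_mul_of_nonneg_left h1 hpos
          exact mul_le_mul (hMω _ hy) h2 (norm_nonneg _) hMω0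
      _ = Mω * C * MP * lam * lam ^ k * ‖v‖ := by ring
  have hgeom : Summable (fun k : ℕ => Mω * C * MP * lam ^ k) :=
    (summable_geometric_of_lt_one hlam0.le hlam1).mul_left _
  have hgeom' : Summable (fun k : ℕ => Mω * C * MP * lam * lam ^ k) :=
    (summable_geometric_of_lt_one hlam0.le hlam1).mul_left _
  have hSumA : ∀ x ∈ K, Summable (fun k : ℕ =>
      ‖((ω (f^[k] x)).comp (Ps (f^[k] x))).comp (fderiv ℝ (f^[k]) x)‖) :=
    fun x hx => Summable.of_nonneg_of_le (fun k => norm_nonneg _)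
      (fun k => hAbd k x hx) hgeom
  have hSumB : ∀ x ∈ K, Summable (fun k : ℕ =>
      ‖((ω (g^[k+1] x)).comp (Pu (g^[k+1] x))).comp (fderiv ℝ (g^[k+1]) x)‖) :=
    fun x hx => Summable.of_nonneg_of_le (fun k => norm_nonneg _)
      (fun k => hBbd k x hx) hgeom'
  refine ⟨fun x hx => ⟨hSumA x hx, hSumB x hx⟩, ?_, ?_⟩
  · -- boundedness
    refine ⟨Mω * C * MP * (1 - lam)⁻¹ + Mω * C * MP * lam * (1 - lam)⁻¹, fun x hx => ?_⟩
    rw [hν x]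
    refine (norm_sub_le _ _).trans ?_
    have h1 : ‖∑' k : ℕ, ((ω (f^[k] x)).comp (Ps (f^[k] x))).comp (fderiv ℝ (f^[k]) x)‖
        ≤ Mω * C * MP * (1 - lam)⁻¹ := by
      refine (norm_tsum_le_tsum_norm (hSumA x hx)).trans ?_
      refine le_trans (Summable.tsum_le_tsum (fun k => hAbd k x hx) (hSumA x hx) hgeom) ?_
      rw [tsum_mul_left, tsum_geometric_of_lt_one hlam0.le hlam1]
    have h2 : ‖∑' k : ℕ, ((ω (g^[k+1] x)).comp (Pu (g^[k+1] x))).comp (fderiv ℝ (g^[k+1]) x)‖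
        ≤ Mω * C * MP * lam * (1 - lam)⁻¹ := by
      refine (norm_tsum_le_tsum_norm (hSumB x hx)).trans ?_
      refine le_trans (Summable.tsum_le_tsum (fun k => hBbd k x hx) (hSumB x hx) hgeom') ?_
      rw [tsum_mul_left, tsum_geometric_of_lt_one hlam0.le hlam1]
    linarith
  · -- the adjoint equation along orbits
    have hstep : ∀ x ∈ K, ν x = (ν (f x)).comp (fderiv ℝ f x) + ω x := by
      intro x hx
      have hfx : f x ∈ K := hKf x hx
      have hSAx : Summable (fun k : ℕ =>
          ((ω (f^[k] x)).comp (Ps (f^[k] x))).comp (fderiv ℝ (f^[k]) x)) :=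
        (hSumA x hx).of_norm
      have hSBx : Summable (fun k : ℕ =>
          ((ω (g^[k+1] x)).comp (Pu (g^[k+1] x))).comp (fderiv ℝ (g^[k+1]) x)) :=
        (hSumB x hx).of_norm
      have hSAfx : Summable (fun k : ℕ =>
          ((ω (f^[k] (f x))).comp (Ps (f^[k] (f x)))).comp (fderiv ℝ (f^[k]) (f x))) :=
        (hSumA _ hfx).of_norm
      have hSBfx : Summable (fun k : ℕ =>
          ((ω (g^[k+1] (f x))).comp (Pu (g^[k+1] (f x)))).comp (fderiv ℝ (g^[k+1]) (f x))) :=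
        (hSumB _ hfx).of_norm
      have hBpx : Summable (fun k : ℕ =>
          ((ω (g^[k] x)).comp (Pu (g^[k] x))).comp (fderiv ℝ (g^[k]) x)) :=
        (summable_nat_add_iff (f := fun k : ℕ =>
          ((ω (g^[k] x)).comp (Pu (g^[k] x))).comp (fderiv ℝ (g^[k]) x)) 1).mp hSBx
      rw [hν x, hν (f x), ContinuousLinearMap.sub_comp]
      have eA : (∑' k : ℕ,
            ((ω (f^[k] (f x))).comp (Ps (f^[k] (f x)))).comp (fderiv ℝ (f^[k]) (f x))).comp
              (fderiv ℝ f x)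
          = ∑' k : ℕ,
            (((ω (f^[k] (f x))).comp (Ps (f^[k] (f x)))).comp (fderiv ℝ (f^[k]) (f x))).comp
              (fderiv ℝ f x) :=
        ((ContinuousLinearMap.compL ℝ E E ℝ).flip (fderiv ℝ f x)).map_tsum hSAfx
      have eB : (∑' k : ℕ,
            ((ω (g^[k+1] (f x))).comp (Pu (g^[k+1] (f x)))).comp (fderiv ℝ (g^[k+1]) (f x))).comp
              (fderiv ℝ f x)
          = ∑' k : ℕ,
            (((ω (g^[k+1] (f x))).comp (Pu (g^[k+1] (f x)))).comp (fderiv ℝ (g^[k+1]) (f x))).comp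
              (fderiv ℝ f x) :=
        ((ContinuousLinearMap.compL ℝ E E ℝ).flip (fderiv ℝ f x)).map_tsum hSBfx
      rw [eA, eB]
      have hA' : ∀ k : ℕ,
          (((ω (f^[k] (f x))).comp (Ps (f^[k] (f x)))).comp (fderiv ℝ (f^[k]) (f x))).comp
              (fderiv ℝ f x)
            = ((ω (f^[k+1] x)).comp (Ps (f^[k+1] x))).comp (fderiv ℝ (f^[k+1]) x) := by
        intro k
        rw [ContinuousLinearMap.comp_assoc, ← hDfs' k x, ← Function.iterate_succ_apply]
      have hB' : ∀ k : ℕ,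
          (((ω (g^[k+1] (f x))).comp (Pu (g^[k+1] (f x)))).comp (fderiv ℝ (g^[k+1]) (f x))).comp
              (fderiv ℝ f x)
            = ((ω (g^[k] x)).comp (Pu (g^[k] x))).comp (fderiv ℝ (g^[k]) x) := by
        intro k
        have hgk : g^[k+1] (f x) = g^[k] x := by
          rw [Function.iterate_succ_apply, hgf x]
        rw [ContinuousLinearMap.comp_assoc, hGF k x, hgk]
      simp only [hA', hB']
      rw [Summable.tsum_eq_zero_add hSAx, Summable.tsum_eq_zero_add hBpx]
      have h00 : (((ω (f^[0] x)).comp (Ps (f^[0] x))).comp (fderiv ℝ (f^[0]) x))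
          + (((ω (g^[0] x)).comp (Pu (g^[0] x))).comp (fderiv ℝ (g^[0]) x)) = ω x := by
        ext v
        have hid : fderiv ℝ (id : E → E) x = ContinuousLinearMap.id ℝ E := fderiv_id
        simp only [Function.iterate_zero, hid, ContinuousLinearMap.comp_apply,
          ContinuousLinearMap.coe_id', id_eq, ContinuousLinearMap.add_apply,
          ContinuousLinearMap.id_apply]
        rw [← map_add, (hproj x hx v).2.2]
      rw [← h00]
      abel
    intro orb h0 hrec n
    have horb : ∀ m : ℤ, orb m ∈ K := by
      intro m
      induction m using Int.induction_on with
      | zero => exact h0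
      | succ i ih => rw [hrec i]; exact hKf _ ih
      | pred i ih =>
        have h1 : orb (-(i:ℤ)) = f (orb (-(i:ℤ) - 1)) := by
          have := hrec (-(i:ℤ) - 1)
          rw [show (-(i:ℤ) - 1 + 1) = -(i:ℤ) by ring] at this
          exact this
        have h2 : orb (-(i:ℤ) - 1) = g (orb (-(i:ℤ))) := by
          rw [h1, hgf]
        rw [h2]
        exact hKg _ ih
    rw [hrec n]
    exact hstep _ (horb n)
end

section
/- Along any orbit x_n := f^n(x₀) in K and for any sequence of covectors ω_n ∈ E* with sup_n ‖ω_n‖ < ∞, there is at most one bounded solution of the inhomogeneous adjoint equation: if ν_n and ν'_n are two sequences in E* with sup_n ‖ν_n‖ < ∞, sup_n ‖ν'_n‖ < ∞, ν_n = ν_{n+1} ∘ Df(x_n) + ω_n and ν'_n = ν'_{n+1} ∘ Df(x_n) + ω_n for all n ∈ ℤ, then ν_n = ν'_n for all n ∈ ℤ. -/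
open Function Set Filter MeasureTheory Topology

theorem adjoint_shadowing_uniqueness_discrete
    {E : Type*} [NormedAddCommGroup E] [NormedSpace ℝ E] [FiniteDimensional ℝ E]
    (f g : E → E) (hgf : Function.LeftInverse g f) (hfg : Function.RightInverse g f)
    (hf : ContDiff ℝ 1 f) (hg : ContDiff ℝ 1 g)
    (K : Set E) (hKc : IsCompact K) (hfK : f '' K = K)
    (Vs Vu : E → Submodule ℝ E)
    (hsplit : ∀ x ∈ K, IsCompl (Vs x) (Vu x))
    (hequivs : ∀ x ∈ K, (Vs x).map (fderiv ℝ f x : E →ₗ[ℝ] E) = Vs (f x))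
    (hequivu : ∀ x ∈ K, (Vu x).map (fderiv ℝ f x : E →ₗ[ℝ] E) = Vu (f x))
    (C lam : ℝ) (hC : 0 < C) (hlam0 : 0 < lam) (hlam1 : lam < 1)
    (hyps : ∀ (n : ℕ), ∀ x ∈ K, ∀ v ∈ Vs x, ‖fderiv ℝ (f^[n]) x v‖ ≤ C * lam ^ n * ‖v‖)
    (hypu : ∀ (n : ℕ), ∀ x ∈ K, ∀ v ∈ Vu x, ‖fderiv ℝ (g^[n]) x v‖ ≤ C * lam ^ n * ‖v‖)
    (Ps Pu : E → E →L[ℝ] E)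
    (hproj : ∀ x ∈ K, ∀ v : E, Ps x v ∈ Vs x ∧ Pu x v ∈ Vu x ∧ Ps x v + Pu x v = v)
    (hPbdd : ∃ M : ℝ, ∀ x ∈ K, ‖Ps x‖ + ‖Pu x‖ ≤ M)
    (orb : ℤ → E) (horb0 : orb 0 ∈ K) (horb : ∀ n : ℤ, orb (n + 1) = f (orb n))
    (ω : ℤ → E →L[ℝ] ℝ) (hωb : ∃ M : ℝ, ∀ n : ℤ, ‖ω n‖ ≤ M)
    (ν ν' : ℤ → E →L[ℝ] ℝ)
    (hνb : ∃ M : ℝ, ∀ n : ℤ, ‖ν n‖ ≤ M) (hν'b : ∃ M : ℝ, ∀ n : ℤ, ‖ν' n‖ ≤ M)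
    (hν : ∀ n : ℤ, ν n = (ν (n + 1)).comp (fderiv ℝ f (orb n)) + ω n)
    (hν' : ∀ n : ℤ, ν' n = (ν' (n + 1)).comp (fderiv ℝ f (orb n)) + ω n) :
    ∀ n : ℤ, ν n = ν' n := by

  have hdf : Differentiable ℝ f := hf.differentiable one_ne_zero
  have hdg : Differentiable ℝ g := hg.differentiable one_ne_zero
  have hdfi : ∀ k : ℕ, Differentiable ℝ (f^[k]) := by
    intro k; induction k with
    | zero => simpa using differentiable_id
    | succ k ih => rw [Function.iterate_succ]; exact ih.comp hdf
  have hdgi : ∀ k : ℕ, Differentiable ℝ (g^[k]) := by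
    intro k; induction k with
    | zero => simpa using differentiable_id
    | succ k ih => rw [Function.iterate_succ]; exact ih.comp hdg
  -- the orbit stays in K
  have horbK : ∀ n : ℤ, orb n ∈ K := by
    intro n
    induction n using Int.induction_on with
    | zero => exact horb0
    | succ k ih => rw [horb k, ← hfK]; exact Set.mem_image_of_mem f ih
    | pred k ih =>
        have h1 : orb (-k) = f (orb (-(k+1))) := by
          have := horb (-(k+1)); rw [← this]; norm_num
        rw [← hfK] at ih
        obtain ⟨x, hxK, hxe⟩ := ih
        have hx : x = orb (-(k+1)) := hgf.injective (by rw [hxe, h1])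
        rw [hx] at hxK
        rwa [show (-(k:ℤ) - 1) = -((k:ℤ)+1) by ring]
  have horbIt : ∀ (k : ℕ) (n : ℤ), orb (n + k) = f^[k] (orb n) := by
    intro k
    induction k with
    | zero => intro n; simp
    | succ k ih =>
        intro n
        rw [show (n + ((k:ℕ)+1:ℕ) : ℤ) = (n + k) + 1 by push_cast; ring, horb, ih,
          Function.iterate_succ_apply']
  set μ : ℤ → E →L[ℝ] ℝ := fun n => ν n - ν' n with hμdef
  have hrec : ∀ n : ℤ, μ n = (μ (n+1)).comp (fderiv ℝ f (orb n)) := by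
    intro n
    simp only [hμdef]
    rw [hν n, hν' n]
    ext v
    simp [ContinuousLinearMap.comp_apply]
  have hrecIt : ∀ (k : ℕ) (n : ℤ), μ n = (μ (n + k)).comp (fderiv ℝ (f^[k]) (orb n)) := by
    intro k
    induction k with
    | zero =>
        intro n
        simp [Function.iterate_zero, fderiv_id]
    | succ k ih =>
        intro n
        have hchain : fderiv ℝ (f^[k+1]) (orb n)
            = (fderiv ℝ (f^[k]) (f (orb n))).comp (fderiv ℝ f (orb n)) := by
          rw [Function.iterate_succ]
          exact fderiv_comp (orb n) ((hdfi k) _) (hdf _)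
        have h1 : (n + 1 + (k:ℕ) : ℤ) = n + ((k:ℕ)+1) := by push_cast; ring
        rw [hrec n, ih (n+1), hchain, ← horb n, h1, ContinuousLinearMap.comp_assoc]
        norm_cast
  obtain ⟨M1, hM1⟩ := hνb
  obtain ⟨M2, hM2⟩ := hν'b
  set M : ℝ := M1 + M2 with hMdef
  have hμb : ∀ n : ℤ, ‖μ n‖ ≤ M := by
    intro n
    exact le_trans (norm_sub_le _ _) (add_le_add (hM1 n) (hM2 n))
  have hM0 : 0 ≤ M := le_trans (norm_nonneg _) (hμb 0)
  have hlim : ∀ (a : ℝ), (∀ k : ℕ, |a| ≤ (M * C) * lam ^ k) → a = 0 := by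
    intro a ha
    have h0 : Filter.Tendsto (fun k : ℕ => (M * C) * lam ^ k) Filter.atTop (nhds 0) := by
      have := tendsto_pow_atTop_nhds_zero_of_lt_one hlam0.le hlam1
      simpa using this.const_mul (M * C)
    have : |a| ≤ 0 := ge_of_tendsto' h0 (fun k => ha k)
    exact abs_nonpos_iff.mp this
  -- stable direction
  have hstab : ∀ n : ℤ, ∀ v ∈ Vs (orb n), v ≠ 0 → μ n v = 0 := by
    intro n v hv hv0
    have hvpos : 0 < ‖v‖ := norm_pos_iff.mpr hv0
    have key : ∀ k : ℕ, |μ n v / ‖v‖| ≤ (M * C) * lam ^ k := by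
      intro k
      have h1 : μ n v = μ (n + k) (fderiv ℝ (f^[k]) (orb n) v) := by
        conv_lhs => rw [hrecIt k n]
        rfl
      have h2 : |μ n v| ≤ M * (C * lam ^ k * ‖v‖) := by
        rw [h1, ← Real.norm_eq_abs]
        calc ‖μ (n + k) (fderiv ℝ (f^[k]) (orb n) v)‖
            ≤ ‖μ (n + k)‖ * ‖fderiv ℝ (f^[k]) (orb n) v‖ := (μ (n+k)).le_opNorm _
          _ ≤ M * (C * lam ^ k * ‖v‖) := by
              apply mul_le_mul (hμb _) (hyps k (orb n) (horbK n) v hv) (norm_nonneg _) hM0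
      rw [abs_div, abs_of_pos hvpos, div_le_iff₀ hvpos]
      calc |μ n v| ≤ M * (C * lam ^ k * ‖v‖) := h2
        _ = M * C * lam ^ k * ‖v‖ := by ring
    have := hlim _ key
    field_simp at this
    simpa using this
  -- unstable direction
  have hunst : ∀ n : ℤ, ∀ v ∈ Vu (orb n), v ≠ 0 → μ n v = 0 := by
    intro n v hv hv0
    have hvpos : 0 < ‖v‖ := norm_pos_iff.mpr hv0
    have key : ∀ k : ℕ, |μ n v / ‖v‖| ≤ (M * C) * lam ^ k := by
      intro k
      set w := fderiv ℝ (g^[k]) (orb n) v with hwdef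
      have horb' : orb n = f^[k] (orb (n - k)) := by
        have := horbIt k (n - k)
        rw [show (n - (k:ℕ) + (k:ℕ) : ℤ) = n by ring] at this
        exact this
      have hgorb : g^[k] (orb n) = orb (n - k) := by
        rw [horb']; exact hgf.iterate k _
      have himg : fderiv ℝ (f^[k]) (orb (n - k)) w = v := by
        have hcomp : (f^[k]) ∘ (g^[k]) = id := funext (hfg.iterate k)
        have hch := fderiv_comp (𝕜 := ℝ) (orb n) ((hdfi k) (g^[k] (orb n))) ((hdgi k) (orb n))
        rw [hcomp, fderiv_id, hgorb] at hch
        have := congrArg (fun (T : E →L[ℝ] E) => T v) hch.symm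
        simpa using this
      have h1 : μ n v = μ ((n - k) + k) (fderiv ℝ (f^[k]) (orb (n - k)) w) := by
        rw [show ((n - (k:ℕ)) + (k:ℕ) : ℤ) = n by ring, himg]
      have h1' : μ n v = μ (n - k) w := by
        rw [h1, hrecIt k (n - k)]; rfl
      have h2 : |μ n v| ≤ M * (C * lam ^ k * ‖v‖) := by
        rw [h1', ← Real.norm_eq_abs]
        calc ‖μ (n - k) w‖ ≤ ‖μ (n - k)‖ * ‖w‖ := (μ (n - k)).le_opNorm _
          _ ≤ M * (C * lam ^ k * ‖v‖) := by
              apply mul_le_mul (hμb _) (hypu k (orb n) (horbK n) v hv) (norm_nonneg _) hM0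
      rw [abs_div, abs_of_pos hvpos, div_le_iff₀ hvpos]
      calc |μ n v| ≤ M * (C * lam ^ k * ‖v‖) := h2
        _ = M * C * lam ^ k * ‖v‖ := by ring
    have := hlim _ key
    field_simp at this
    simpa using this
  have hstab' : ∀ n : ℤ, ∀ v ∈ Vs (orb n), μ n v = 0 := by
    intro n v hv
    by_cases h : v = 0
    · rw [h]; simp
    · exact hstab n v hv h
  have hunst' : ∀ n : ℤ, ∀ v ∈ Vu (orb n), μ n v = 0 := by
    intro n v hv
    by_cases h : v = 0
    · rw [h]; simp
    · exact hunst n v hv h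
  intro n
  ext v
  obtain ⟨hvs, hvu, hsum⟩ := hproj (orb n) (horbK n) v
  have hμ0 : μ n v = 0 := by
    rw [← hsum, map_add, hstab' n _ hvs, hunst' n _ hvu, add_zero]
  have : ν n v - ν' n v = 0 := by
    simpa [hμdef] using hμ0
  linarith
end

section
/- Suppose additionally that x ↦ P^s(x) and x ↦ P^u(x) are continuous on K, let ρ be an f-invariant Borel probability measure on K, let X be a continuous vector field on K and ω a continuous covector field on K. Define S(X)(x) := Σ_{k≥0} Df^k(f^{-k}x) P^s(f^{-k}x) X(f^{-k}x) − Σ_{k≥1} Df^{-k}(f^{k}x) P^u(f^{k}x) X(f^{k}x) and 𝒮(ω)(x) := Σ_{k≥0} ω(f^k x) ∘ P^s(f^k x) ∘ Df^k(x) − Σ_{k≥1} ω(f^{-k} x) ∘ P^u(f^{-k} x) ∘ Df^{-k}(x). Then ∫_K ω(x)(S(X)(x)) dρ(x) = ∫_K (𝒮(ω)(x))(X(x)) dρ(x); that is, 𝒮 is the adjoint of the linear shadowing operator S with respect to ρ. -/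
open Function Set Filter MeasureTheory Topology

section Aux

variable {E : Type*} [NormedAddCommGroup E] [NormedSpace ℝ E]

/-- term of the first series, pushed forward. -/
noncomputable def tA (ω : E → E →L[ℝ] ℝ) (Ps : E → E →L[ℝ] E) (X : E → E) (f g : E → E) (k : ℕ) (x : E) : ℝ :=
  ω x (fderiv ℝ (f^[k]) (g^[k] x) (Ps (g^[k] x) (X (g^[k] x))))

noncomputable def tB (ω : E → E →L[ℝ] ℝ) (Pu : E → E →L[ℝ] E) (X : E → E) (f g : E → E) (k : ℕ) (x : E) : ℝ :=
  ω x (fderiv ℝ (g^[k+1]) (f^[k+1] x) (Pu (f^[k+1] x) (X (f^[k+1] x))))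

noncomputable def tC (ω : E → E →L[ℝ] ℝ) (Ps : E → E →L[ℝ] E) (X : E → E) (f : E → E) (k : ℕ) (x : E) : ℝ :=
  (((ω (f^[k] x)).comp (Ps (f^[k] x))).comp (fderiv ℝ (f^[k]) x)) (X x)

noncomputable def tD (ω : E → E →L[ℝ] ℝ) (Pu : E → E →L[ℝ] E) (X : E → E) (g : E → E) (k : ℕ) (x : E) : ℝ :=
  (((ω (g^[k+1] x)).comp (Pu (g^[k+1] x))).comp (fderiv ℝ (g^[k+1]) x)) (X x)

end Aux

theorem adjoint_duality_discrete
    {E : Type*} [NormedAddCommGroup E] [NormedSpace ℝ E] [FiniteDimensional ℝ E]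
    (f g : E → E) (hgf : Function.LeftInverse g f) (hfg : Function.RightInverse g f)
    (hf : ContDiff ℝ 1 f) (hg : ContDiff ℝ 1 g)
    (K : Set E) (hKc : IsCompact K) (hfK : f '' K = K)
    (Vs Vu : E → Submodule ℝ E)
    (hsplit : ∀ x ∈ K, IsCompl (Vs x) (Vu x))
    (hequivs : ∀ x ∈ K, (Vs x).map (fderiv ℝ f x : E →ₗ[ℝ] E) = Vs (f x))
    (hequivu : ∀ x ∈ K, (Vu x).map (fderiv ℝ f x : E →ₗ[ℝ] E) = Vu (f x))
    (C lam : ℝ) (hC : 0 < C) (hlam0 : 0 < lam) (hlam1 : lam < 1)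
    (hyps : ∀ (n : ℕ), ∀ x ∈ K, ∀ v ∈ Vs x, ‖fderiv ℝ (f^[n]) x v‖ ≤ C * lam ^ n * ‖v‖)
    (hypu : ∀ (n : ℕ), ∀ x ∈ K, ∀ v ∈ Vu x, ‖fderiv ℝ (g^[n]) x v‖ ≤ C * lam ^ n * ‖v‖)
    (Ps Pu : E → E →L[ℝ] E)
    (hproj : ∀ x ∈ K, ∀ v : E, Ps x v ∈ Vs x ∧ Pu x v ∈ Vu x ∧ Ps x v + Pu x v = v)
    (hPbdd : ∃ M : ℝ, ∀ x ∈ K, ‖Ps x‖ + ‖Pu x‖ ≤ M)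
    [MeasurableSpace E] [BorelSpace E]
    (ρ : Measure E) [IsProbabilityMeasure ρ] (hρK : ρ K = 1)
    (hρinv : ∀ A : Set E, MeasurableSet A → ρ (f ⁻¹' A) = ρ A)
    (hPsc : ContinuousOn Ps K) (hPuc : ContinuousOn Pu K)
    (X : E → E) (hXc : ContinuousOn X K)
    (ω : E → E →L[ℝ] ℝ) (hωc : ContinuousOn ω K)
    (SX : E → E)
    (hSX : ∀ x : E, SX x =
      (∑' k : ℕ, fderiv ℝ (f^[k]) (g^[k] x) (Ps (g^[k] x) (X (g^[k] x)))) -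
      ∑' k : ℕ, fderiv ℝ (g^[k+1]) (f^[k+1] x) (Pu (f^[k+1] x) (X (f^[k+1] x))))
    (Sω : E → E →L[ℝ] ℝ)
    (hSω : ∀ x : E, Sω x =
      (∑' k : ℕ, ((ω (f^[k] x)).comp (Ps (f^[k] x))).comp (fderiv ℝ (f^[k]) x)) -
      ∑' k : ℕ, ((ω (g^[k+1] x)).comp (Pu (g^[k+1] x))).comp (fderiv ℝ (g^[k+1]) x)) :
    ∫ x in K, (ω x) (SX x) ∂ρ = ∫ x in K, (Sω x) (X x) ∂ρ := by
  classical
  -- ### invariance of K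
  have hfmem : ∀ x ∈ K, f x ∈ K := fun x hx => hfK ▸ Set.mem_image_of_mem f hx
  have hgmem : ∀ x ∈ K, g x ∈ K := by
    intro x hx
    have hx' : x ∈ f '' K := hfK.symm ▸ hx
    obtain ⟨y, hy, rfl⟩ := hx'
    rwa [hgf y]
  have hfkK : ∀ k, ∀ x ∈ K, f^[k] x ∈ K := by
    intro k
    induction k with
    | zero => intro x hx; simpa using hx
    | succ n ih =>
      intro x hx
      rw [Function.iterate_succ_apply']
      exact hfmem _ (ih x hx)
  have hgkK : ∀ k, ∀ x ∈ K, g^[k] x ∈ K := by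
    intro k
    induction k with
    | zero => intro x hx; simpa using hx
    | succ n ih =>
      intro x hx
      rw [Function.iterate_succ_apply']
      exact hgmem _ (ih x hx)
  -- ### differentiability and chain rules
  have hdf : Differentiable ℝ f := hf.differentiable one_ne_zero
  have hdg : Differentiable ℝ g := hg.differentiable one_ne_zero
  have hcfk : ∀ k : ℕ, ContDiff ℝ 1 (f^[k]) := by
    intro k
    induction k with
    | zero => simpa using contDiff_id
    | succ n ih => rw [Function.iterate_succ']; exact hf.comp ih
  have hcgk : ∀ k : ℕ, ContDiff ℝ 1 (g^[k]) := by
    intro k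
    induction k with
    | zero => simpa using contDiff_id
    | succ n ih => rw [Function.iterate_succ']; exact hg.comp ih
  have hdfk : ∀ k : ℕ, Differentiable ℝ (f^[k]) := fun k => (hcfk k).differentiable one_ne_zero
  have hdgk : ∀ k : ℕ, Differentiable ℝ (g^[k]) := fun k => (hcgk k).differentiable one_ne_zero
  have chainf : ∀ (k : ℕ) (x : E), fderiv ℝ (f^[k+1]) x
      = (fderiv ℝ f (f^[k] x)).comp (fderiv ℝ (f^[k]) x) := by
    intro k x
    rw [Function.iterate_succ']
    exact fderiv_comp x (hdf _) (hdfk k x)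
  have chaing : ∀ (k : ℕ) (x : E), fderiv ℝ (g^[k+1]) x
      = (fderiv ℝ g (g^[k] x)).comp (fderiv ℝ (g^[k]) x) := by
    intro k x
    rw [Function.iterate_succ']
    exact fderiv_comp x (hdg _) (hdgk k x)
  have chainf2 : ∀ (k : ℕ) (x : E), fderiv ℝ (f^[k+1]) x
      = (fderiv ℝ (f^[k]) (f x)).comp (fderiv ℝ f x) := by
    intro k x
    rw [Function.iterate_succ]
    exact fderiv_comp x (hdfk k _) (hdf x)
  have chaing2 : ∀ (k : ℕ) (x : E), fderiv ℝ (g^[k+1]) x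
      = (fderiv ℝ (g^[k]) (g x)).comp (fderiv ℝ g x) := by
    intro k x
    rw [Function.iterate_succ]
    exact fderiv_comp x (hdgk k _) (hdg x)
  have invf : ∀ (x : E) (v : E), fderiv ℝ g (f x) (fderiv ℝ f x v) = v := by
    intro x v
    have hid : g ∘ f = id := funext hgf
    have h := fderiv_comp x (hdg (f x)) (hdf x)
    rw [hid, fderiv_id] at h
    simpa using (congrArg (fun T : E →L[ℝ] E => T v) h).symm
  have invg : ∀ (x : E) (v : E), fderiv ℝ f (g x) (fderiv ℝ g x v) = v := by
    intro x v
    have hid : f ∘ g = id := funext hfg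
    have h := fderiv_comp x (hdf (g x)) (hdg x)
    rw [hid, fderiv_id] at h
    simpa using (congrArg (fun T : E →L[ℝ] E => T v) h).symm
  -- ### equivariance of the splitting
  have Fs1 : ∀ x ∈ K, ∀ v ∈ Vs x, fderiv ℝ f x v ∈ Vs (f x) := by
    intro x hx v hv
    rw [← hequivs x hx]
    exact Submodule.mem_map_of_mem hv
  have Fu1 : ∀ x ∈ K, ∀ v ∈ Vu x, fderiv ℝ f x v ∈ Vu (f x) := by
    intro x hx v hv
    rw [← hequivu x hx]
    exact Submodule.mem_map_of_mem hv
  have Gs1 : ∀ x ∈ K, ∀ v ∈ Vs x, fderiv ℝ g x v ∈ Vs (g x) := by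
    intro x hx v hv
    have h1 : (Vs (g x)).map (fderiv ℝ f (g x) : E →ₗ[ℝ] E) = Vs (f (g x)) := hequivs (g x) (hgmem x hx)
    rw [hfg x] at h1
    rw [← h1] at hv
    rcases Submodule.mem_map.mp hv with ⟨w, hw, hwv⟩
    have hxe : fderiv ℝ g x v = w := by
      conv_lhs => rw [← hfg x]
      rw [← hwv]
      exact invf (g x) w
    rw [hxe]; exact hw
  have Gu1 : ∀ x ∈ K, ∀ v ∈ Vu x, fderiv ℝ g x v ∈ Vu (g x) := by
    intro x hx v hv
    have h1 : (Vu (g x)).map (fderiv ℝ f (g x) : E →ₗ[ℝ] E) = Vu (f (g x)) := hequivu (g x) (hgmem x hx)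
    rw [hfg x] at h1
    rw [← h1] at hv
    rcases Submodule.mem_map.mp hv with ⟨w, hw, hwv⟩
    have hxe : fderiv ℝ g x v = w := by
      conv_lhs => rw [← hfg x]
      rw [← hwv]
      exact invf (g x) w
    rw [hxe]; exact hw
  have Fsk : ∀ k, ∀ x ∈ K, ∀ v ∈ Vs x, fderiv ℝ (f^[k]) x v ∈ Vs (f^[k] x) := by
    intro k
    induction k with
    | zero => intro x hx v hv; simpa using hv
    | succ n ih =>
      intro x hx v hv
      rw [Function.iterate_succ_apply', chainf n x]
      simp only [ContinuousLinearMap.comp_apply]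
      exact Fs1 _ (hfkK n x hx) _ (ih x hx v hv)
  have Fuk : ∀ k, ∀ x ∈ K, ∀ v ∈ Vu x, fderiv ℝ (f^[k]) x v ∈ Vu (f^[k] x) := by
    intro k
    induction k with
    | zero => intro x hx v hv; simpa using hv
    | succ n ih =>
      intro x hx v hv
      rw [Function.iterate_succ_apply', chainf n x]
      simp only [ContinuousLinearMap.comp_apply]
      exact Fu1 _ (hfkK n x hx) _ (ih x hx v hv)
  have Gsk : ∀ k, ∀ x ∈ K, ∀ v ∈ Vs x, fderiv ℝ (g^[k]) x v ∈ Vs (g^[k] x) := by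
    intro k
    induction k with
    | zero => intro x hx v hv; simpa using hv
    | succ n ih =>
      intro x hx v hv
      rw [Function.iterate_succ_apply', chaing n x]
      simp only [ContinuousLinearMap.comp_apply]
      exact Gs1 _ (hgkK n x hx) _ (ih x hx v hv)
  have Guk : ∀ k, ∀ x ∈ K, ∀ v ∈ Vu x, fderiv ℝ (g^[k]) x v ∈ Vu (g^[k] x) := by
    intro k
    induction k with
    | zero => intro x hx v hv; simpa using hv
    | succ n ih =>
      intro x hx v hv
      rw [Function.iterate_succ_apply', chaing n x]
      simp only [ContinuousLinearMap.comp_apply]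
      exact Gu1 _ (hgkK n x hx) _ (ih x hx v hv)
  -- ### projections
  have hProjS : ∀ x ∈ K, ∀ v ∈ Vs x, Ps x v = v ∧ Pu x v = 0 := by
    intro x hx v hv
    obtain ⟨h1, h2, h3⟩ := hproj x hx v
    have hm : Pu x v ∈ Vs x := by
      have he : Pu x v = v - Ps x v := eq_sub_of_add_eq' h3
      rw [he]; exact (Vs x).sub_mem hv h1
    have h0 : Pu x v = 0 := (Submodule.disjoint_def.mp (hsplit x hx).disjoint) _ hm h2
    refine ⟨?_, h0⟩
    have := h3
    rw [h0, add_zero] at this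
    exact this
  have hProjU : ∀ x ∈ K, ∀ v ∈ Vu x, Pu x v = v ∧ Ps x v = 0 := by
    intro x hx v hv
    obtain ⟨h1, h2, h3⟩ := hproj x hx v
    have hm : Ps x v ∈ Vu x := by
      have he : Ps x v = v - Pu x v := eq_sub_of_add_eq h3
      rw [he]; exact (Vu x).sub_mem hv h2
    have h0 : Ps x v = 0 := (Submodule.disjoint_def.mp (hsplit x hx).disjoint.symm) _ hm h1
    refine ⟨?_, h0⟩
    have := h3
    rw [h0, zero_add] at this
    exact this
  -- ### commutation of projections with derivatives
  have comm_s : ∀ k, ∀ x ∈ K, ∀ v : E,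
      Ps (f^[k] x) (fderiv ℝ (f^[k]) x v) = fderiv ℝ (f^[k]) x (Ps x v) := by
    intro k x hx v
    obtain ⟨h1, h2, h3⟩ := hproj x hx v
    have hx' := hfkK k x hx
    have hdecomp : fderiv ℝ (f^[k]) x v
        = fderiv ℝ (f^[k]) x (Ps x v) + fderiv ℝ (f^[k]) x (Pu x v) := by
      rw [← map_add, h3]
    rw [hdecomp, map_add,
      (hProjS _ hx' _ (Fsk k x hx _ h1)).1, (hProjU _ hx' _ (Fuk k x hx _ h2)).2, add_zero]
  have comm_u : ∀ k, ∀ x ∈ K, ∀ v : E,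
      Pu (g^[k] x) (fderiv ℝ (g^[k]) x v) = fderiv ℝ (g^[k]) x (Pu x v) := by
    intro k x hx v
    obtain ⟨h1, h2, h3⟩ := hproj x hx v
    have hx' := hgkK k x hx
    have hdecomp : fderiv ℝ (g^[k]) x v
        = fderiv ℝ (g^[k]) x (Ps x v) + fderiv ℝ (g^[k]) x (Pu x v) := by
      rw [← map_add, h3]
    rw [hdecomp, map_add,
      (hProjS _ hx' _ (Gsk k x hx _ h1)).2, (hProjU _ hx' _ (Guk k x hx _ h2)).1, zero_add]
  -- ### bounds
  obtain ⟨M, hM⟩ := hPbdd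
  obtain ⟨CX, hCX⟩ := hKc.exists_bound_of_continuousOn hXc
  obtain ⟨Cω, hCω⟩ := hKc.exists_bound_of_continuousOn hωc
  set MP : ℝ := max M 0 with hMPdef
  set MX : ℝ := max CX 0 with hMXdef
  set Mω : ℝ := max Cω 0 with hMωdef
  have hMP0 : 0 ≤ MP := le_max_right _ _
  have hMX0 : 0 ≤ MX := le_max_right _ _
  have hMω0 : 0 ≤ Mω := le_max_right _ _
  have hMPs : ∀ x ∈ K, ‖Ps x‖ ≤ MP := by
    intro x hx
    have h1 := hM x hx
    have h2 := norm_nonneg (Pu x)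
    have : ‖Ps x‖ ≤ M := by linarith
    exact this.trans (le_max_left _ _)
  have hMPu : ∀ x ∈ K, ‖Pu x‖ ≤ MP := by
    intro x hx
    have h1 := hM x hx
    have h2 := norm_nonneg (Ps x)
    have : ‖Pu x‖ ≤ M := by linarith
    exact this.trans (le_max_left _ _)
  have hMXb : ∀ x ∈ K, ‖X x‖ ≤ MX := fun x hx => (hCX x hx).trans (le_max_left _ _)
  have hMωb : ∀ x ∈ K, ‖ω x‖ ≤ Mω := fun x hx => (hCω x hx).trans (le_max_left _ _)
  have hωap : ∀ y ∈ K, ∀ w : E, ‖ω y w‖ ≤ Mω * ‖w‖ := fun y hy w =>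
    ((ω y).le_opNorm w).trans (mul_le_mul_of_nonneg_right (hMωb y hy) (norm_nonneg w))
  have hPsX : ∀ y ∈ K, ‖Ps y (X y)‖ ≤ MP * MX := fun y hy =>
    ((Ps y).le_opNorm (X y)).trans (mul_le_mul (hMPs y hy) (hMXb y hy) (norm_nonneg _) hMP0)
  have hPuX : ∀ y ∈ K, ‖Pu y (X y)‖ ≤ MP * MX := fun y hy =>
    ((Pu y).le_opNorm (X y)).trans (mul_le_mul (hMPu y hy) (hMXb y hy) (norm_nonneg _) hMP0)
  have hlampow : ∀ k : ℕ, lam ^ (k+1) ≤ lam ^ k :=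
    fun k => pow_le_pow_of_le_one hlam0.le hlam1.le (Nat.le_succ k)
  have hlamk0 : ∀ k : ℕ, (0:ℝ) ≤ lam ^ k := fun k => pow_nonneg hlam0.le k
  -- vector norm bounds
  have hvS : ∀ (k : ℕ), ∀ x ∈ K,
      ‖fderiv ℝ (f^[k]) (g^[k] x) (Ps (g^[k] x) (X (g^[k] x)))‖ ≤ C * (MP * MX) * lam ^ k := by
    intro k x hx
    have hy := hgkK k x hx
    have h := hyps k _ hy _ (hproj _ hy (X (g^[k] x))).1
    calc ‖fderiv ℝ (f^[k]) (g^[k] x) (Ps (g^[k] x) (X (g^[k] x)))‖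
        ≤ C * lam ^ k * ‖Ps (g^[k] x) (X (g^[k] x))‖ := h
      _ ≤ C * lam ^ k * (MP * MX) := by
          apply mul_le_mul_of_nonneg_left (hPsX _ hy)
          positivity
      _ = C * (MP * MX) * lam ^ k := by ring
  have hvU : ∀ (k : ℕ), ∀ x ∈ K,
      ‖fderiv ℝ (g^[k+1]) (f^[k+1] x) (Pu (f^[k+1] x) (X (f^[k+1] x)))‖
        ≤ C * (MP * MX) * lam ^ k := by
    intro k x hx
    have hy := hfkK (k+1) x hx
    have h := hypu (k+1) _ hy _ (hproj _ hy (X (f^[k+1] x))).2.1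
    calc ‖fderiv ℝ (g^[k+1]) (f^[k+1] x) (Pu (f^[k+1] x) (X (f^[k+1] x)))‖
        ≤ C * lam ^ (k+1) * ‖Pu (f^[k+1] x) (X (f^[k+1] x))‖ := h
      _ ≤ C * lam ^ (k+1) * (MP * MX) := by
          apply mul_le_mul_of_nonneg_left (hPuX _ hy)
          positivity
      _ = C * (MP * MX) * lam ^ (k+1) := by ring
      _ ≤ C * (MP * MX) * lam ^ k := by
          apply mul_le_mul_of_nonneg_left (hlampow k)
          positivity
  have hgeo : Summable (fun k : ℕ => lam ^ k) := summable_geometric_of_lt_one hlam0.le hlam1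
  -- summability of the vector series
  have hsumS : ∀ x ∈ K, Summable (fun k : ℕ =>
      fderiv ℝ (f^[k]) (g^[k] x) (Ps (g^[k] x) (X (g^[k] x)))) := fun x hx =>
    Summable.of_norm_bounded (hgeo.mul_left (C * (MP * MX))) (fun k => hvS k x hx)
  have hsumU : ∀ x ∈ K, Summable (fun k : ℕ =>
      fderiv ℝ (g^[k+1]) (f^[k+1] x) (Pu (f^[k+1] x) (X (f^[k+1] x)))) := fun x hx =>
    Summable.of_norm_bounded (hgeo.mul_left (C * (MP * MX))) (fun k => hvU k x hx)
  -- operator norm bounds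
  have hTop : ∀ (k : ℕ), ∀ x ∈ K,
      ‖((ω (f^[k] x)).comp (Ps (f^[k] x))).comp (fderiv ℝ (f^[k]) x)‖
        ≤ Mω * (C * MP) * lam ^ k := by
    intro k x hx
    apply ContinuousLinearMap.opNorm_le_bound _ (by positivity)
    intro v
    simp only [ContinuousLinearMap.comp_apply]
    rw [comm_s k x hx v]
    have h1 : ‖ω (f^[k] x) (fderiv ℝ (f^[k]) x (Ps x v))‖
        ≤ Mω * ‖fderiv ℝ (f^[k]) x (Ps x v)‖ := hωap _ (hfkK k x hx) _
    have h2 : ‖fderiv ℝ (f^[k]) x (Ps x v)‖ ≤ C * lam ^ k * ‖Ps x v‖ :=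
      hyps k x hx _ (hproj x hx v).1
    have h3 : ‖Ps x v‖ ≤ MP * ‖v‖ :=
      ((Ps x).le_opNorm v).trans (mul_le_mul_of_nonneg_right (hMPs x hx) (norm_nonneg v))
    calc ‖ω (f^[k] x) (fderiv ℝ (f^[k]) x (Ps x v))‖
        ≤ Mω * ‖fderiv ℝ (f^[k]) x (Ps x v)‖ := h1
      _ ≤ Mω * (C * lam ^ k * ‖Ps x v‖) := mul_le_mul_of_nonneg_left h2 hMω0
      _ ≤ Mω * (C * lam ^ k * (MP * ‖v‖)) := by
          apply mul_le_mul_of_nonneg_left _ hMω0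
          apply mul_le_mul_of_nonneg_left h3
          positivity
      _ = Mω * (C * MP) * lam ^ k * ‖v‖ := by ring
  have hUop : ∀ (k : ℕ), ∀ x ∈ K,
      ‖((ω (g^[k+1] x)).comp (Pu (g^[k+1] x))).comp (fderiv ℝ (g^[k+1]) x)‖
        ≤ Mω * (C * MP) * lam ^ k := by
    intro k x hx
    apply ContinuousLinearMap.opNorm_le_bound _ (by positivity)
    intro v
    simp only [ContinuousLinearMap.comp_apply]
    rw [comm_u (k+1) x hx v]
    have h1 : ‖ω (g^[k+1] x) (fderiv ℝ (g^[k+1]) x (Pu x v))‖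
        ≤ Mω * ‖fderiv ℝ (g^[k+1]) x (Pu x v)‖ := hωap _ (hgkK (k+1) x hx) _
    have h2 : ‖fderiv ℝ (g^[k+1]) x (Pu x v)‖ ≤ C * lam ^ (k+1) * ‖Pu x v‖ :=
      hypu (k+1) x hx _ (hproj x hx v).2.1
    have h3 : ‖Pu x v‖ ≤ MP * ‖v‖ :=
      ((Pu x).le_opNorm v).trans (mul_le_mul_of_nonneg_right (hMPu x hx) (norm_nonneg v))
    calc ‖ω (g^[k+1] x) (fderiv ℝ (g^[k+1]) x (Pu x v))‖
        ≤ Mω * ‖fderiv ℝ (g^[k+1]) x (Pu x v)‖ := h1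
      _ ≤ Mω * (C * lam ^ (k+1) * ‖Pu x v‖) := mul_le_mul_of_nonneg_left h2 hMω0
      _ ≤ Mω * (C * lam ^ (k+1) * (MP * ‖v‖)) := by
          apply mul_le_mul_of_nonneg_left _ hMω0
          apply mul_le_mul_of_nonneg_left h3
          positivity
      _ = Mω * (C * MP) * lam ^ (k+1) * ‖v‖ := by ring
      _ ≤ Mω * (C * MP) * lam ^ k * ‖v‖ := by
          apply mul_le_mul_of_nonneg_right _ (norm_nonneg v)
          apply mul_le_mul_of_nonneg_left (hlampow k)
          positivity
  have hsumT : ∀ x ∈ K, Summable (fun k : ℕ =>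
      ((ω (f^[k] x)).comp (Ps (f^[k] x))).comp (fderiv ℝ (f^[k]) x)) := fun x hx =>
    Summable.of_norm_bounded (hgeo.mul_left (Mω * (C * MP))) (fun k => hTop k x hx)
  have hsumUo : ∀ x ∈ K, Summable (fun k : ℕ =>
      ((ω (g^[k+1] x)).comp (Pu (g^[k+1] x))).comp (fderiv ℝ (g^[k+1]) x)) := fun x hx =>
    Summable.of_norm_bounded (hgeo.mul_left (Mω * (C * MP))) (fun k => hUop k x hx)
  -- ### real term bounds
  set Q : ℝ := Mω * (C * (MP * MX)) with hQdef
  have hQ0 : 0 ≤ Q := by positivity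
  have hbA : ∀ (k : ℕ), ∀ x ∈ K, ‖tA ω Ps X f g k x‖ ≤ Q * lam ^ k := by
    intro k x hx
    calc ‖tA ω Ps X f g k x‖
        ≤ Mω * ‖fderiv ℝ (f^[k]) (g^[k] x) (Ps (g^[k] x) (X (g^[k] x)))‖ := hωap x hx _
      _ ≤ Mω * (C * (MP * MX) * lam ^ k) := mul_le_mul_of_nonneg_left (hvS k x hx) hMω0
      _ = Q * lam ^ k := by rw [hQdef]; ring
  have hbB : ∀ (k : ℕ), ∀ x ∈ K, ‖tB ω Pu X f g k x‖ ≤ Q * lam ^ k := by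
    intro k x hx
    calc ‖tB ω Pu X f g k x‖
        ≤ Mω * ‖fderiv ℝ (g^[k+1]) (f^[k+1] x) (Pu (f^[k+1] x) (X (f^[k+1] x)))‖ := hωap x hx _
      _ ≤ Mω * (C * (MP * MX) * lam ^ k) := mul_le_mul_of_nonneg_left (hvU k x hx) hMω0
      _ = Q * lam ^ k := by rw [hQdef]; ring
  have hbC : ∀ (k : ℕ), ∀ x ∈ K, ‖tC ω Ps X f k x‖ ≤ Q * lam ^ k := by
    intro k x hx
    calc ‖tC ω Ps X f k x‖
        ≤ ‖((ω (f^[k] x)).comp (Ps (f^[k] x))).comp (fderiv ℝ (f^[k]) x)‖ * ‖X x‖ :=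
          ContinuousLinearMap.le_opNorm _ _
      _ ≤ (Mω * (C * MP) * lam ^ k) * MX :=
          mul_le_mul (hTop k x hx) (hMXb x hx) (norm_nonneg _) (by positivity)
      _ = Q * lam ^ k := by rw [hQdef]; ring
  have hbD : ∀ (k : ℕ), ∀ x ∈ K, ‖tD ω Pu X g k x‖ ≤ Q * lam ^ k := by
    intro k x hx
    calc ‖tD ω Pu X g k x‖
        ≤ ‖((ω (g^[k+1] x)).comp (Pu (g^[k+1] x))).comp (fderiv ℝ (g^[k+1]) x)‖ * ‖X x‖ :=
          ContinuousLinearMap.le_opNorm _ _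
      _ ≤ (Mω * (C * MP) * lam ^ k) * MX :=
          mul_le_mul (hUop k x hx) (hMXb x hx) (norm_nonneg _) (by positivity)
      _ = Q * lam ^ k := by rw [hQdef]; ring
  have hsA : ∀ x ∈ K, Summable (fun k => tA ω Ps X f g k x) := fun x hx =>
    Summable.of_norm_bounded (hgeo.mul_left Q) (fun k => hbA k x hx)
  have hsB : ∀ x ∈ K, Summable (fun k => tB ω Pu X f g k x) := fun x hx =>
    Summable.of_norm_bounded (hgeo.mul_left Q) (fun k => hbB k x hx)
  have hsC : ∀ x ∈ K, Summable (fun k => tC ω Ps X f k x) := fun x hx =>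
    Summable.of_norm_bounded (hgeo.mul_left Q) (fun k => hbC k x hx)
  have hsD : ∀ x ∈ K, Summable (fun k => tD ω Pu X g k x) := fun x hx =>
    Summable.of_norm_bounded (hgeo.mul_left Q) (fun k => hbD k x hx)
  -- ### pointwise identities
  have key1 : ∀ x ∈ K, ω x (SX x) = ∑' k : ℕ, (tA ω Ps X f g k x - tB ω Pu X f g k x) := by
    intro x hx
    rw [hSX x, map_sub, ContinuousLinearMap.map_tsum _ (hsumS x hx),
      ContinuousLinearMap.map_tsum _ (hsumU x hx)]
    exact (Summable.tsum_sub (hsA x hx) (hsB x hx)).symm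
  have key2 : ∀ x ∈ K, Sω x (X x) = ∑' k : ℕ, (tC ω Ps X f k x - tD ω Pu X g k x) := by
    intro x hx
    rw [hSω x, ContinuousLinearMap.sub_apply]
    have e1 : (∑' k : ℕ, ((ω (f^[k] x)).comp (Ps (f^[k] x))).comp (fderiv ℝ (f^[k]) x)) (X x)
        = ∑' k : ℕ, tC ω Ps X f k x :=
      ContinuousLinearMap.map_tsum (ContinuousLinearMap.apply ℝ ℝ (X x)) (hsumT x hx)
    have e2 : (∑' k : ℕ, ((ω (g^[k+1] x)).comp (Pu (g^[k+1] x))).comp (fderiv ℝ (g^[k+1]) x)) (X x)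
        = ∑' k : ℕ, tD ω Pu X g k x :=
      ContinuousLinearMap.map_tsum (ContinuousLinearMap.apply ℝ ℝ (X x)) (hsumUo x hx)
    rw [e1, e2]
    exact (Summable.tsum_sub (hsC x hx) (hsD x hx)).symm
  have key3A : ∀ (k : ℕ), ∀ x ∈ K, tA ω Ps X f g k x = tC ω Ps X f k (g^[k] x) := by
    intro k x hx
    unfold tA tC
    simp only [ContinuousLinearMap.comp_apply]
    rw [comm_s k (g^[k] x) (hgkK k x hx) (X (g^[k] x)), hfg.iterate k x]
  have key3B : ∀ (k : ℕ), ∀ x ∈ K, tB ω Pu X f g k x = tD ω Pu X g k (f^[k+1] x) := by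
    intro k x hx
    unfold tB tD
    simp only [ContinuousLinearMap.comp_apply]
    rw [comm_u (k+1) (f^[k+1] x) (hfkK (k+1) x hx) (X (f^[k+1] x)), hgf.iterate (k+1) x]
  -- ### measure theory
  have hKm : MeasurableSet K := hKc.isClosed.measurableSet
  have hcompl : ρ Kᶜ = 0 := by
    have h := measure_compl hKm (measure_ne_top ρ K)
    rw [hρK, measure_univ] at h
    simpa using h
  have hae : ∀ᵐ x ∂ρ, x ∈ K := by
    rw [ae_iff]
    exact hcompl
  have hres : ρ.restrict K = ρ := Measure.restrict_eq_self_of_ae_mem hae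
  have mpf : MeasurePreserving f ρ ρ := by
    refine ⟨hf.continuous.measurable, Measure.ext fun A hA => ?_⟩
    rw [Measure.map_apply hf.continuous.measurable hA]
    exact hρinv A hA
  have mpfk : ∀ k : ℕ, MeasurePreserving (f^[k]) ρ ρ := fun k => mpf.iterate k
  have embk : ∀ k : ℕ, MeasurableEmbedding (f^[k]) := fun k =>
    (Homeomorph.mk ⟨f^[k], g^[k], hgf.iterate k, hfg.iterate k⟩
      (hf.continuous.iterate k) (hg.continuous.iterate k)).measurableEmbedding
  have intcomp : ∀ (k : ℕ) (h : E → ℝ), ∫ x, h (f^[k] x) ∂ρ = ∫ x, h x ∂ρ :=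
    fun k h => (mpfk k).integral_comp (embk k) h
  -- ### continuity and integrability of the terms
  have contfd : ∀ k : ℕ, Continuous (fderiv ℝ (f^[k])) := fun k =>
    (hcfk k).continuous_fderiv one_ne_zero
  have contgd : ∀ k : ℕ, Continuous (fderiv ℝ (g^[k])) := fun k =>
    (hcgk k).continuous_fderiv one_ne_zero
  have mapsf : ∀ k : ℕ, MapsTo (f^[k]) K K := fun k x hx => hfkK k x hx
  have mapsg : ∀ k : ℕ, MapsTo (g^[k]) K K := fun k x hx => hgkK k x hx
  have contA : ∀ k : ℕ, ContinuousOn (fun x => tA ω Ps X f g k x) K := by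
    intro k
    have h1 : ContinuousOn (fun y => fderiv ℝ (f^[k]) y (Ps y (X y))) K :=
      ((contfd k).continuousOn).clm_apply (hPsc.clm_apply hXc)
    have h2 : ContinuousOn
        (fun x => fderiv ℝ (f^[k]) (g^[k] x) (Ps (g^[k] x) (X (g^[k] x)))) K :=
      h1.comp ((hg.continuous.iterate k).continuousOn) (mapsg k)
    exact hωc.clm_apply h2
  have contB : ∀ k : ℕ, ContinuousOn (fun x => tB ω Pu X f g k x) K := by
    intro k
    have h1 : ContinuousOn (fun y => fderiv ℝ (g^[k+1]) y (Pu y (X y))) K :=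
      ((contgd (k+1)).continuousOn).clm_apply (hPuc.clm_apply hXc)
    have h2 : ContinuousOn
        (fun x => fderiv ℝ (g^[k+1]) (f^[k+1] x) (Pu (f^[k+1] x) (X (f^[k+1] x)))) K :=
      h1.comp ((hf.continuous.iterate (k+1)).continuousOn) (mapsf (k+1))
    exact hωc.clm_apply h2
  have contC : ∀ k : ℕ, ContinuousOn (fun x => tC ω Ps X f k x) K := by
    intro k
    have hωk : ContinuousOn (fun x => ω (f^[k] x)) K :=
      hωc.comp ((hf.continuous.iterate k).continuousOn) (mapsf k)
    have hPk : ContinuousOn (fun x => Ps (f^[k] x)) K :=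
      hPsc.comp ((hf.continuous.iterate k).continuousOn) (mapsf k)
    exact ((hωk.clm_comp hPk).clm_comp ((contfd k).continuousOn)).clm_apply hXc
  have contD : ∀ k : ℕ, ContinuousOn (fun x => tD ω Pu X g k x) K := by
    intro k
    have hωk : ContinuousOn (fun x => ω (g^[k+1] x)) K :=
      hωc.comp ((hg.continuous.iterate (k+1)).continuousOn) (mapsg (k+1))
    have hPk : ContinuousOn (fun x => Pu (g^[k+1] x)) K :=
      hPuc.comp ((hg.continuous.iterate (k+1)).continuousOn) (mapsg (k+1))
    exact ((hωk.clm_comp hPk).clm_comp ((contgd (k+1)).continuousOn)).clm_apply hXc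
  have intOf : ∀ {h : E → ℝ}, ContinuousOn h K → Integrable h ρ := by
    intro h hc
    have h1 : Integrable h (ρ.restrict K) := hc.integrableOn_compact hKc
    rwa [hres] at h1
  have intA : ∀ k : ℕ, Integrable (fun x => tA ω Ps X f g k x) ρ := fun k => intOf (contA k)
  have intB : ∀ k : ℕ, Integrable (fun x => tB ω Pu X f g k x) ρ := fun k => intOf (contB k)
  have intC : ∀ k : ℕ, Integrable (fun x => tC ω Ps X f k x) ρ := fun k => intOf (contC k)
  have intD : ∀ k : ℕ, Integrable (fun x => tD ω Pu X g k x) ρ := fun k => intOf (contD k)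
  -- ### termwise equality of integrals
  have stepA : ∀ k : ℕ, ∫ x, tA ω Ps X f g k x ∂ρ = ∫ x, tC ω Ps X f k x ∂ρ := by
    intro k
    have e1 : ∫ x, tC ω Ps X f k x ∂ρ = ∫ x, tC ω Ps X f k (g^[k] (f^[k] x)) ∂ρ :=
      integral_congr_ae (Filter.Eventually.of_forall fun x =>
        show tC ω Ps X f k x = tC ω Ps X f k (g^[k] (f^[k] x)) by rw [hgf.iterate k x])
    have e2 : ∫ x, tC ω Ps X f k (g^[k] (f^[k] x)) ∂ρ = ∫ x, tC ω Ps X f k (g^[k] x) ∂ρ :=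
      intcomp k (fun y => tC ω Ps X f k (g^[k] y))
    have e3 : ∫ x, tC ω Ps X f k (g^[k] x) ∂ρ = ∫ x, tA ω Ps X f g k x ∂ρ :=
      integral_congr_ae (by filter_upwards [hae] with x hx; exact (key3A k x hx).symm)
    rw [e1, e2, e3]
  have stepB : ∀ k : ℕ, ∫ x, tB ω Pu X f g k x ∂ρ = ∫ x, tD ω Pu X g k x ∂ρ := by
    intro k
    have e1 : ∫ x, tB ω Pu X f g k x ∂ρ = ∫ x, tD ω Pu X g k (f^[k+1] x) ∂ρ :=
      integral_congr_ae (by filter_upwards [hae] with x hx; exact key3B k x hx)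
    rw [e1]
    exact intcomp (k+1) (fun y => tD ω Pu X g k y)
  -- ### summability of the integrals of norms
  have hIbndAB : ∀ k : ℕ, ∫ x, ‖tA ω Ps X f g k x - tB ω Pu X f g k x‖ ∂ρ
      ≤ (2 * Q) * lam ^ k := by
    intro k
    have h1 : ∀ᵐ x ∂ρ, ‖tA ω Ps X f g k x - tB ω Pu X f g k x‖ ≤ (2 * Q) * lam ^ k := by
      filter_upwards [hae] with x hx
      calc ‖tA ω Ps X f g k x - tB ω Pu X f g k x‖
          ≤ ‖tA ω Ps X f g k x‖ + ‖tB ω Pu X f g k x‖ := norm_sub_le _ _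
        _ ≤ Q * lam ^ k + Q * lam ^ k := add_le_add (hbA k x hx) (hbB k x hx)
        _ = (2 * Q) * lam ^ k := by ring
    calc ∫ x, ‖tA ω Ps X f g k x - tB ω Pu X f g k x‖ ∂ρ
        ≤ ∫ _, (2 * Q) * lam ^ k ∂ρ :=
          integral_mono_ae ((intA k).sub (intB k)).norm (integrable_const _) h1
      _ = (2 * Q) * lam ^ k := by simp
  have hIbndCD : ∀ k : ℕ, ∫ x, ‖tC ω Ps X f k x - tD ω Pu X g k x‖ ∂ρ
      ≤ (2 * Q) * lam ^ k := by
    intro k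
    have h1 : ∀ᵐ x ∂ρ, ‖tC ω Ps X f k x - tD ω Pu X g k x‖ ≤ (2 * Q) * lam ^ k := by
      filter_upwards [hae] with x hx
      calc ‖tC ω Ps X f k x - tD ω Pu X g k x‖
          ≤ ‖tC ω Ps X f k x‖ + ‖tD ω Pu X g k x‖ := norm_sub_le _ _
        _ ≤ Q * lam ^ k + Q * lam ^ k := add_le_add (hbC k x hx) (hbD k x hx)
        _ = (2 * Q) * lam ^ k := by ring
    calc ∫ x, ‖tC ω Ps X f k x - tD ω Pu X g k x‖ ∂ρ
        ≤ ∫ _, (2 * Q) * lam ^ k ∂ρ :=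
          integral_mono_ae ((intC k).sub (intD k)).norm (integrable_const _) h1
      _ = (2 * Q) * lam ^ k := by simp
  have hsumIntAB : Summable (fun k => ∫ x, ‖tA ω Ps X f g k x - tB ω Pu X f g k x‖ ∂ρ) :=
    Summable.of_nonneg_of_le (fun k => integral_nonneg fun x => norm_nonneg _) hIbndAB
      (hgeo.mul_left (2 * Q))
  have hsumIntCD : Summable (fun k => ∫ x, ‖tC ω Ps X f k x - tD ω Pu X g k x‖ ∂ρ) :=
    Summable.of_nonneg_of_le (fun k => integral_nonneg fun x => norm_nonneg _) hIbndCD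
      (hgeo.mul_left (2 * Q))
  -- ### final computation
  rw [hres]
  calc ∫ x, ω x (SX x) ∂ρ
      = ∫ x, (∑' k : ℕ, (tA ω Ps X f g k x - tB ω Pu X f g k x)) ∂ρ :=
        integral_congr_ae (by filter_upwards [hae] with x hx; exact key1 x hx)
    _ = ∑' k : ℕ, ∫ x, (tA ω Ps X f g k x - tB ω Pu X f g k x) ∂ρ :=
        (integral_tsum_of_summable_integral_norm (fun k => (intA k).sub (intB k))
          hsumIntAB).symm
    _ = ∑' k : ℕ, ∫ x, (tC ω Ps X f k x - tD ω Pu X g k x) ∂ρ := by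
        refine tsum_congr fun k => ?_
        rw [integral_sub (intA k) (intB k), integral_sub (intC k) (intD k), stepA k, stepB k]
    _ = ∫ x, (∑' k : ℕ, (tC ω Ps X f k x - tD ω Pu X g k x)) ∂ρ :=
        integral_tsum_of_summable_integral_norm (fun k => (intC k).sub (intD k)) hsumIntCD
    _ = ∫ x, Sω x (X x) ∂ρ :=
        integral_congr_ae (by filter_upwards [hae] with x hx; exact (key2 x hx).symm)
end

section
/- Let X be a bounded vector field on K. For x ∈ K define v(x) := S(X)(x) := Σ_{k≥0} Df^k(f^{-k}x) P^s(f^{-k}x) X(f^{-k}x) − Σ_{k≥1} Df^{-k}(f^{k}x) P^u(f^{k}x) X(f^{k}x). Then both series converge absolutely in E, sup_{x∈K} ‖v(x)‖ < ∞, and along every orbit x_n := f^n(x₀) in K the vectors v_n := v(x_n) satisfy the inhomogeneous tangent (shadowing) equation v_{n+1} = Df(x_n) v_n + X(x_{n+1}) for all n ∈ ℤ. -/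
open Function Set Filter MeasureTheory Topology

theorem shadowing_expansion_discrete
    {E : Type*} [NormedAddCommGroup E] [NormedSpace ℝ E] [FiniteDimensional ℝ E]
    (f g : E → E) (hgf : Function.LeftInverse g f) (hfg : Function.RightInverse g f)
    (hf : ContDiff ℝ 1 f) (hg : ContDiff ℝ 1 g)
    (K : Set E) (hKc : IsCompact K) (hfK : f '' K = K)
    (Vs Vu : E → Submodule ℝ E)
    (hsplit : ∀ x ∈ K, IsCompl (Vs x) (Vu x))
    (hequivs : ∀ x ∈ K, (Vs x).map (fderiv ℝ f x : E →ₗ[ℝ] E) = Vs (f x))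
    (hequivu : ∀ x ∈ K, (Vu x).map (fderiv ℝ f x : E →ₗ[ℝ] E) = Vu (f x))
    (C lam : ℝ) (hC : 0 < C) (hlam0 : 0 < lam) (hlam1 : lam < 1)
    (hyps : ∀ (n : ℕ), ∀ x ∈ K, ∀ v ∈ Vs x, ‖fderiv ℝ (f^[n]) x v‖ ≤ C * lam ^ n * ‖v‖)
    (hypu : ∀ (n : ℕ), ∀ x ∈ K, ∀ v ∈ Vu x, ‖fderiv ℝ (g^[n]) x v‖ ≤ C * lam ^ n * ‖v‖)
    (Ps Pu : E → E →L[ℝ] E)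
    (hproj : ∀ x ∈ K, ∀ v : E, Ps x v ∈ Vs x ∧ Pu x v ∈ Vu x ∧ Ps x v + Pu x v = v)
    (hPbdd : ∃ M : ℝ, ∀ x ∈ K, ‖Ps x‖ + ‖Pu x‖ ≤ M)
    (X : E → E) (hXb : ∃ M : ℝ, ∀ x ∈ K, ‖X x‖ ≤ M)
    (v : E → E)
    (hv : ∀ x : E, v x =
      (∑' k : ℕ, fderiv ℝ (f^[k]) (g^[k] x) (Ps (g^[k] x) (X (g^[k] x)))) -
      ∑' k : ℕ, fderiv ℝ (g^[k+1]) (f^[k+1] x) (Pu (f^[k+1] x) (X (f^[k+1] x)))) :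
    (∀ x ∈ K,
      Summable (fun k : ℕ => ‖fderiv ℝ (f^[k]) (g^[k] x) (Ps (g^[k] x) (X (g^[k] x)))‖) ∧
      Summable (fun k : ℕ =>
        ‖fderiv ℝ (g^[k+1]) (f^[k+1] x) (Pu (f^[k+1] x) (X (f^[k+1] x)))‖)) ∧
    (∃ M : ℝ, ∀ x ∈ K, ‖v x‖ ≤ M) ∧
    (∀ orb : ℤ → E, orb 0 ∈ K → (∀ n : ℤ, orb (n + 1) = f (orb n)) →
      ∀ n : ℤ, v (orb (n + 1)) = fderiv ℝ f (orb n) (v (orb n)) + X (orb (n + 1))) := by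
  obtain ⟨MP, hMP⟩ := hPbdd
  obtain ⟨MX, hMX⟩ := hXb
  have hfd : Differentiable ℝ f := hf.differentiable one_ne_zero
  have hgd : Differentiable ℝ g := hg.differentiable one_ne_zero
  have hfid : ∀ k : ℕ, Differentiable ℝ (f^[k]) := fun k => hfd.iterate k
  have hgid : ∀ k : ℕ, Differentiable ℝ (g^[k]) := fun k => hgd.iterate k
  -- invariance
  have hKf : ∀ x ∈ K, f x ∈ K := fun x hx => hfK ▸ Set.mem_image_of_mem f hx
  have hKg : ∀ x ∈ K, g x ∈ K := by
    intro x hx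
    rw [← hfK] at hx
    obtain ⟨y, hy, rfl⟩ := hx
    rwa [hgf y]
  have hKfi : ∀ (k : ℕ), ∀ x ∈ K, f^[k] x ∈ K := by
    intro k
    induction k with
    | zero => intro x hx; simpa using hx
    | succ n ih =>
      intro x hx
      rw [Function.iterate_succ_apply]
      exact ih _ (hKf _ hx)
  have hKgi : ∀ (k : ℕ), ∀ x ∈ K, g^[k] x ∈ K := by
    intro k
    induction k with
    | zero => intro x hx; simpa using hx
    | succ n ih =>
      intro x hx
      rw [Function.iterate_succ_apply]
      exact ih _ (hKg _ hx)
  -- basic iterate identities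
  have hfgit : ∀ (k : ℕ) (x : E), f^[k] (g^[k] x) = x := fun k x => (hfg.iterate k) x
  have hgfit : ∀ (k : ℕ) (x : E), g^[k] (f^[k] x) = x := fun k x => (hgf.iterate k) x
  -- derivative of f is invertible with inverse derivative of g
  have hinv : ∀ x : E, ∀ w : E, fderiv ℝ f x (fderiv ℝ g (f x) w) = w := by
    intro x w
    have hid : f ∘ g = id := funext hfg
    have h1 : fderiv ℝ (f ∘ g) (f x) = (fderiv ℝ f (g (f x))).comp (fderiv ℝ g (f x)) :=
      fderiv_comp _ (hfd _) (hgd _)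
    rw [hid, fderiv_id, hgf x] at h1
    have := congrArg (fun (L : E →L[ℝ] E) => L w) h1
    simpa using this.symm
  -- chain rules for iterates
  have hchainf : ∀ (k : ℕ) (x : E) (w : E),
      fderiv ℝ (f^[k+1]) x w = fderiv ℝ f (f^[k] x) (fderiv ℝ (f^[k]) x w) := by
    intro k x w
    have h1 : fderiv ℝ (f ∘ f^[k]) x = (fderiv ℝ f (f^[k] x)).comp (fderiv ℝ (f^[k]) x) :=
      fderiv_comp _ (hfd _) ((hfid k) x)
    rw [Function.iterate_succ' f k, h1]
    rfl
  have hchaing : ∀ (k : ℕ) (x : E) (w : E),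
      fderiv ℝ (g^[k+1]) x w = fderiv ℝ g (g^[k] x) (fderiv ℝ (g^[k]) x w) := by
    intro k x w
    have h1 : fderiv ℝ (g ∘ g^[k]) x = (fderiv ℝ g (g^[k] x)).comp (fderiv ℝ (g^[k]) x) :=
      fderiv_comp _ (hgd _) ((hgid k) x)
    rw [Function.iterate_succ' g k, h1]
    rfl
  -- commutation g^[k] ∘ f = f ∘ g^[k]
  have hcomm : ∀ (k : ℕ) (x : E), g^[k] (f x) = f (g^[k] x) := by
    intro k
    induction k with
    | zero => intro x; simp
    | succ n ih =>
      intro x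
      rw [Function.iterate_succ_apply, Function.iterate_succ_apply, hgf x, ← ih (g x), hfg x]
  -- the series terms
  set a : ℕ → E → E := fun k y => fderiv ℝ (f^[k]) (g^[k] y) (Ps (g^[k] y) (X (g^[k] y))) with ha
  set b : ℕ → E → E :=
    fun k y => fderiv ℝ (g^[k+1]) (f^[k+1] y) (Pu (f^[k+1] y) (X (f^[k+1] y))) with hb
  have hMP0 : ∀ x ∈ K, ‖Ps x‖ ≤ MP ∧ ‖Pu x‖ ≤ MP := by
    intro x hx
    have := hMP x hx
    have h1 := norm_nonneg (Ps x)
    have h2 := norm_nonneg (Pu x)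
    constructor <;> linarith
  have hMX0 : ∀ x ∈ K, 0 ≤ MX := fun x hx => le_trans (norm_nonneg _) (hMX x hx)
  -- norm bounds
  have hvecbound : ∀ y ∈ K, ‖Ps y (X y)‖ ≤ MP * MX ∧ ‖Pu y (X y)‖ ≤ MP * MX := by
    intro y hy
    constructor
    · calc ‖Ps y (X y)‖ ≤ ‖Ps y‖ * ‖X y‖ := (Ps y).le_opNorm _
        _ ≤ MP * MX :=
          mul_le_mul (hMP0 y hy).1 (hMX y hy) (norm_nonneg _)
            (le_trans (norm_nonneg _) (hMP0 y hy).1)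
    · calc ‖Pu y (X y)‖ ≤ ‖Pu y‖ * ‖X y‖ := (Pu y).le_opNorm _
        _ ≤ MP * MX :=
          mul_le_mul (hMP0 y hy).2 (hMX y hy) (norm_nonneg _)
            (le_trans (norm_nonneg _) (hMP0 y hy).2)
  have hna : ∀ x ∈ K, ∀ k : ℕ, ‖a k x‖ ≤ C * (MP * MX) * lam ^ k := by
    intro x hx k
    have hy : g^[k] x ∈ K := hKgi k x hx
    have h1 := hyps k _ hy _ (hproj _ hy (X (g^[k] x))).1
    calc ‖a k x‖ ≤ C * lam ^ k * ‖Ps (g^[k] x) (X (g^[k] x))‖ := h1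
      _ ≤ C * lam ^ k * (MP * MX) := by
          apply mul_le_mul_of_nonneg_left (hvecbound _ hy).1 (by positivity)
      _ = C * (MP * MX) * lam ^ k := by ring
  have hnb : ∀ x ∈ K, ∀ k : ℕ, ‖b k x‖ ≤ C * (MP * MX) * lam * lam ^ k := by
    intro x hx k
    have hy : f^[k+1] x ∈ K := hKfi (k+1) x hx
    have h1 := hypu (k+1) _ hy _ (hproj _ hy (X (f^[k+1] x))).2.1
    calc ‖b k x‖ ≤ C * lam ^ (k+1) * ‖Pu (f^[k+1] x) (X (f^[k+1] x))‖ := h1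
      _ ≤ C * lam ^ (k+1) * (MP * MX) := by
          apply mul_le_mul_of_nonneg_left (hvecbound _ hy).2 (by positivity)
      _ = C * (MP * MX) * lam * lam ^ k := by ring
  have hgeo : Summable fun k : ℕ => C * (MP * MX) * lam ^ k :=
    (summable_geometric_of_lt_one hlam0.le hlam1).mul_left _
  have hgeo2 : Summable fun k : ℕ => C * (MP * MX) * lam * lam ^ k :=
    (summable_geometric_of_lt_one hlam0.le hlam1).mul_left _
  have hsa : ∀ x ∈ K, Summable fun k : ℕ => ‖a k x‖ := fun x hx =>
    Summable.of_nonneg_of_le (fun k => norm_nonneg _) (hna x hx) hgeo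
  have hsb : ∀ x ∈ K, Summable fun k : ℕ => ‖b k x‖ := fun x hx =>
    Summable.of_nonneg_of_le (fun k => norm_nonneg _) (hnb x hx) hgeo2
  have hsa' : ∀ x ∈ K, Summable fun k : ℕ => a k x := fun x hx => (hsa x hx).of_norm
  have hsb' : ∀ x ∈ K, Summable fun k : ℕ => b k x := fun x hx => (hsb x hx).of_norm
  -- key recursion identity
  have hkey : ∀ x ∈ K, v (f x) = fderiv ℝ f x (v x) + X (f x) := by
    intro x hx
    have hfxK : f x ∈ K := hKf x hx
    set L := fderiv ℝ f x with hL
    -- term identities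
    have hgkfx : ∀ k : ℕ, g^[k+1] (f x) = g^[k] x := by
      intro k
      rw [Function.iterate_succ_apply, hgf x]
    have haS : ∀ k : ℕ, a (k+1) (f x) = L (a k x) := by
      intro k
      show fderiv ℝ (f^[k+1]) (g^[k+1] (f x)) (Ps (g^[k+1] (f x)) (X (g^[k+1] (f x)))) = _
      rw [hgkfx k]
      rw [hchainf k (g^[k] x), hfgit k x]
    have ha0 : a 0 (f x) = Ps (f x) (X (f x)) := by
      show fderiv ℝ (f^[0]) (g^[0] (f x)) (Ps (g^[0] (f x)) (X (g^[0] (f x)))) = _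
      simp [fderiv_id]
    have hbS : ∀ k : ℕ, b k (f x) = L (b (k+1) x) := by
      intro k
      show fderiv ℝ (g^[k+1]) (f^[k+1] (f x)) (Pu (f^[k+1] (f x)) (X (f^[k+1] (f x)))) =
        L (fderiv ℝ (g^[k+2]) (f^[k+2] x) (Pu (f^[k+2] x) (X (f^[k+2] x))))
      have hpt : f^[k+1] (f x) = f^[k+2] x := (Function.iterate_succ_apply f (k+1) x).symm
      rw [hpt]
      rw [hchaing (k+1) (f^[k+2] x)]
      have hgpt : g^[k+1] (f^[k+2] x) = f x := by
        have : f^[k+2] x = f^[k+1] (f x) := Function.iterate_succ_apply f (k+1) x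
        rw [this, hgfit (k+1) (f x)]
      rw [hgpt, hL, hinv x]
    have hb0 : L (b 0 x) = Pu (f x) (X (f x)) := by
      show L (fderiv ℝ (g^[1]) (f^[1] x) (Pu (f^[1] x) (X (f^[1] x)))) = _
      simp only [Function.iterate_one]
      rw [hL, hinv x]
    -- sums
    have hSa' : Summable fun k : ℕ => a k (f x) := hsa' _ hfxK
    have hSb' : Summable fun k : ℕ => b k (f x) := hsb' _ hfxK
    have hSbx : Summable fun k : ℕ => b k x := hsb' _ hx
    have hSbx1 : Summable fun k : ℕ => b (k+1) x := by
      have := (summable_nat_add_iff 1).2 hSbx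
      simpa using this
    have hA' : (∑' k : ℕ, a k (f x)) = Ps (f x) (X (f x)) + L (∑' k : ℕ, a k x) := by
      rw [Summable.tsum_eq_zero_add hSa', ha0]
      congr 1
      rw [L.map_tsum (hsa' _ hx)]
      exact tsum_congr haS
    have hB' : (∑' k : ℕ, b k (f x)) = L (∑' k : ℕ, b k x) - L (b 0 x) := by
      have h1 : (∑' k : ℕ, b k (f x)) = L (∑' k : ℕ, b (k+1) x) := by
        rw [L.map_tsum hSbx1]
        exact tsum_congr hbS
      have h2 : (∑' k : ℕ, b k x) = b 0 x + ∑' k : ℕ, b (k+1) x := Summable.tsum_eq_zero_add hSbx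
      rw [h1, h2]
      simp [map_add]
    have hvx : v x = (∑' k : ℕ, a k x) - ∑' k : ℕ, b k x := hv x
    have hvfx : v (f x) = (∑' k : ℕ, a k (f x)) - ∑' k : ℕ, b k (f x) := hv (f x)
    have hXfx : X (f x) = Ps (f x) (X (f x)) + Pu (f x) (X (f x)) := ((hproj _ hfxK _).2.2).symm
    rw [hvfx, hA', hB', hb0, hvx, map_sub]
    conv_rhs => rw [hXfx]
    abel
  refine ⟨fun x hx => ⟨hsa x hx, hsb x hx⟩,
    ⟨(∑' k : ℕ, C * (MP * MX) * lam ^ k) + ∑' k : ℕ, C * (MP * MX) * lam * lam ^ k, ?_⟩, ?_⟩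
  · intro x hx
    have h1 : ‖v x‖ ≤ (∑' k : ℕ, ‖a k x‖) + ∑' k : ℕ, ‖b k x‖ := by
      rw [hv x]
      refine le_trans (norm_sub_le _ _) ?_
      exact add_le_add (norm_tsum_le_tsum_norm (hsa x hx)) (norm_tsum_le_tsum_norm (hsb x hx))
    refine le_trans h1 (add_le_add ?_ ?_)
    · exact Summable.tsum_le_tsum (hna x hx) (hsa x hx) hgeo
    · exact Summable.tsum_le_tsum (hnb x hx) (hsb x hx) hgeo2
  · intro orb h0 hstep
    have horbK : ∀ n : ℤ, orb n ∈ K := by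
      intro n
      induction n using Int.induction_on with
      | zero => exact h0
      | succ i ih => rw [hstep i]; exact hKf _ ih
      | pred i ih =>
        have h2 : orb (-(i : ℤ) - 1) = g (orb (-(i : ℤ))) := by
          have h1 := hstep (-(i : ℤ) - 1)
          have he : (-(i : ℤ) - 1 + 1) = -(i : ℤ) := by ring
          rw [he] at h1
          rw [h1, hgf]
        rw [h2]
        exact hKg _ ih
    intro n
    rw [hstep n]
    exact hkey (orb n) (horbK n)
end

section
/- Along any orbit x_n := f^n(x₀) in K and for any bounded sequence of vectors X_n ∈ E, there is at most one bounded solution of the inhomogeneous tangent equation: if v_n and v'_n are sequences in E with sup_n ‖v_n‖ < ∞, sup_n ‖v'_n‖ < ∞, v_{n+1} = Df(x_n) v_n + X_{n+1} and v'_{n+1} = Df(x_n) v'_n + X_{n+1} for all n ∈ ℤ, then v_n = v'_n for all n ∈ ℤ. (The shadowing vector is the unique bounded inhomogeneous tangent solution.) -/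
open Function Set Filter MeasureTheory Topology

theorem shadowing_uniqueness_discrete
    {E : Type*} [NormedAddCommGroup E] [NormedSpace ℝ E] [FiniteDimensional ℝ E]
    (f g : E → E) (hgf : Function.LeftInverse g f) (hfg : Function.RightInverse g f)
    (hf : ContDiff ℝ 1 f) (hg : ContDiff ℝ 1 g)
    (K : Set E) (hKc : IsCompact K) (hfK : f '' K = K)
    (Vs Vu : E → Submodule ℝ E)
    (hsplit : ∀ x ∈ K, IsCompl (Vs x) (Vu x))
    (hequivs : ∀ x ∈ K, (Vs x).map (fderiv ℝ f x : E →ₗ[ℝ] E) = Vs (f x))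
    (hequivu : ∀ x ∈ K, (Vu x).map (fderiv ℝ f x : E →ₗ[ℝ] E) = Vu (f x))
    (C lam : ℝ) (hC : 0 < C) (hlam0 : 0 < lam) (hlam1 : lam < 1)
    (hyps : ∀ (n : ℕ), ∀ x ∈ K, ∀ v ∈ Vs x, ‖fderiv ℝ (f^[n]) x v‖ ≤ C * lam ^ n * ‖v‖)
    (hypu : ∀ (n : ℕ), ∀ x ∈ K, ∀ v ∈ Vu x, ‖fderiv ℝ (g^[n]) x v‖ ≤ C * lam ^ n * ‖v‖)
    (Ps Pu : E → E →L[ℝ] E)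
    (hproj : ∀ x ∈ K, ∀ v : E, Ps x v ∈ Vs x ∧ Pu x v ∈ Vu x ∧ Ps x v + Pu x v = v)
    (hPbdd : ∃ M : ℝ, ∀ x ∈ K, ‖Ps x‖ + ‖Pu x‖ ≤ M)
    (orb : ℤ → E) (horb0 : orb 0 ∈ K) (horb : ∀ n : ℤ, orb (n + 1) = f (orb n))
    (X : ℤ → E) (hXb : ∃ M : ℝ, ∀ n : ℤ, ‖X n‖ ≤ M)
    (v v' : ℤ → E)
    (hvb : ∃ M : ℝ, ∀ n : ℤ, ‖v n‖ ≤ M) (hv'b : ∃ M : ℝ, ∀ n : ℤ, ‖v' n‖ ≤ M)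
    (hv : ∀ n : ℤ, v (n + 1) = fderiv ℝ f (orb n) (v n) + X (n + 1))
    (hv' : ∀ n : ℤ, v' (n + 1) = fderiv ℝ f (orb n) (v' n) + X (n + 1)) :
    ∀ n : ℤ, v n = v' n := by
  classical
  obtain ⟨Mv, hMv⟩ := hvb
  obtain ⟨Mv', hMv'⟩ := hv'b
  obtain ⟨Mp, hMp⟩ := hPbdd
  have hfd : Differentiable ℝ f := hf.differentiable one_ne_zero
  have hgd : Differentiable ℝ g := hg.differentiable one_ne_zero
  set w : ℤ → E := fun n => v n - v' n with hw
  have hwrec : ∀ n : ℤ, w (n + 1) = fderiv ℝ f (orb n) (w n) := by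
    intro n
    show v (n+1) - v' (n+1) = _
    rw [hv n, hv' n, (fderiv ℝ f (orb n)).map_sub]
    abel
  have hMw : ∀ n, ‖w n‖ ≤ Mv + Mv' := fun n =>
    (norm_sub_le _ _).trans (add_le_add (hMv n) (hMv' n))
  -- orbit stays in K
  have horbK : ∀ n : ℤ, orb n ∈ K := by
    have hfwd : ∀ n : ℤ, orb n ∈ K → orb (n + 1) ∈ K := by
      intro n hn; rw [horb n, ← hfK]; exact ⟨orb n, hn, rfl⟩
    have hbwd : ∀ n : ℤ, orb (n + 1) ∈ K → orb n ∈ K := by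
      intro n hn
      rw [horb n, ← hfK] at hn
      obtain ⟨y, hy, hyeq⟩ := hn
      rwa [hgf.injective hyeq] at hy
    intro n
    induction n using Int.induction_on with
    | zero => exact horb0
    | succ k ih => exact hfwd k ih
    | pred k ih => exact hbwd _ (by rw [show (-(k:ℤ) - 1) + 1 = -k by ring]; exact ih)
  have horbit : ∀ (k : ℕ) (n : ℤ), f^[k] (orb n) = orb (n + k) := by
    intro k
    induction k with
    | zero => intro n; simp
    | succ k ih =>
      intro n
      rw [Function.iterate_succ_apply', ih,
        show (n + ((k:ℕ)+1:ℕ) : ℤ) = (n + k) + 1 by push_cast; ring, horb]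
  have hginv : ∀ n : ℤ, g (orb (n + 1)) = orb n := by
    intro n; rw [horb]; exact hgf _
  have hgderiv : ∀ x : E, ∀ vv : E, fderiv ℝ g (f x) (fderiv ℝ f x vv) = vv := by
    intro x vv
    have hcomp : fderiv ℝ (g ∘ f) x = (fderiv ℝ g (f x)).comp (fderiv ℝ f x) :=
      fderiv_comp x (hgd _) (hfd _)
    have hid : (g ∘ f) = id := funext hgf
    rw [hid, fderiv_id] at hcomp
    have := congrArg (fun (L : E →L[ℝ] E) => L vv) hcomp
    simpa using this.symm
  set s : ℤ → E := fun n => Ps (orb n) (w n) with hs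
  set u : ℤ → E := fun n => Pu (orb n) (w n) with hu
  have hs_mem : ∀ n, s n ∈ Vs (orb n) := fun n => (hproj _ (horbK n) (w n)).1
  have hu_mem : ∀ n, u n ∈ Vu (orb n) := fun n => (hproj _ (horbK n) (w n)).2.1
  have hsu : ∀ n, s n + u n = w n := fun n => (hproj _ (horbK n) (w n)).2.2
  have hstep : ∀ n : ℤ, s (n + 1) = fderiv ℝ f (orb n) (s n) ∧
      u (n + 1) = fderiv ℝ f (orb n) (u n) := by
    intro n
    have hDs : fderiv ℝ f (orb n) (s n) ∈ Vs (orb (n + 1)) := by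
      rw [horb n, ← hequivs _ (horbK n)]
      exact Submodule.mem_map_of_mem (hs_mem n)
    have hDu : fderiv ℝ f (orb n) (u n) ∈ Vu (orb (n + 1)) := by
      rw [horb n, ← hequivu _ (horbK n)]
      exact Submodule.mem_map_of_mem (hu_mem n)
    have heq : s (n + 1) + u (n + 1)
        = fderiv ℝ f (orb n) (s n) + fderiv ℝ f (orb n) (u n) := by
      rw [hsu, hwrec, ← map_add, hsu]
    have hd : s (n + 1) - fderiv ℝ f (orb n) (s n)
        = fderiv ℝ f (orb n) (u n) - u (n + 1) := by
      rw [sub_eq_sub_iff_add_eq_add, heq]; abel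
    have hmem1 : s (n + 1) - fderiv ℝ f (orb n) (s n) ∈ Vs (orb (n + 1)) :=
      sub_mem (hs_mem (n + 1)) hDs
    have hmem2 : s (n + 1) - fderiv ℝ f (orb n) (s n) ∈ Vu (orb (n + 1)) := by
      rw [hd]; exact sub_mem hDu (hu_mem (n + 1))
    have hzero : s (n + 1) - fderiv ℝ f (orb n) (s n) = 0 :=
      Submodule.disjoint_def.mp (hsplit _ (horbK (n + 1))).disjoint _ hmem1 hmem2
    refine ⟨sub_eq_zero.mp hzero, ?_⟩
    have : fderiv ℝ f (orb n) (u n) - u (n + 1) = 0 := hd ▸ hzero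
    exact (sub_eq_zero.mp this).symm
  have hsiter : ∀ (k : ℕ) (n : ℤ), fderiv ℝ (f^[k]) (orb n) (s n) = s (n + k) := by
    intro k
    induction k with
    | zero => intro n; simp
    | succ k ih =>
      intro n
      rw [Function.iterate_succ' f k, fderiv_comp _ (hfd _) ((hfd.iterate k) _)]
      simp only [ContinuousLinearMap.comp_apply]
      rw [ih n, horbit k n,
        show (n + ((k:ℕ)+1:ℕ) : ℤ) = (n + k) + 1 by push_cast; ring]
      exact ((hstep (n + k)).1).symm
  have huiter : ∀ (k : ℕ) (n : ℤ), fderiv ℝ (g^[k]) (orb (n + k)) (u (n + k)) = u n := by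
    intro k
    induction k with
    | zero => intro n; simp
    | succ k ih =>
      intro n
      have hidx : (n + ((k:ℕ)+1:ℕ) : ℤ) = (n + k) + 1 := by push_cast; ring
      rw [Function.iterate_succ g k, fderiv_comp _ ((hgd.iterate k) _) (hgd _)]
      simp only [ContinuousLinearMap.comp_apply]
      have h2 : g (orb (n + ((k:ℕ)+1:ℕ))) = orb (n + k) := by
        rw [hidx]; exact hginv (n + k)
      have h3 : fderiv ℝ g (orb (n + ((k:ℕ)+1:ℕ))) (u (n + ((k:ℕ)+1:ℕ))) = u (n + k) := by
        rw [hidx, (hstep (n + k)).2, horb (n + k)]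
        exact hgderiv (orb (n + k)) (u (n + k))
      rw [h2, h3, ih n]
  have hPs_norm : ∀ n : ℤ, ‖s n‖ ≤ Mp * (Mv + Mv') := by
    intro n
    have h1 : ‖Ps (orb n)‖ ≤ Mp := by
      have h2 := hMp _ (horbK n)
      have h3 : (0:ℝ) ≤ ‖Pu (orb n)‖ := norm_nonneg _
      linarith
    calc ‖s n‖ ≤ ‖Ps (orb n)‖ * ‖w n‖ := (Ps (orb n)).le_opNorm (w n)
    _ ≤ Mp * (Mv + Mv') :=
        mul_le_mul h1 (hMw n) (norm_nonneg _) (le_trans (norm_nonneg _) h1)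
  have hPu_norm : ∀ n : ℤ, ‖u n‖ ≤ Mp * (Mv + Mv') := by
    intro n
    have h1 : ‖Pu (orb n)‖ ≤ Mp := by
      have h2 := hMp _ (horbK n)
      have h3 : (0:ℝ) ≤ ‖Ps (orb n)‖ := norm_nonneg _
      linarith
    calc ‖u n‖ ≤ ‖Pu (orb n)‖ * ‖w n‖ := (Pu (orb n)).le_opNorm (w n)
    _ ≤ Mp * (Mv + Mv') :=
        mul_le_mul h1 (hMw n) (norm_nonneg _) (le_trans (norm_nonneg _) h1)
  set B : ℝ := Mp * (Mv + Mv') with hB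
  have hlim : Tendsto (fun k : ℕ => C * B * lam ^ k) atTop (𝓝 0) := by
    have h1 := tendsto_pow_atTop_nhds_zero_of_lt_one hlam0.le hlam1
    simpa using h1.const_mul (C * B)
  have hszero : ∀ n, s n = 0 := by
    intro n
    have hb : ∀ k : ℕ, ‖s n‖ ≤ C * B * lam ^ k := by
      intro k
      have h := hyps k (orb (n - k)) (horbK _) (s (n - k)) (hs_mem _)
      rw [hsiter k (n - k), show (n - (k:ℤ) + k) = n by ring] at h
      calc ‖s n‖ ≤ C * lam ^ k * ‖s (n - k)‖ := h
      _ ≤ C * lam ^ k * B := by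
          apply mul_le_mul_of_nonneg_left (hPs_norm _)
          positivity
      _ = C * B * lam ^ k := by ring
    have h0 : ‖s n‖ ≤ 0 := ge_of_tendsto' hlim hb
    simpa using norm_le_zero_iff.mp h0
  have huzero : ∀ n, u n = 0 := by
    intro n
    have hb : ∀ k : ℕ, ‖u n‖ ≤ C * B * lam ^ k := by
      intro k
      have h := hypu k (orb (n + k)) (horbK _) (u (n + k)) (hu_mem _)
      rw [huiter k n] at h
      calc ‖u n‖ ≤ C * lam ^ k * ‖u (n + k)‖ := h
      _ ≤ C * lam ^ k * B := by
          apply mul_le_mul_of_nonneg_left (hPu_norm _)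
          positivity
      _ = C * B * lam ^ k := by ring
    have h0 : ‖u n‖ ≤ 0 := ge_of_tendsto' hlim hb
    simpa using norm_le_zero_iff.mp h0
  intro n
  have h1 := hsu n
  rw [hszero n, huzero n] at h1
  have h2 : w n = 0 := by simpa using h1.symm
  exact sub_eq_zero.mp h2
end

section
/- (Hölder continuity of the split-propagate scheme.) Suppose additionally that for some α ∈ (0,1] the operator-valued maps x ↦ Df(x) P^s(x) and x ↦ Df(x) P^u(x) are α-Hölder continuous on K, and let X be a bounded α-Hölder vector field on K. Then the shadowing vector field v(x) := Σ_{k≥0} Df^k(f^{-k}x) P^s(f^{-k}x) X(f^{-k}x) − Σ_{k≥1} Df^{-k}(f^{k}x) P^u(f^{k}x) X(f^{k}x) is Hölder continuous on K: there exist β ∈ (0, α] and C' > 0 such that ‖v(x) − v(y)‖ ≤ C' ‖x − y‖^β for all x, y ∈ K. -/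
open Function Set Filter MeasureTheory Topology

private lemma pow_rpow_comm' {a : ℝ} (ha : 0 ≤ a) (t : ℝ) (k : ℕ) :
    (a ^ k) ^ t = (a ^ t) ^ k := by
  rw [← Real.rpow_natCast a k, ← Real.rpow_natCast (a ^ t) k,
    ← Real.rpow_mul ha, ← Real.rpow_mul ha, mul_comm]

private lemma min_le_rpow_interp {a b t : ℝ} (ha : 0 ≤ a) (hb : 0 ≤ b)
    (ht0 : 0 ≤ t) (ht1 : t ≤ 1) :
    min a b ≤ a ^ (1 - t) * b ^ t := by
  have h1t : (1 - t) + t = 1 := by ring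
  rcases le_total a b with h | h
  · calc min a b = a := min_eq_left h
      _ = a ^ ((1 - t) + t) := by rw [h1t, Real.rpow_one]
      _ = a ^ (1 - t) * a ^ t := Real.rpow_add' ha (by norm_num)
      _ ≤ a ^ (1 - t) * b ^ t :=
        mul_le_mul_of_nonneg_left (Real.rpow_le_rpow ha h ht0) (Real.rpow_nonneg ha _)
  · calc min a b = b := min_eq_right h
      _ = b ^ ((1 - t) + t) := by rw [h1t, Real.rpow_one]
      _ = b ^ (1 - t) * b ^ t := Real.rpow_add' hb (by norm_num)
      _ ≤ a ^ (1 - t) * b ^ t :=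
        mul_le_mul_of_nonneg_right (Real.rpow_le_rpow hb h (by linarith)) (Real.rpow_nonneg hb _)

set_option maxHeartbeats 2000000 in
theorem shadowing_vector_holder
    {E : Type*} [NormedAddCommGroup E] [NormedSpace ℝ E] [FiniteDimensional ℝ E]
    (f g : E → E) (hgf : Function.LeftInverse g f) (hfg : Function.RightInverse g f)
    (hf : ContDiff ℝ 1 f) (hg : ContDiff ℝ 1 g)
    (K : Set E) (hKc : IsCompact K) (hfK : f '' K = K)
    (Vs Vu : E → Submodule ℝ E)
    (hsplit : ∀ x ∈ K, IsCompl (Vs x) (Vu x))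
    (hequivs : ∀ x ∈ K, (Vs x).map (fderiv ℝ f x : E →ₗ[ℝ] E) = Vs (f x))
    (hequivu : ∀ x ∈ K, (Vu x).map (fderiv ℝ f x : E →ₗ[ℝ] E) = Vu (f x))
    (C lam : ℝ) (hC : 0 < C) (hlam0 : 0 < lam) (hlam1 : lam < 1)
    (hyps : ∀ (n : ℕ), ∀ x ∈ K, ∀ v ∈ Vs x, ‖fderiv ℝ (f^[n]) x v‖ ≤ C * lam ^ n * ‖v‖)
    (hypu : ∀ (n : ℕ), ∀ x ∈ K, ∀ v ∈ Vu x, ‖fderiv ℝ (g^[n]) x v‖ ≤ C * lam ^ n * ‖v‖)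
    (Ps Pu : E → E →L[ℝ] E)
    (hproj : ∀ x ∈ K, ∀ v : E, Ps x v ∈ Vs x ∧ Pu x v ∈ Vu x ∧ Ps x v + Pu x v = v)
    (hPbdd : ∃ M : ℝ, ∀ x ∈ K, ‖Ps x‖ + ‖Pu x‖ ≤ M)
    (α : ℝ) (hα0 : 0 < α) (hα1 : α ≤ 1) (Cα : ℝ)
    (hHs : ∀ x ∈ K, ∀ y ∈ K,
      ‖(fderiv ℝ f x).comp (Ps x) - (fderiv ℝ f y).comp (Ps y)‖ ≤ Cα * ‖x - y‖ ^ α)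
    (hHu : ∀ x ∈ K, ∀ y ∈ K,
      ‖(fderiv ℝ f x).comp (Pu x) - (fderiv ℝ f y).comp (Pu y)‖ ≤ Cα * ‖x - y‖ ^ α)
    (X : E → E) (hXb : ∃ M : ℝ, ∀ x ∈ K, ‖X x‖ ≤ M)
    (hXH : ∀ x ∈ K, ∀ y ∈ K, ‖X x - X y‖ ≤ Cα * ‖x - y‖ ^ α)
    (v : E → E)
    (hv : ∀ x : E, v x =
      (∑' k : ℕ, fderiv ℝ (f^[k]) (g^[k] x) (Ps (g^[k] x) (X (g^[k] x)))) -
      ∑' k : ℕ, fderiv ℝ (g^[k+1]) (f^[k+1] x) (Pu (f^[k+1] x) (X (f^[k+1] x)))) :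
    ∃ β : ℝ, 0 < β ∧ β ≤ α ∧
      ∃ C' > 0, ∀ x ∈ K, ∀ y ∈ K, ‖v x - v y‖ ≤ C' * ‖x - y‖ ^ β := by
  -- basic differentiability
  have hfd : Differentiable ℝ f := hf.differentiable one_ne_zero
  have hgd : Differentiable ℝ g := hg.differentiable one_ne_zero
  have hfid : ∀ k : ℕ, Differentiable ℝ (f^[k]) := by
    intro k; induction k with
    | zero => simpa using differentiable_id
    | succ k ih => rw [Function.iterate_succ]; exact ih.comp hfd
  have hgid : ∀ k : ℕ, Differentiable ℝ (g^[k]) := by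
    intro k; induction k with
    | zero => simpa using differentiable_id
    | succ k ih => rw [Function.iterate_succ]; exact ih.comp hgd
  have hDfk : ∀ (k : ℕ) (z : E), fderiv ℝ (f^[k+1]) z
      = (fderiv ℝ (f^[k]) (f z)).comp (fderiv ℝ f z) := by
    intro k z
    rw [Function.iterate_succ]
    exact fderiv_comp (x := z) (hfid k (f z)) (hfd z)
  have hDgk : ∀ (k : ℕ) (z : E), fderiv ℝ (g^[k+1]) z
      = (fderiv ℝ (g^[k]) (g z)).comp (fderiv ℝ g z) := by
    intro k z
    rw [Function.iterate_succ]
    exact fderiv_comp (x := z) (hgid k (g z)) (hgd z)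
  -- chain rule identities for the inverse pair
  have hgffun : g ∘ f = id := funext hgf
  have hfgfun : f ∘ g = id := funext hfg
  have hcomp1 : ∀ x : E, (fderiv ℝ g (f x)).comp (fderiv ℝ f x)
      = ContinuousLinearMap.id ℝ E := by
    intro x
    have h1 : fderiv ℝ (g ∘ f) x = (fderiv ℝ g (f x)).comp (fderiv ℝ f x) :=
      fderiv_comp (x := x) (hgd (f x)) (hfd x)
    rw [hgffun] at h1
    rw [← h1, fderiv_id]
  have hcomp2 : ∀ x : E, (fderiv ℝ f (g x)).comp (fderiv ℝ g x)
      = ContinuousLinearMap.id ℝ E := by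
    intro x
    have h1 : fderiv ℝ (f ∘ g) x = (fderiv ℝ f (g x)).comp (fderiv ℝ g x) :=
      fderiv_comp (x := x) (hfd (g x)) (hgd x)
    rw [hfgfun] at h1
    rw [← h1, fderiv_id]
  have hcomp1' : ∀ z : E, (fderiv ℝ g z).comp (fderiv ℝ f (g z))
      = ContinuousLinearMap.id ℝ E := by
    intro z; have h := hcomp1 (g z); rwa [hfg z] at h
  -- invariance of K
  have hfKm : ∀ x ∈ K, f x ∈ K := fun x hx => hfK ▸ Set.mem_image_of_mem f hx
  have hgKm : ∀ x ∈ K, g x ∈ K := by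
    intro x hx
    rw [← hfK] at hx
    obtain ⟨y, hy, rfl⟩ := hx
    rwa [hgf y]
  have hfkK : ∀ (k : ℕ), ∀ x ∈ K, f^[k] x ∈ K := by
    intro k; induction k with
    | zero => intro x hx; simpa using hx
    | succ k ih =>
        intro x hx
        rw [Function.iterate_succ_apply']
        exact hfKm _ (ih x hx)
  have hgkK : ∀ (k : ℕ), ∀ x ∈ K, g^[k] x ∈ K := by
    intro k; induction k with
    | zero => intro x hx; simpa using hx
    | succ k ih =>
        intro x hx
        rw [Function.iterate_succ_apply']
        exact hgKm _ (ih x hx)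
  -- projections restrict to the identity on their ranges
  have hPsId : ∀ x ∈ K, ∀ w ∈ Vs x, Ps x w = w := by
    intro x hx w hw
    obtain ⟨h1, h2, h3⟩ := hproj x hx w
    have hmem : Pu x w ∈ Vs x := by
      have hE : Pu x w = w - Ps x w := eq_sub_iff_add_eq.mpr (by rw [add_comm]; exact h3)
      rw [hE]; exact Submodule.sub_mem _ hw h1
    have h0 : Pu x w = 0 := Submodule.disjoint_def.mp (hsplit x hx).disjoint _ hmem h2
    rw [h0, add_zero] at h3; exact h3
  have hPuId : ∀ x ∈ K, ∀ w ∈ Vu x, Pu x w = w := by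
    intro x hx w hw
    obtain ⟨h1, h2, h3⟩ := hproj x hx w
    have hmem : Ps x w ∈ Vu x := by
      have hE : Ps x w = w - Pu x w := eq_sub_iff_add_eq.mpr h3
      rw [hE]; exact Submodule.sub_mem _ hw h2
    have h0 : Ps x w = 0 := Submodule.disjoint_def.mp (hsplit x hx).disjoint _ h1 hmem
    rw [h0, zero_add] at h3; exact h3
  -- images of projections under the derivative land in the right subspaces
  have hSmem : ∀ x ∈ K, ∀ w : E, fderiv ℝ f x (Ps x w) ∈ Vs (f x) := by
    intro x hx w
    rw [← hequivs x hx]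
    exact Submodule.mem_map_of_mem (hproj x hx w).1
  have hUmem : ∀ z ∈ K, ∀ w : E, fderiv ℝ g z (Pu z w) ∈ Vu (g z) := by
    intro z hz w
    have hgz : g z ∈ K := hgKm z hz
    have h4 := hequivu (g z) hgz
    rw [hfg z] at h4
    have h1 : Pu z w ∈ (Vu (g z)).map (fderiv ℝ f (g z) : E →ₗ[ℝ] E) := by
      rw [h4]; exact (hproj z hz w).2.1
    obtain ⟨u, hu, heq⟩ := h1
    have h2 : fderiv ℝ g z (fderiv ℝ f (g z) u) = u := by
      have h3 := hcomp1' z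
      have : ((fderiv ℝ g z).comp (fderiv ℝ f (g z))) u = u := by rw [h3]; rfl
      simpa using this
    rw [← heq, ContinuousLinearMap.coe_coe, h2]; exact hu
  -- projection norms
  obtain ⟨M0, hM0⟩ := hPbdd
  set M : ℝ := max M0 1 with hMdef
  have hM1 : (1:ℝ) ≤ M := le_max_right _ _
  have hMpos : (0:ℝ) < M := lt_of_lt_of_le one_pos hM1
  have hMs : ∀ x ∈ K, ‖Ps x‖ ≤ M := by
    intro x hx
    calc ‖Ps x‖ ≤ ‖Ps x‖ + ‖Pu x‖ := le_add_of_nonneg_right (norm_nonneg _)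
      _ ≤ M0 := hM0 x hx
      _ ≤ M := le_max_left _ _
  have hMu : ∀ x ∈ K, ‖Pu x‖ ≤ M := by
    intro x hx
    calc ‖Pu x‖ ≤ ‖Ps x‖ + ‖Pu x‖ := le_add_of_nonneg_left (norm_nonneg _)
      _ ≤ M0 := hM0 x hx
      _ ≤ M := le_max_left _ _
  -- bound on X
  obtain ⟨MX0, hMX0⟩ := hXb
  set MX : ℝ := max MX0 1 with hMXdef
  have hMX1 : (1:ℝ) ≤ MX := le_max_right _ _
  have hMXpos : (0:ℝ) < MX := lt_of_lt_of_le one_pos hMX1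
  have hMX : ∀ x ∈ K, ‖X x‖ ≤ MX := fun x hx => le_trans (hMX0 x hx) (le_max_left _ _)
  -- nonnegative Hölder constant
  set Ca : ℝ := max Cα 0 with hCadef
  have hCa0 : (0:ℝ) ≤ Ca := le_max_right _ _
  have hrnn : ∀ x y : E, (0:ℝ) ≤ ‖x - y‖ ^ α := fun x y => Real.rpow_nonneg (norm_nonneg _) _
  have hHs' : ∀ x ∈ K, ∀ y ∈ K,
      ‖(fderiv ℝ f x).comp (Ps x) - (fderiv ℝ f y).comp (Ps y)‖ ≤ Ca * ‖x - y‖ ^ α :=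
    fun x hx y hy => le_trans (hHs x hx y hy)
      (mul_le_mul_of_nonneg_right (le_max_left _ _) (hrnn x y))
  have hHu' : ∀ x ∈ K, ∀ y ∈ K,
      ‖(fderiv ℝ f x).comp (Pu x) - (fderiv ℝ f y).comp (Pu y)‖ ≤ Ca * ‖x - y‖ ^ α :=
    fun x hx y hy => le_trans (hHu x hx y hy)
      (mul_le_mul_of_nonneg_right (le_max_left _ _) (hrnn x y))
  have hXH' : ∀ x ∈ K, ∀ y ∈ K, ‖X x - X y‖ ≤ Ca * ‖x - y‖ ^ α :=
    fun x hx y hy => le_trans (hXH x hx y hy)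
      (mul_le_mul_of_nonneg_right (le_max_left _ _) (hrnn x y))
  -- Lipschitz constants on K via a big closed ball
  obtain ⟨R, hR⟩ := hKc.isBounded.subset_closedBall 0
  have hballc : IsCompact (Metric.closedBall (0:E) R) := isCompact_closedBall _ _
  have hballconv : Convex ℝ (Metric.closedBall (0:E) R) := convex_closedBall _ _
  obtain ⟨Lf0, hLf0⟩ :=
    hballc.exists_bound_of_continuousOn (hf.continuous_fderiv one_ne_zero).continuousOn
  obtain ⟨Lg0, hLg0⟩ :=
    hballc.exists_bound_of_continuousOn (hg.continuous_fderiv one_ne_zero).continuousOn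
  set L : ℝ := max 1 (max Lf0 Lg0) with hLdef
  have hL1 : (1:ℝ) ≤ L := le_max_left _ _
  have hL0 : (0:ℝ) < L := lt_of_lt_of_le one_pos hL1
  have hLf0' : ∀ z ∈ Metric.closedBall (0:E) R, ‖fderiv ℝ f z‖ ≤ L :=
    fun z hz => le_trans (hLf0 z hz) (le_trans (le_max_left _ _) (le_max_right _ _))
  have hLg0' : ∀ z ∈ Metric.closedBall (0:E) R, ‖fderiv ℝ g z‖ ≤ L :=
    fun z hz => le_trans (hLg0 z hz) (le_trans (le_max_right _ _) (le_max_right _ _))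
  have hMDf : ∀ z ∈ K, ‖fderiv ℝ f z‖ ≤ L := fun z hz => hLf0' z (hR hz)
  have hMDg : ∀ z ∈ K, ‖fderiv ℝ g z‖ ≤ L := fun z hz => hLg0' z (hR hz)
  have hfLip : ∀ x ∈ K, ∀ y ∈ K, ‖f x - f y‖ ≤ L * ‖x - y‖ := by
    intro x hx y hy
    exact hballconv.norm_image_sub_le_of_norm_fderiv_le
      (fun z _ => hfd z) hLf0' (hR hy) (hR hx)
  have hgLip : ∀ x ∈ K, ∀ y ∈ K, ‖g x - g y‖ ≤ L * ‖x - y‖ := by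
    intro x hx y hy
    exact hballconv.norm_image_sub_le_of_norm_fderiv_le
      (fun z _ => hgd z) hLg0' (hR hy) (hR hx)
  have hgLipk : ∀ (k:ℕ), ∀ x ∈ K, ∀ y ∈ K, ‖g^[k] x - g^[k] y‖ ≤ L^k * ‖x - y‖ := by
    intro k; induction k with
    | zero => intro x hx y hy; simp
    | succ k ih =>
        intro x hx y hy
        rw [Function.iterate_succ_apply', Function.iterate_succ_apply']
        calc ‖g (g^[k] x) - g (g^[k] y)‖ ≤ L * ‖g^[k] x - g^[k] y‖ :=
              hgLip _ (hgkK k x hx) _ (hgkK k y hy)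
          _ ≤ L * (L^k * ‖x-y‖) := mul_le_mul_of_nonneg_left (ih x hx y hy) hL0.le
          _ = L^(k+1) * ‖x-y‖ := by ring
  have hfLipk : ∀ (k:ℕ), ∀ x ∈ K, ∀ y ∈ K, ‖f^[k] x - f^[k] y‖ ≤ L^k * ‖x - y‖ := by
    intro k; induction k with
    | zero => intro x hx y hy; simp
    | succ k ih =>
        intro x hx y hy
        rw [Function.iterate_succ_apply', Function.iterate_succ_apply']
        calc ‖f (f^[k] x) - f (f^[k] y)‖ ≤ L * ‖f^[k] x - f^[k] y‖ :=
              hfLip _ (hfkK k x hx) _ (hfkK k y hy)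
          _ ≤ L * (L^k * ‖x-y‖) := mul_le_mul_of_nonneg_left (ih x hx y hy) hL0.le
          _ = L^(k+1) * ‖x-y‖ := by ring
  -- rpow comparison helper
  have hrpow_aux : ∀ a b c : ℝ, 0 ≤ a → 0 ≤ b → 0 ≤ c → a ≤ b * c → a ^ α ≤ b ^ α * c ^ α := by
    intro a b c ha hb hc h
    calc a ^ α ≤ (b*c) ^ α := Real.rpow_le_rpow ha h hα0.le
      _ = b^α * c^α := Real.mul_rpow hb hc
  -- operator families
  set Φ : ℕ → E → E →L[ℝ] E := fun k z => (fderiv ℝ (f^[k]) z).comp (Ps z) with hPhidef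
  set Ψ : ℕ → E → E →L[ℝ] E := fun k z => (fderiv ℝ (g^[k]) z).comp (Pu z) with hPsidef
  have hΦbd : ∀ (k:ℕ), ∀ z ∈ K, ‖Φ k z‖ ≤ C * lam^k * M := by
    intro k z hz
    apply ContinuousLinearMap.opNorm_le_bound _ (by positivity)
    intro w
    calc ‖Φ k z w‖ = ‖fderiv ℝ (f^[k]) z (Ps z w)‖ := rfl
      _ ≤ C * lam^k * ‖Ps z w‖ := hyps k z hz _ (hproj z hz w).1
      _ ≤ C * lam^k * (M * ‖w‖) := by
          apply mul_le_mul_of_nonneg_left _ (by positivity)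
          exact le_trans (ContinuousLinearMap.le_opNorm _ _)
            (mul_le_mul_of_nonneg_right (hMs z hz) (norm_nonneg _))
      _ = C * lam^k * M * ‖w‖ := by ring
  have hΨbd : ∀ (k:ℕ), ∀ z ∈ K, ‖Ψ k z‖ ≤ C * lam^k * M := by
    intro k z hz
    apply ContinuousLinearMap.opNorm_le_bound _ (by positivity)
    intro w
    calc ‖Ψ k z w‖ = ‖fderiv ℝ (g^[k]) z (Pu z w)‖ := rfl
      _ ≤ C * lam^k * ‖Pu z w‖ := hypu k z hz _ (hproj z hz w).2.1
      _ ≤ C * lam^k * (M * ‖w‖) := by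
          apply mul_le_mul_of_nonneg_left _ (by positivity)
          exact le_trans (ContinuousLinearMap.le_opNorm _ _)
            (mul_le_mul_of_nonneg_right (hMu z hz) (norm_nonneg _))
      _ = C * lam^k * M * ‖w‖ := by ring
  have hΦrec : ∀ (k:ℕ), ∀ z ∈ K, Φ (k+1) z = (Φ k (f z)).comp ((fderiv ℝ f z).comp (Ps z)) := by
    intro k z hz
    ext w
    show fderiv ℝ (f^[k+1]) z (Ps z w) = fderiv ℝ (f^[k]) (f z) (Ps (f z) (fderiv ℝ f z (Ps z w)))
    rw [hPsId (f z) (hfKm z hz) _ (hSmem z hz w), hDfk k z]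
    rfl
  have hΨrec : ∀ (k:ℕ), ∀ z ∈ K, Ψ (k+1) z = (Ψ k (g z)).comp ((fderiv ℝ g z).comp (Pu z)) := by
    intro k z hz
    ext w
    show fderiv ℝ (g^[k+1]) z (Pu z w) = fderiv ℝ (g^[k]) (g z) (Pu (g z) (fderiv ℝ g z (Pu z w)))
    rw [hPuId (g z) (hgKm z hz) _ (hUmem z hz w), hDgk k z]
    rfl
  -- generic product-difference bound
  have hcompdiff : ∀ A A' B B' : E →L[ℝ] E,
      ‖A.comp B - A'.comp B'‖ ≤ ‖A - A'‖*‖B‖ + ‖A'‖*‖B - B'‖ := by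
    intro A A' B B'
    have hid : A.comp B - A'.comp B' = (A - A').comp B + A'.comp (B - B') := by
      rw [ContinuousLinearMap.sub_comp, ContinuousLinearMap.comp_sub]; abel
    rw [hid]
    exact le_trans (norm_add_le _ _) (add_le_add
      (ContinuousLinearMap.opNorm_comp_le _ _) (ContinuousLinearMap.opNorm_comp_le _ _))
  -- Hölder continuity of the full derivative of f on K
  have hDfH : ∀ z ∈ K, ∀ w ∈ K, ‖fderiv ℝ f z - fderiv ℝ f w‖ ≤ 2*Ca * ‖z-w‖^α := by
    intro z hz w hw
    have hdec : ∀ u ∈ K, fderiv ℝ f u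
        = (fderiv ℝ f u).comp (Ps u) + (fderiv ℝ f u).comp (Pu u) := by
      intro u hu
      ext w'
      simp only [ContinuousLinearMap.add_apply, ContinuousLinearMap.coe_comp',
        Function.comp_apply]
      rw [← map_add, (hproj u hu w').2.2]
    calc ‖fderiv ℝ f z - fderiv ℝ f w‖
        = ‖((fderiv ℝ f z).comp (Ps z) - (fderiv ℝ f w).comp (Ps w))
            + ((fderiv ℝ f z).comp (Pu z) - (fderiv ℝ f w).comp (Pu w))‖ := by
          have e : fderiv ℝ f z - fderiv ℝ f w
              = ((fderiv ℝ f z).comp (Ps z) - (fderiv ℝ f w).comp (Ps w))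
                + ((fderiv ℝ f z).comp (Pu z) - (fderiv ℝ f w).comp (Pu w)) := by
            conv_lhs => rw [hdec z hz, hdec w hw]
            abel
          rw [e]
      _ ≤ ‖(fderiv ℝ f z).comp (Ps z) - (fderiv ℝ f w).comp (Ps w)‖
            + ‖(fderiv ℝ f z).comp (Pu z) - (fderiv ℝ f w).comp (Pu w)‖ := norm_add_le _ _
      _ ≤ Ca * ‖z-w‖^α + Ca * ‖z-w‖^α := add_le_add (hHs' z hz w hw) (hHu' z hz w hw)
      _ = 2*Ca * ‖z-w‖^α := by ring
  -- Hölder continuity of the derivative of g on K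
  have hLa1 : (1:ℝ) ≤ L^α := by
    calc (1:ℝ) = 1^α := (Real.one_rpow α).symm
      _ ≤ L^α := Real.rpow_le_rpow zero_le_one hL1 hα0.le
  have hLa0 : (0:ℝ) ≤ L^α := le_trans zero_le_one hLa1
  set CDg : ℝ := L*L*(2*Ca)*L^α with hCDgdef
  have hCDg0 : 0 ≤ CDg := by
    apply mul_nonneg _ hLa0
    apply mul_nonneg (mul_nonneg hL0.le hL0.le) (by linarith)
  have hDgH : ∀ z ∈ K, ∀ w ∈ K, ‖fderiv ℝ g z - fderiv ℝ g w‖ ≤ CDg * ‖z-w‖^α := by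
    intro z hz w hw
    have hid : fderiv ℝ g z - fderiv ℝ g w
        = (fderiv ℝ g z).comp (((fderiv ℝ f (g w)) - (fderiv ℝ f (g z))).comp (fderiv ℝ g w)) := by
      rw [ContinuousLinearMap.sub_comp, ContinuousLinearMap.comp_sub, hcomp2 w,
        ← ContinuousLinearMap.comp_assoc, hcomp1' z, ContinuousLinearMap.comp_id,
        ContinuousLinearMap.id_comp]
    rw [hid]
    have h1 : ‖f (g w)‖ = ‖f (g w)‖ := rfl
    have hgzK : g z ∈ K := hgKm z hz
    have hgwK : g w ∈ K := hgKm w hw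
    have h2 : ‖fderiv ℝ f (g w) - fderiv ℝ f (g z)‖ ≤ 2*Ca * (L^α * ‖z-w‖^α) := by
      have h3 := hDfH (g w) hgwK (g z) hgzK
      have h4 : ‖g w - g z‖^α ≤ L^α * ‖w-z‖^α :=
        hrpow_aux _ _ _ (norm_nonneg _) hL0.le (norm_nonneg _) (hgLip w hw z hz)
      rw [norm_sub_rev w z] at h4
      calc ‖fderiv ℝ f (g w) - fderiv ℝ f (g z)‖ ≤ 2*Ca * ‖g w - g z‖^α := h3
        _ ≤ 2*Ca * (L^α * ‖z-w‖^α) := mul_le_mul_of_nonneg_left h4 (by linarith)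
    calc ‖(fderiv ℝ g z).comp (((fderiv ℝ f (g w)) - (fderiv ℝ f (g z))).comp (fderiv ℝ g w))‖
        ≤ ‖fderiv ℝ g z‖ * (‖fderiv ℝ f (g w) - fderiv ℝ f (g z)‖ * ‖fderiv ℝ g w‖) := by
          refine le_trans (ContinuousLinearMap.opNorm_comp_le _ _) ?_
          exact mul_le_mul_of_nonneg_left (ContinuousLinearMap.opNorm_comp_le _ _) (norm_nonneg _)
      _ ≤ L * ((2*Ca * (L^α * ‖z-w‖^α)) * L) := by
          apply mul_le_mul (hMDg z hz) _ (mul_nonneg (norm_nonneg _) (norm_nonneg _)) hL0.le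
          apply mul_le_mul h2 (hMDg w hw) (norm_nonneg _)
          apply mul_nonneg (by linarith) (mul_nonneg hLa0 (hrnn z w))
      _ = CDg * ‖z-w‖^α := by rw [hCDgdef]; ring
  -- Hölder continuity of the projections on K
  set CP : ℝ := CDg * L^α * (L*M) + L * Ca with hCPdef
  have hCP0 : 0 ≤ CP := by
    apply add_nonneg
    · exact mul_nonneg (mul_nonneg hCDg0 hLa0) (mul_nonneg hL0.le hMpos.le)
    · exact mul_nonneg hL0.le hCa0
  have hSbd : ∀ z ∈ K, ‖(fderiv ℝ f z).comp (Ps z)‖ ≤ L*M := fun z hz =>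
    le_trans (ContinuousLinearMap.opNorm_comp_le _ _)
      (mul_le_mul (hMDf z hz) (hMs z hz) (norm_nonneg _) hL0.le)
  have hTbd : ∀ z ∈ K, ‖(fderiv ℝ f z).comp (Pu z)‖ ≤ L*M := fun z hz =>
    le_trans (ContinuousLinearMap.opNorm_comp_le _ _)
      (mul_le_mul (hMDf z hz) (hMu z hz) (norm_nonneg _) hL0.le)
  have hDgfH : ∀ z ∈ K, ∀ w ∈ K,
      ‖fderiv ℝ g (f z) - fderiv ℝ g (f w)‖ ≤ CDg * L^α * ‖z-w‖^α := by
    intro z hz w hw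
    have h4 : ‖f z - f w‖^α ≤ L^α * ‖z-w‖^α :=
      hrpow_aux _ _ _ (norm_nonneg _) hL0.le (norm_nonneg _) (hfLip z hz w hw)
    calc ‖fderiv ℝ g (f z) - fderiv ℝ g (f w)‖ ≤ CDg * ‖f z - f w‖^α :=
          hDgH (f z) (hfKm z hz) (f w) (hfKm w hw)
      _ ≤ CDg * (L^α * ‖z-w‖^α) := mul_le_mul_of_nonneg_left h4 hCDg0
      _ = CDg * L^α * ‖z-w‖^α := by ring
  have hPsrep : ∀ z ∈ K, Ps z = (fderiv ℝ g (f z)).comp ((fderiv ℝ f z).comp (Ps z)) := by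
    intro z hz
    rw [← ContinuousLinearMap.comp_assoc, hcomp1 z, ContinuousLinearMap.id_comp]
  have hPurep : ∀ z ∈ K, Pu z = (fderiv ℝ g (f z)).comp ((fderiv ℝ f z).comp (Pu z)) := by
    intro z hz
    rw [← ContinuousLinearMap.comp_assoc, hcomp1 z, ContinuousLinearMap.id_comp]
  have hPsH : ∀ z ∈ K, ∀ w ∈ K, ‖Ps z - Ps w‖ ≤ CP * ‖z-w‖^α := by
    intro z hz w hw
    rw [hPsrep z hz, hPsrep w hw]
    refine le_trans (hcompdiff _ _ _ _) ?_
    calc ‖fderiv ℝ g (f z) - fderiv ℝ g (f w)‖ * ‖(fderiv ℝ f z).comp (Ps z)‖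
          + ‖fderiv ℝ g (f w)‖ * ‖(fderiv ℝ f z).comp (Ps z) - (fderiv ℝ f w).comp (Ps w)‖
        ≤ (CDg * L^α * ‖z-w‖^α) * (L*M) + L * (Ca * ‖z-w‖^α) := by
          apply add_le_add
          · exact mul_le_mul (hDgfH z hz w hw) (hSbd z hz) (norm_nonneg _)
              (mul_nonneg (mul_nonneg hCDg0 hLa0) (hrnn z w))
          · exact mul_le_mul (hMDg (f w) (hfKm w hw)) (hHs' z hz w hw) (norm_nonneg _) hL0.le
      _ = CP * ‖z-w‖^α := by rw [hCPdef]; ring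
  have hPuH : ∀ z ∈ K, ∀ w ∈ K, ‖Pu z - Pu w‖ ≤ CP * ‖z-w‖^α := by
    intro z hz w hw
    rw [hPurep z hz, hPurep w hw]
    refine le_trans (hcompdiff _ _ _ _) ?_
    calc ‖fderiv ℝ g (f z) - fderiv ℝ g (f w)‖ * ‖(fderiv ℝ f z).comp (Pu z)‖
          + ‖fderiv ℝ g (f w)‖ * ‖(fderiv ℝ f z).comp (Pu z) - (fderiv ℝ f w).comp (Pu w)‖
        ≤ (CDg * L^α * ‖z-w‖^α) * (L*M) + L * (Ca * ‖z-w‖^α) := by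
          apply add_le_add
          · exact mul_le_mul (hDgfH z hz w hw) (hTbd z hz) (norm_nonneg _)
              (mul_nonneg (mul_nonneg hCDg0 hLa0) (hrnn z w))
          · exact mul_le_mul (hMDg (f w) (hfKm w hw)) (hHu' z hz w hw) (norm_nonneg _) hL0.le
      _ = CP * ‖z-w‖^α := by rw [hCPdef]; ring
  -- Hölder continuity and bound of z ↦ Dg z ∘ Pu z
  set CU : ℝ := CDg * M + L * CP with hCUdef
  have hCU0 : 0 ≤ CU := add_nonneg (mul_nonneg hCDg0 hMpos.le) (mul_nonneg hL0.le hCP0)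
  have hUbd : ∀ z ∈ K, ‖(fderiv ℝ g z).comp (Pu z)‖ ≤ L*M := fun z hz =>
    le_trans (ContinuousLinearMap.opNorm_comp_le _ _)
      (mul_le_mul (hMDg z hz) (hMu z hz) (norm_nonneg _) hL0.le)
  have hUH : ∀ z ∈ K, ∀ w ∈ K,
      ‖(fderiv ℝ g z).comp (Pu z) - (fderiv ℝ g w).comp (Pu w)‖ ≤ CU * ‖z-w‖^α := by
    intro z hz w hw
    refine le_trans (hcompdiff _ _ _ _) ?_
    calc ‖fderiv ℝ g z - fderiv ℝ g w‖ * ‖Pu z‖ + ‖fderiv ℝ g w‖ * ‖Pu z - Pu w‖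
        ≤ (CDg * ‖z-w‖^α) * M + L * (CP * ‖z-w‖^α) := by
          apply add_le_add
          · exact mul_le_mul (hDgH z hz w hw) (hMu z hz) (norm_nonneg _)
              (mul_nonneg hCDg0 (hrnn z w))
          · exact mul_le_mul (hMDg w hw) (hPuH z hz w hw) (norm_nonneg _) hL0.le
      _ = CU * ‖z-w‖^α := by rw [hCUdef]; ring
  -- base cases for the operator families
  have hPhi0 : ∀ z : E, Φ 0 z = Ps z := by
    intro z
    ext w
    show fderiv ℝ (f^[0]) z (Ps z w) = Ps z w
    rw [Function.iterate_zero, fderiv_id]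
    rfl
  have hPsi0 : ∀ z : E, Ψ 0 z = Pu z := by
    intro z
    ext w
    show fderiv ℝ (g^[0]) z (Pu z w) = Pu z w
    rw [Function.iterate_zero, fderiv_id]
    rfl
  -- constants for the inductive Hölder bounds
  set Lam : ℝ := L*M*L^α + 1 with hLamdef
  have hLMLa0 : (0:ℝ) ≤ L*M*L^α := mul_nonneg (mul_nonneg hL0.le hMpos.le) hLa0
  have hLam1 : (1:ℝ) ≤ Lam := by rw [hLamdef]; linarith
  have hLam0 : (0:ℝ) < Lam := lt_of_lt_of_le one_pos hLam1
  set Ds : ℝ := CP + C*M*Ca + 1 with hDsdef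
  have hCMCa0 : (0:ℝ) ≤ C*M*Ca := mul_nonneg (mul_nonneg hC.le hMpos.le) hCa0
  have hCMCU0 : (0:ℝ) ≤ C*M*CU := mul_nonneg (mul_nonneg hC.le hMpos.le) hCU0
  have hDs0 : (0:ℝ) < Ds := by rw [hDsdef]; linarith
  set Du : ℝ := CP + C*M*CU + 1 with hDudef
  have hDu0 : (0:ℝ) < Du := by rw [hDudef]; linarith
  have hlamk1 : ∀ k : ℕ, lam^k ≤ 1 := fun k => pow_le_one₀ hlam0.le hlam1.le
  -- inductive Hölder bound for Φ
  have hΦH : ∀ k : ℕ, ∀ z ∈ K, ∀ w ∈ K, ‖Φ k z - Φ k w‖ ≤ Ds * Lam^k * ‖z-w‖^α := by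
    intro k
    induction k with
    | zero =>
        intro z hz w hw
        rw [hPhi0 z, hPhi0 w]
        refine le_trans (hPsH z hz w hw) ?_
        have h2 : Ds * Lam^0 * ‖z-w‖^α = Ds * ‖z-w‖^α := by rw [pow_zero]; ring
        rw [h2]
        have h3 : CP ≤ Ds := by rw [hDsdef]; linarith
        exact mul_le_mul_of_nonneg_right h3 (hrnn z w)
    | succ k ih =>
        intro z hz w hw
        rw [hΦrec k z hz, hΦrec k w hw]
        refine le_trans (hcompdiff _ _ _ _) ?_
        have hd : (0:ℝ) ≤ ‖z-w‖^α := hrnn z w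
        have h1 : ‖Φ k (f z) - Φ k (f w)‖ ≤ Ds * Lam^k * (L^α * ‖z-w‖^α) := by
          refine le_trans (ih (f z) (hfKm z hz) (f w) (hfKm w hw)) ?_
          have h4 : ‖f z - f w‖^α ≤ L^α * ‖z-w‖^α :=
            hrpow_aux _ _ _ (norm_nonneg _) hL0.le (norm_nonneg _) (hfLip z hz w hw)
          exact mul_le_mul_of_nonneg_left h4 (mul_nonneg hDs0.le (pow_nonneg hLam0.le k))
        have h2 : ‖(fderiv ℝ f z).comp (Ps z)‖ ≤ L*M := hSbd z hz
        have h3 : ‖Φ k (f w)‖ ≤ C*lam^k*M := hΦbd k (f w) (hfKm w hw)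
        have h5 : ‖(fderiv ℝ f z).comp (Ps z) - (fderiv ℝ f w).comp (Ps w)‖ ≤ Ca*‖z-w‖^α :=
          hHs' z hz w hw
        have hk1 : (1:ℝ) ≤ Lam^k := one_le_pow₀ hLam1
        have t2 : (C*lam^k*M)*(Ca*‖z-w‖^α) ≤ Ds*Lam^k*‖z-w‖^α := by
          have h6 : C*lam^k*M*Ca ≤ C*M*Ca := by
            nlinarith [mul_nonneg (mul_nonneg (mul_nonneg hC.le hMpos.le) hCa0)
              (sub_nonneg.mpr (hlamk1 k)), pow_nonneg hlam0.le k]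
          have h7 : C*M*Ca ≤ Ds := by rw [hDsdef]; linarith
          have h8 : Ds ≤ Ds*Lam^k := le_mul_of_one_le_right hDs0.le hk1
          calc (C*lam^k*M)*(Ca*‖z-w‖^α) = (C*lam^k*M*Ca)*‖z-w‖^α := by ring
            _ ≤ (Ds*Lam^k)*‖z-w‖^α := mul_le_mul_of_nonneg_right (by linarith) hd
        calc ‖Φ k (f z) - Φ k (f w)‖ * ‖(fderiv ℝ f z).comp (Ps z)‖
              + ‖Φ k (f w)‖ * ‖(fderiv ℝ f z).comp (Ps z) - (fderiv ℝ f w).comp (Ps w)‖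
            ≤ (Ds * Lam^k * (L^α * ‖z-w‖^α)) * (L*M) + (C*lam^k*M) * (Ca*‖z-w‖^α) := by
              apply add_le_add
              · exact mul_le_mul h1 h2 (norm_nonneg _)
                  (mul_nonneg (mul_nonneg hDs0.le (pow_nonneg hLam0.le k))
                    (mul_nonneg hLa0 hd))
              · exact mul_le_mul h3 h5 (norm_nonneg _)
                  (mul_nonneg (mul_nonneg hC.le (pow_nonneg hlam0.le k)) hMpos.le)
          _ ≤ (Ds*Lam^k*(L*M*L^α)) * ‖z-w‖^α + Ds*Lam^k*‖z-w‖^α := by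
              have e1 : (Ds * Lam^k * (L^α * ‖z-w‖^α)) * (L*M)
                  = (Ds*Lam^k*(L*M*L^α)) * ‖z-w‖^α := by ring
              linarith [t2]
          _ = Ds * Lam^(k+1) * ‖z-w‖^α := by rw [pow_succ, hLamdef]; ring
  -- inductive Hölder bound for Ψ
  have hΨH : ∀ k : ℕ, ∀ z ∈ K, ∀ w ∈ K, ‖Ψ k z - Ψ k w‖ ≤ Du * Lam^k * ‖z-w‖^α := by
    intro k
    induction k with
    | zero =>
        intro z hz w hw
        rw [hPsi0 z, hPsi0 w]
        refine le_trans (hPuH z hz w hw) ?_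
        have h2 : Du * Lam^0 * ‖z-w‖^α = Du * ‖z-w‖^α := by rw [pow_zero]; ring
        rw [h2]
        have h3 : CP ≤ Du := by rw [hDudef]; linarith
        exact mul_le_mul_of_nonneg_right h3 (hrnn z w)
    | succ k ih =>
        intro z hz w hw
        rw [hΨrec k z hz, hΨrec k w hw]
        refine le_trans (hcompdiff _ _ _ _) ?_
        have hd : (0:ℝ) ≤ ‖z-w‖^α := hrnn z w
        have h1 : ‖Ψ k (g z) - Ψ k (g w)‖ ≤ Du * Lam^k * (L^α * ‖z-w‖^α) := by
          refine le_trans (ih (g z) (hgKm z hz) (g w) (hgKm w hw)) ?_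
          have h4 : ‖g z - g w‖^α ≤ L^α * ‖z-w‖^α :=
            hrpow_aux _ _ _ (norm_nonneg _) hL0.le (norm_nonneg _) (hgLip z hz w hw)
          exact mul_le_mul_of_nonneg_left h4 (mul_nonneg hDu0.le (pow_nonneg hLam0.le k))
        have h2 : ‖(fderiv ℝ g z).comp (Pu z)‖ ≤ L*M := hUbd z hz
        have h3 : ‖Ψ k (g w)‖ ≤ C*lam^k*M := hΨbd k (g w) (hgKm w hw)
        have h5 : ‖(fderiv ℝ g z).comp (Pu z) - (fderiv ℝ g w).comp (Pu w)‖ ≤ CU*‖z-w‖^α :=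
          hUH z hz w hw
        have hk1 : (1:ℝ) ≤ Lam^k := one_le_pow₀ hLam1
        have t2 : (C*lam^k*M)*(CU*‖z-w‖^α) ≤ Du*Lam^k*‖z-w‖^α := by
          have h6 : C*lam^k*M*CU ≤ C*M*CU := by
            nlinarith [mul_nonneg (mul_nonneg (mul_nonneg hC.le hMpos.le) hCU0)
              (sub_nonneg.mpr (hlamk1 k)), pow_nonneg hlam0.le k]
          have h7 : C*M*CU ≤ Du := by rw [hDudef]; linarith
          have h8 : Du ≤ Du*Lam^k := le_mul_of_one_le_right hDu0.le hk1
          calc (C*lam^k*M)*(CU*‖z-w‖^α) = (C*lam^k*M*CU)*‖z-w‖^α := by ring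
            _ ≤ (Du*Lam^k)*‖z-w‖^α := mul_le_mul_of_nonneg_right (by linarith) hd
        calc ‖Ψ k (g z) - Ψ k (g w)‖ * ‖(fderiv ℝ g z).comp (Pu z)‖
              + ‖Ψ k (g w)‖ * ‖(fderiv ℝ g z).comp (Pu z) - (fderiv ℝ g w).comp (Pu w)‖
            ≤ (Du * Lam^k * (L^α * ‖z-w‖^α)) * (L*M) + (C*lam^k*M) * (CU*‖z-w‖^α) := by
              apply add_le_add
              · exact mul_le_mul h1 h2 (norm_nonneg _)
                  (mul_nonneg (mul_nonneg hDu0.le (pow_nonneg hLam0.le k))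
                    (mul_nonneg hLa0 hd))
              · exact mul_le_mul h3 h5 (norm_nonneg _)
                  (mul_nonneg (mul_nonneg hC.le (pow_nonneg hlam0.le k)) hMpos.le)
          _ ≤ (Du*Lam^k*(L*M*L^α)) * ‖z-w‖^α + Du*Lam^k*‖z-w‖^α := by
              have e1 : (Du * Lam^k * (L^α * ‖z-w‖^α)) * (L*M)
                  = (Du*Lam^k*(L*M*L^α)) * ‖z-w‖^α := by ring
              linarith [t2]
          _ = Du * Lam^(k+1) * ‖z-w‖^α := by rw [pow_succ, hLamdef]; ring
  -- geometric gain constant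
  set Gam : ℝ := Lam * L^α with hGamdef
  have hGam1 : (1:ℝ) ≤ Gam := by
    rw [hGamdef]
    calc (1:ℝ) = 1*1 := by norm_num
      _ ≤ Lam*L^α := mul_le_mul hLam1 hLa1 zero_le_one (by linarith)
  have hGam0 : (0:ℝ) < Gam := lt_of_lt_of_le one_pos hGam1
  -- interpolation exponent
  have hloglam : Real.log lam < 0 := Real.log_neg hlam0 hlam1
  have hlogGam : 0 ≤ Real.log Gam := Real.log_nonneg hGam1
  have hden : 0 < Real.log Gam - Real.log lam := by linarith
  set th : ℝ := (-Real.log lam) / (2*(Real.log Gam - Real.log lam)) with hthdef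
  have hth0 : 0 < th := div_pos (by linarith) (by linarith)
  have hth1 : th ≤ 1 := by
    rw [hthdef, div_le_one (by linarith)]
    linarith
  set mu : ℝ := lam^(1-th) * Gam^th with hmudef
  have hmu0 : 0 ≤ mu :=
    mul_nonneg (Real.rpow_nonneg hlam0.le _) (Real.rpow_nonneg hGam0.le _)
  have hthlog : th * (Real.log Gam - Real.log lam) = -Real.log lam / 2 := by
    have hne : (Real.log Gam - Real.log lam) ≠ 0 := ne_of_gt hden
    have h2ne : (2:ℝ)*(Real.log Gam - Real.log lam) ≠ 0 := mul_ne_zero two_ne_zero hne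
    rw [hthdef, div_mul_eq_mul_div, div_eq_div_iff h2ne two_ne_zero]
    ring
  have hmu1 : mu < 1 := by
    rw [hmudef, Real.rpow_def_of_pos hlam0, Real.rpow_def_of_pos hGam0, ← Real.exp_add]
    have e : Real.log lam * (1-th) + Real.log Gam * th = Real.log lam / 2 := by
      linear_combination hthlog
    rw [e]
    exact Real.exp_lt_one_iff.mpr (by linarith)
  -- interpolation of the two termwise bounds
  have hAB : ∀ (A B dv : ℝ), 0 < A → 0 < B → 0 ≤ dv → ∀ (k : ℕ) (t : ℝ),
      t ≤ min (A * lam^k) (B * (Gam^k * dv^α)) →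
      t ≤ (A^(1-th)*B^th) * mu^k * dv^(α*th) := by
    intro A B dv hA hB hdv k t ht
    refine le_trans ht (le_trans (min_le_rpow_interp
      (mul_nonneg hA.le (pow_nonneg hlam0.le k))
      (mul_nonneg hB.le (mul_nonneg (pow_nonneg hGam0.le k) (Real.rpow_nonneg hdv α)))
      hth0.le hth1) ?_)
    have e1 : (A*lam^k)^(1-th) = A^(1-th) * (lam^(1-th))^k := by
      rw [Real.mul_rpow hA.le (pow_nonneg hlam0.le k), pow_rpow_comm' hlam0.le]
    have e2 : (B*(Gam^k*dv^α))^th = B^th * ((Gam^th)^k * dv^(α*th)) := by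
      rw [Real.mul_rpow hB.le (mul_nonneg (pow_nonneg hGam0.le k) (Real.rpow_nonneg hdv α)),
        Real.mul_rpow (pow_nonneg hGam0.le k) (Real.rpow_nonneg hdv α),
        pow_rpow_comm' hGam0.le, ← Real.rpow_mul hdv]
    rw [e1, e2, hmudef, mul_pow]
    exact le_of_eq (by ring)
  -- coefficients for the termwise bounds
  set A : ℝ := 2*(C*M*MX) with hAdef
  have hCMMX : (0:ℝ) < C*M*MX := mul_pos (mul_pos hC hMpos) hMXpos
  have hA0 : 0 < A := by rw [hAdef]; linarith
  set Bs : ℝ := Ds*MX + C*M*Ca + 1 with hBsdef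
  have hBs0 : 0 < Bs := by
    have := mul_pos hDs0 hMXpos
    rw [hBsdef]; linarith
  set Bu : ℝ := (Du*MX + C*M*Ca + 1)*Gam with hBudef
  have hBu0 : 0 < Bu := by
    have := mul_pos hDu0 hMXpos
    rw [hBudef]
    apply mul_pos _ hGam0
    linarith
  set Qs : ℝ := A^(1-th)*Bs^th with hQsdef
  set Qu : ℝ := A^(1-th)*Bu^th with hQudef
  have hQs0 : 0 < Qs := mul_pos (Real.rpow_pos_of_pos hA0 _) (Real.rpow_pos_of_pos hBs0 _)
  have hQu0 : 0 < Qu := mul_pos (Real.rpow_pos_of_pos hA0 _) (Real.rpow_pos_of_pos hBu0 _)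
  -- decay of the individual terms
  have hsterm_bound : ∀ u ∈ K, ∀ k : ℕ,
      ‖fderiv ℝ (f^[k]) (g^[k] u) (Ps (g^[k] u) (X (g^[k] u)))‖ ≤ (C*M*MX) * lam^k := by
    intro u hu k
    calc ‖fderiv ℝ (f^[k]) (g^[k] u) (Ps (g^[k] u) (X (g^[k] u)))‖
        = ‖Φ k (g^[k] u) (X (g^[k] u))‖ := rfl
      _ ≤ ‖Φ k (g^[k] u)‖ * ‖X (g^[k] u)‖ := ContinuousLinearMap.le_opNorm _ _
      _ ≤ (C*lam^k*M) * MX := mul_le_mul (hΦbd k _ (hgkK k u hu)) (hMX _ (hgkK k u hu))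
            (norm_nonneg _) (mul_nonneg (mul_nonneg hC.le (pow_nonneg hlam0.le k)) hMpos.le)
      _ = (C*M*MX)*lam^k := by ring
  have huterm_bound : ∀ u ∈ K, ∀ k : ℕ,
      ‖fderiv ℝ (g^[k+1]) (f^[k+1] u) (Pu (f^[k+1] u) (X (f^[k+1] u)))‖ ≤ (C*M*MX) * lam^k := by
    intro u hu k
    have hstep : lam^(k+1) ≤ lam^k := by
      rw [pow_succ]
      exact mul_le_of_le_one_right (pow_nonneg hlam0.le k) hlam1.le
    calc ‖fderiv ℝ (g^[k+1]) (f^[k+1] u) (Pu (f^[k+1] u) (X (f^[k+1] u)))‖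
        = ‖Ψ (k+1) (f^[k+1] u) (X (f^[k+1] u))‖ := rfl
      _ ≤ ‖Ψ (k+1) (f^[k+1] u)‖ * ‖X (f^[k+1] u)‖ := ContinuousLinearMap.le_opNorm _ _
      _ ≤ (C*lam^(k+1)*M) * MX := mul_le_mul (hΨbd (k+1) _ (hfkK (k+1) u hu))
            (hMX _ (hfkK (k+1) u hu)) (norm_nonneg _)
            (mul_nonneg (mul_nonneg hC.le (pow_nonneg hlam0.le (k+1))) hMpos.le)
      _ = (C*M*MX)*lam^(k+1) := by ring
      _ ≤ (C*M*MX)*lam^k := mul_le_mul_of_nonneg_left hstep hCMMX.le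
  have hsummS : ∀ u ∈ K, Summable
      (fun k : ℕ => fderiv ℝ (f^[k]) (g^[k] u) (Ps (g^[k] u) (X (g^[k] u)))) := by
    intro u hu
    exact Summable.of_norm_bounded (g := fun k => (C*M*MX) * lam^k)
      ((summable_geometric_of_lt_one hlam0.le hlam1).mul_left _) (hsterm_bound u hu)
  have hsummU : ∀ u ∈ K, Summable
      (fun k : ℕ => fderiv ℝ (g^[k+1]) (f^[k+1] u) (Pu (f^[k+1] u) (X (f^[k+1] u)))) := by
    intro u hu
    exact Summable.of_norm_bounded (g := fun k => (C*M*MX) * lam^k)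
      ((summable_geometric_of_lt_one hlam0.le hlam1).mul_left _) (huterm_bound u hu)
  -- the final estimate
  refine ⟨α*th, mul_pos hα0 hth0, by
      calc α*th ≤ α*1 := mul_le_mul_of_nonneg_left hth1 hα0.le
        _ = α := mul_one α,
    (Qs+Qu)*(1-mu)⁻¹,
    mul_pos (by linarith) (inv_pos.mpr (by linarith)), ?_⟩
  intro x hx y hy
  have hd : (0:ℝ) ≤ ‖x - y‖ := norm_nonneg _
  -- termwise min-bounds for the stable series
  have hs_min : ∀ k : ℕ,
      ‖fderiv ℝ (f^[k]) (g^[k] x) (Ps (g^[k] x) (X (g^[k] x)))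
        - fderiv ℝ (f^[k]) (g^[k] y) (Ps (g^[k] y) (X (g^[k] y)))‖
      ≤ min (A*lam^k) (Bs*(Gam^k*‖x-y‖^α)) := by
    intro k
    have hgx := hgkK k x hx
    have hgy := hgkK k y hy
    refine le_min ?_ ?_
    · calc ‖fderiv ℝ (f^[k]) (g^[k] x) (Ps (g^[k] x) (X (g^[k] x)))
            - fderiv ℝ (f^[k]) (g^[k] y) (Ps (g^[k] y) (X (g^[k] y)))‖
          ≤ ‖fderiv ℝ (f^[k]) (g^[k] x) (Ps (g^[k] x) (X (g^[k] x)))‖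
            + ‖fderiv ℝ (f^[k]) (g^[k] y) (Ps (g^[k] y) (X (g^[k] y)))‖ := norm_sub_le _ _
        _ ≤ (C*M*MX)*lam^k + (C*M*MX)*lam^k :=
            add_le_add (hsterm_bound x hx k) (hsterm_bound y hy k)
        _ = A*lam^k := by rw [hAdef]; ring
    · have hgkα : ‖g^[k] x - g^[k] y‖^α ≤ (L^α)^k * ‖x-y‖^α := by
        have h1 := hrpow_aux (‖g^[k] x - g^[k] y‖) (L^k) (‖x-y‖) (norm_nonneg _)
          (pow_nonneg hL0.le k) (norm_nonneg _) (hgLipk k x hx y hy)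
        rwa [pow_rpow_comm' hL0.le] at h1
      have e : Φ k (g^[k] x) (X (g^[k] x)) - Φ k (g^[k] y) (X (g^[k] y))
          = (Φ k (g^[k] x) - Φ k (g^[k] y)) (X (g^[k] x))
            + (Φ k (g^[k] y)) (X (g^[k] x) - X (g^[k] y)) := by
        simp only [ContinuousLinearMap.sub_apply, map_sub]
        abel
      have hmp : Lam^k * (L^α)^k = Gam^k := by rw [hGamdef, mul_pow]
      have hlp : lam^k * (L^α)^k ≤ Gam^k := by
        rw [hGamdef, ← mul_pow]
        exact pow_le_pow_left₀ (mul_nonneg hlam0.le hLa0)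
          (mul_le_mul_of_nonneg_right (le_trans hlam1.le hLam1) hLa0) k
      have hGd0 : (0:ℝ) ≤ Gam^k * ‖x-y‖^α :=
        mul_nonneg (pow_nonneg hGam0.le k) (hrnn x y)
      calc ‖fderiv ℝ (f^[k]) (g^[k] x) (Ps (g^[k] x) (X (g^[k] x)))
            - fderiv ℝ (f^[k]) (g^[k] y) (Ps (g^[k] y) (X (g^[k] y)))‖
          = ‖(Φ k (g^[k] x) - Φ k (g^[k] y)) (X (g^[k] x))
              + (Φ k (g^[k] y)) (X (g^[k] x) - X (g^[k] y))‖ := by rw [← e]; rfl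
        _ ≤ ‖Φ k (g^[k] x) - Φ k (g^[k] y)‖ * ‖X (g^[k] x)‖
              + ‖Φ k (g^[k] y)‖ * ‖X (g^[k] x) - X (g^[k] y)‖ :=
            le_trans (norm_add_le _ _) (add_le_add (ContinuousLinearMap.le_opNorm _ _)
              (ContinuousLinearMap.le_opNorm _ _))
        _ ≤ (Ds * Lam^k * ‖g^[k] x - g^[k] y‖^α) * MX
              + (C*lam^k*M) * (Ca * ‖g^[k] x - g^[k] y‖^α) := by
            apply add_le_add
            · exact mul_le_mul (hΦH k _ hgx _ hgy) (hMX _ hgx) (norm_nonneg _)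
                (mul_nonneg (mul_nonneg hDs0.le (pow_nonneg hLam0.le k)) (hrnn _ _))
            · exact mul_le_mul (hΦbd k _ hgy) (hXH' _ hgx _ hgy) (norm_nonneg _)
                (mul_nonneg (mul_nonneg hC.le (pow_nonneg hlam0.le k)) hMpos.le)
        _ ≤ (Ds * Lam^k * ((L^α)^k * ‖x-y‖^α)) * MX
              + (C*lam^k*M) * (Ca * ((L^α)^k * ‖x-y‖^α)) := by
            apply add_le_add
            · exact mul_le_mul_of_nonneg_right (mul_le_mul_of_nonneg_left hgkα
                (mul_nonneg hDs0.le (pow_nonneg hLam0.le k))) hMXpos.le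
            · exact mul_le_mul_of_nonneg_left (mul_le_mul_of_nonneg_left hgkα hCa0)
                (mul_nonneg (mul_nonneg hC.le (pow_nonneg hlam0.le k)) hMpos.le)
        _ = (Ds*MX)*((Lam^k*(L^α)^k)*‖x-y‖^α)
              + (C*M*Ca)*((lam^k*(L^α)^k)*‖x-y‖^α) := by ring
        _ ≤ (Ds*MX)*(Gam^k*‖x-y‖^α) + (C*M*Ca)*(Gam^k*‖x-y‖^α) := by
            apply add_le_add
            · exact mul_le_mul_of_nonneg_left (by rw [hmp]) (mul_nonneg hDs0.le hMXpos.le)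
            · exact mul_le_mul_of_nonneg_left
                (mul_le_mul_of_nonneg_right hlp (hrnn x y)) hCMCa0
        _ = (Ds*MX + C*M*Ca)*(Gam^k*‖x-y‖^α) := by ring
        _ ≤ Bs*(Gam^k*‖x-y‖^α) := by
            have hcoef : Ds*MX + C*M*Ca ≤ Bs := by rw [hBsdef]; linarith
            exact mul_le_mul_of_nonneg_right hcoef hGd0
  -- termwise min-bounds for the unstable series
  have hu_min : ∀ k : ℕ,
      ‖fderiv ℝ (g^[k+1]) (f^[k+1] x) (Pu (f^[k+1] x) (X (f^[k+1] x)))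
        - fderiv ℝ (g^[k+1]) (f^[k+1] y) (Pu (f^[k+1] y) (X (f^[k+1] y)))‖
      ≤ min (A*lam^k) (Bu*(Gam^k*‖x-y‖^α)) := by
    intro k
    have hfx := hfkK (k+1) x hx
    have hfy := hfkK (k+1) y hy
    refine le_min ?_ ?_
    · calc ‖fderiv ℝ (g^[k+1]) (f^[k+1] x) (Pu (f^[k+1] x) (X (f^[k+1] x)))
            - fderiv ℝ (g^[k+1]) (f^[k+1] y) (Pu (f^[k+1] y) (X (f^[k+1] y)))‖
          ≤ ‖fderiv ℝ (g^[k+1]) (f^[k+1] x) (Pu (f^[k+1] x) (X (f^[k+1] x)))‖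
            + ‖fderiv ℝ (g^[k+1]) (f^[k+1] y) (Pu (f^[k+1] y) (X (f^[k+1] y)))‖ := norm_sub_le _ _
        _ ≤ (C*M*MX)*lam^k + (C*M*MX)*lam^k :=
            add_le_add (huterm_bound x hx k) (huterm_bound y hy k)
        _ = A*lam^k := by rw [hAdef]; ring
    · have hfkα : ‖f^[k+1] x - f^[k+1] y‖^α ≤ (L^α)^(k+1) * ‖x-y‖^α := by
        have h1 := hrpow_aux (‖f^[k+1] x - f^[k+1] y‖) (L^(k+1)) (‖x-y‖) (norm_nonneg _)
          (pow_nonneg hL0.le (k+1)) (norm_nonneg _) (hfLipk (k+1) x hx y hy)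
        rwa [pow_rpow_comm' hL0.le] at h1
      have e : Ψ (k+1) (f^[k+1] x) (X (f^[k+1] x)) - Ψ (k+1) (f^[k+1] y) (X (f^[k+1] y))
          = (Ψ (k+1) (f^[k+1] x) - Ψ (k+1) (f^[k+1] y)) (X (f^[k+1] x))
            + (Ψ (k+1) (f^[k+1] y)) (X (f^[k+1] x) - X (f^[k+1] y)) := by
        simp only [ContinuousLinearMap.sub_apply, map_sub]
        abel
      have hmp : Lam^(k+1) * (L^α)^(k+1) = Gam^(k+1) := by rw [hGamdef, mul_pow]
      have hlp : lam^(k+1) * (L^α)^(k+1) ≤ Gam^(k+1) := by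
        rw [hGamdef, ← mul_pow]
        exact pow_le_pow_left₀ (mul_nonneg hlam0.le hLa0)
          (mul_le_mul_of_nonneg_right (le_trans hlam1.le hLam1) hLa0) (k+1)
      have hGd0 : (0:ℝ) ≤ Gam^k * ‖x-y‖^α :=
        mul_nonneg (pow_nonneg hGam0.le k) (hrnn x y)
      calc ‖fderiv ℝ (g^[k+1]) (f^[k+1] x) (Pu (f^[k+1] x) (X (f^[k+1] x)))
            - fderiv ℝ (g^[k+1]) (f^[k+1] y) (Pu (f^[k+1] y) (X (f^[k+1] y)))‖
          = ‖(Ψ (k+1) (f^[k+1] x) - Ψ (k+1) (f^[k+1] y)) (X (f^[k+1] x))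
              + (Ψ (k+1) (f^[k+1] y)) (X (f^[k+1] x) - X (f^[k+1] y))‖ := by rw [← e]; rfl
        _ ≤ ‖Ψ (k+1) (f^[k+1] x) - Ψ (k+1) (f^[k+1] y)‖ * ‖X (f^[k+1] x)‖
              + ‖Ψ (k+1) (f^[k+1] y)‖ * ‖X (f^[k+1] x) - X (f^[k+1] y)‖ :=
            le_trans (norm_add_le _ _) (add_le_add (ContinuousLinearMap.le_opNorm _ _)
              (ContinuousLinearMap.le_opNorm _ _))
        _ ≤ (Du * Lam^(k+1) * ‖f^[k+1] x - f^[k+1] y‖^α) * MX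
              + (C*lam^(k+1)*M) * (Ca * ‖f^[k+1] x - f^[k+1] y‖^α) := by
            apply add_le_add
            · exact mul_le_mul (hΨH (k+1) _ hfx _ hfy) (hMX _ hfx) (norm_nonneg _)
                (mul_nonneg (mul_nonneg hDu0.le (pow_nonneg hLam0.le (k+1))) (hrnn _ _))
            · exact mul_le_mul (hΨbd (k+1) _ hfy) (hXH' _ hfx _ hfy) (norm_nonneg _)
                (mul_nonneg (mul_nonneg hC.le (pow_nonneg hlam0.le (k+1))) hMpos.le)
        _ ≤ (Du * Lam^(k+1) * ((L^α)^(k+1) * ‖x-y‖^α)) * MX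
              + (C*lam^(k+1)*M) * (Ca * ((L^α)^(k+1) * ‖x-y‖^α)) := by
            apply add_le_add
            · exact mul_le_mul_of_nonneg_right (mul_le_mul_of_nonneg_left hfkα
                (mul_nonneg hDu0.le (pow_nonneg hLam0.le (k+1)))) hMXpos.le
            · exact mul_le_mul_of_nonneg_left (mul_le_mul_of_nonneg_left hfkα hCa0)
                (mul_nonneg (mul_nonneg hC.le (pow_nonneg hlam0.le (k+1))) hMpos.le)
        _ = (Du*MX)*((Lam^(k+1)*(L^α)^(k+1))*‖x-y‖^α)
              + (C*M*Ca)*((lam^(k+1)*(L^α)^(k+1))*‖x-y‖^α) := by ring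
        _ ≤ (Du*MX)*(Gam^(k+1)*‖x-y‖^α) + (C*M*Ca)*(Gam^(k+1)*‖x-y‖^α) := by
            apply add_le_add
            · exact mul_le_mul_of_nonneg_left (by rw [hmp]) (mul_nonneg hDu0.le hMXpos.le)
            · exact mul_le_mul_of_nonneg_left
                (mul_le_mul_of_nonneg_right hlp (hrnn x y)) hCMCa0
        _ = ((Du*MX + C*M*Ca)*Gam)*(Gam^k*‖x-y‖^α) := by rw [pow_succ]; ring
        _ ≤ Bu*(Gam^k*‖x-y‖^α) := by
            have h9 : (Du*MX + C*M*Ca)*Gam ≤ Bu := by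
              rw [hBudef]
              exact mul_le_mul_of_nonneg_right (by linarith) hGam0.le
            exact mul_le_mul_of_nonneg_right h9 hGd0
  -- interpolated termwise bounds
  have hs_fin : ∀ k : ℕ,
      ‖fderiv ℝ (f^[k]) (g^[k] x) (Ps (g^[k] x) (X (g^[k] x)))
        - fderiv ℝ (f^[k]) (g^[k] y) (Ps (g^[k] y) (X (g^[k] y)))‖
      ≤ (Qs*‖x-y‖^(α*th)) * mu^k := by
    intro k
    have := hAB A Bs (‖x-y‖) hA0 hBs0 hd k _ (hs_min k)
    rw [← hQsdef] at this
    exact le_of_le_of_eq this (by ring)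
  have hu_fin : ∀ k : ℕ,
      ‖fderiv ℝ (g^[k+1]) (f^[k+1] x) (Pu (f^[k+1] x) (X (f^[k+1] x)))
        - fderiv ℝ (g^[k+1]) (f^[k+1] y) (Pu (f^[k+1] y) (X (f^[k+1] y)))‖
      ≤ (Qu*‖x-y‖^(α*th)) * mu^k := by
    intro k
    have := hAB A Bu (‖x-y‖) hA0 hBu0 hd k _ (hu_min k)
    rw [← hQudef] at this
    exact le_of_le_of_eq this (by ring)
  -- summability of the norm series
  have hsnorm_summ : Summable (fun k : ℕ =>
      ‖fderiv ℝ (f^[k]) (g^[k] x) (Ps (g^[k] x) (X (g^[k] x)))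
        - fderiv ℝ (f^[k]) (g^[k] y) (Ps (g^[k] y) (X (g^[k] y)))‖) :=
    Summable.of_nonneg_of_le (fun k => norm_nonneg _)
      (fun k => le_trans (hs_min k) (min_le_left _ _))
      ((summable_geometric_of_lt_one hlam0.le hlam1).mul_left A)
  have hunorm_summ : Summable (fun k : ℕ =>
      ‖fderiv ℝ (g^[k+1]) (f^[k+1] x) (Pu (f^[k+1] x) (X (f^[k+1] x)))
        - fderiv ℝ (g^[k+1]) (f^[k+1] y) (Pu (f^[k+1] y) (X (f^[k+1] y)))‖) :=
    Summable.of_nonneg_of_le (fun k => norm_nonneg _)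
      (fun k => le_trans (hu_min k) (min_le_left _ _))
      ((summable_geometric_of_lt_one hlam0.le hlam1).mul_left A)
  -- sum the bounds
  have hgeo : Summable (fun k : ℕ => mu^k) := summable_geometric_of_lt_one hmu0 hmu1
  have h1 : ‖∑' k : ℕ, (fderiv ℝ (f^[k]) (g^[k] x) (Ps (g^[k] x) (X (g^[k] x)))
        - fderiv ℝ (f^[k]) (g^[k] y) (Ps (g^[k] y) (X (g^[k] y))))‖
      ≤ (Qs*‖x-y‖^(α*th)) * (1-mu)⁻¹ := by
    calc ‖∑' k : ℕ, (fderiv ℝ (f^[k]) (g^[k] x) (Ps (g^[k] x) (X (g^[k] x)))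
          - fderiv ℝ (f^[k]) (g^[k] y) (Ps (g^[k] y) (X (g^[k] y))))‖
        ≤ ∑' k : ℕ, ‖fderiv ℝ (f^[k]) (g^[k] x) (Ps (g^[k] x) (X (g^[k] x)))
          - fderiv ℝ (f^[k]) (g^[k] y) (Ps (g^[k] y) (X (g^[k] y)))‖ :=
          norm_tsum_le_tsum_norm hsnorm_summ
      _ ≤ ∑' k : ℕ, (Qs*‖x-y‖^(α*th)) * mu^k :=
          Summable.tsum_le_tsum hs_fin hsnorm_summ (hgeo.mul_left _)
      _ = (Qs*‖x-y‖^(α*th)) * (1-mu)⁻¹ := by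
          rw [tsum_mul_left, tsum_geometric_of_lt_one hmu0 hmu1]
  have h2 : ‖∑' k : ℕ, (fderiv ℝ (g^[k+1]) (f^[k+1] x) (Pu (f^[k+1] x) (X (f^[k+1] x)))
        - fderiv ℝ (g^[k+1]) (f^[k+1] y) (Pu (f^[k+1] y) (X (f^[k+1] y))))‖
      ≤ (Qu*‖x-y‖^(α*th)) * (1-mu)⁻¹ := by
    calc ‖∑' k : ℕ, (fderiv ℝ (g^[k+1]) (f^[k+1] x) (Pu (f^[k+1] x) (X (f^[k+1] x)))
          - fderiv ℝ (g^[k+1]) (f^[k+1] y) (Pu (f^[k+1] y) (X (f^[k+1] y))))‖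
        ≤ ∑' k : ℕ, ‖fderiv ℝ (g^[k+1]) (f^[k+1] x) (Pu (f^[k+1] x) (X (f^[k+1] x)))
          - fderiv ℝ (g^[k+1]) (f^[k+1] y) (Pu (f^[k+1] y) (X (f^[k+1] y)))‖ :=
          norm_tsum_le_tsum_norm hunorm_summ
      _ ≤ ∑' k : ℕ, (Qu*‖x-y‖^(α*th)) * mu^k :=
          Summable.tsum_le_tsum hu_fin hunorm_summ (hgeo.mul_left _)
      _ = (Qu*‖x-y‖^(α*th)) * (1-mu)⁻¹ := by
          rw [tsum_mul_left, tsum_geometric_of_lt_one hmu0 hmu1]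
  -- split the difference of the two series
  have e1 : (∑' k : ℕ, (fderiv ℝ (f^[k]) (g^[k] x) (Ps (g^[k] x) (X (g^[k] x)))
        - fderiv ℝ (f^[k]) (g^[k] y) (Ps (g^[k] y) (X (g^[k] y)))))
      = (∑' k : ℕ, fderiv ℝ (f^[k]) (g^[k] x) (Ps (g^[k] x) (X (g^[k] x))))
        - ∑' k : ℕ, fderiv ℝ (f^[k]) (g^[k] y) (Ps (g^[k] y) (X (g^[k] y))) :=
    ((hsummS x hx).hasSum.sub (hsummS y hy).hasSum).tsum_eq
  have e2 : (∑' k : ℕ, (fderiv ℝ (g^[k+1]) (f^[k+1] x) (Pu (f^[k+1] x) (X (f^[k+1] x)))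
        - fderiv ℝ (g^[k+1]) (f^[k+1] y) (Pu (f^[k+1] y) (X (f^[k+1] y)))))
      = (∑' k : ℕ, fderiv ℝ (g^[k+1]) (f^[k+1] x) (Pu (f^[k+1] x) (X (f^[k+1] x))))
        - ∑' k : ℕ, fderiv ℝ (g^[k+1]) (f^[k+1] y) (Pu (f^[k+1] y) (X (f^[k+1] y))) :=
    ((hsummU x hx).hasSum.sub (hsummU y hy).hasSum).tsum_eq
  have hvxy : v x - v y
      = (∑' k : ℕ, (fderiv ℝ (f^[k]) (g^[k] x) (Ps (g^[k] x) (X (g^[k] x)))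
          - fderiv ℝ (f^[k]) (g^[k] y) (Ps (g^[k] y) (X (g^[k] y)))))
        - ∑' k : ℕ, (fderiv ℝ (g^[k+1]) (f^[k+1] x) (Pu (f^[k+1] x) (X (f^[k+1] x)))
          - fderiv ℝ (g^[k+1]) (f^[k+1] y) (Pu (f^[k+1] y) (X (f^[k+1] y)))) := by
    rw [hv x, hv y, e1, e2]
    abel
  calc ‖v x - v y‖
      ≤ (Qs*‖x-y‖^(α*th)) * (1-mu)⁻¹ + (Qu*‖x-y‖^(α*th)) * (1-mu)⁻¹ := by
        rw [hvxy]
        exact le_trans (norm_sub_le _ _) (add_le_add h1 h2)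
    _ = ((Qs+Qu)*(1-mu)⁻¹) * ‖x-y‖^(α*th) := by ring
end

section
/- Let x_n := f^n(x₀) be an orbit in K. If ν_n ∈ E* satisfies the homogeneous adjoint equation ν_n = ν_{n+1} ∘ Df(x_n) for all n ∈ ℤ and sup_{n∈ℤ} ‖ν_n‖ < ∞, then ν_n = 0 for all n ∈ ℤ. (A bounded homogeneous adjoint solution along an orbit of a hyperbolic set is identically zero.) -/
open Function Set Filter MeasureTheory Topology

lemma abs_eq_zero_of_le_geom {a c lam : ℝ} (hlam0 : 0 ≤ lam) (hlam1 : lam < 1)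
    (h : ∀ m : ℕ, |a| ≤ c * lam ^ m) : a = 0 := by
  have ht : Tendsto (fun m : ℕ => c * lam ^ m) atTop (nhds 0) := by
    simpa using (tendsto_pow_atTop_nhds_zero_of_lt_one hlam0 hlam1).const_mul c
  have h0 : |a| ≤ 0 := le_of_tendsto_of_tendsto' tendsto_const_nhds ht h
  exact abs_eq_zero.mp (le_antisymm h0 (abs_nonneg a))

theorem bounded_homogeneous_adjoint_zero
    {E : Type*} [NormedAddCommGroup E] [NormedSpace ℝ E] [FiniteDimensional ℝ E]
    (f g : E → E) (hgf : Function.LeftInverse g f) (hfg : Function.RightInverse g f)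
    (hf : ContDiff ℝ 1 f) (hg : ContDiff ℝ 1 g)
    (K : Set E) (hKc : IsCompact K) (hfK : f '' K = K)
    (Vs Vu : E → Submodule ℝ E)
    (hsplit : ∀ x ∈ K, IsCompl (Vs x) (Vu x))
    (hequivs : ∀ x ∈ K, (Vs x).map (fderiv ℝ f x : E →ₗ[ℝ] E) = Vs (f x))
    (hequivu : ∀ x ∈ K, (Vu x).map (fderiv ℝ f x : E →ₗ[ℝ] E) = Vu (f x))
    (C lam : ℝ) (hC : 0 < C) (hlam0 : 0 < lam) (hlam1 : lam < 1)
    (hyps : ∀ (n : ℕ), ∀ x ∈ K, ∀ v ∈ Vs x, ‖fderiv ℝ (f^[n]) x v‖ ≤ C * lam ^ n * ‖v‖)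
    (hypu : ∀ (n : ℕ), ∀ x ∈ K, ∀ v ∈ Vu x, ‖fderiv ℝ (g^[n]) x v‖ ≤ C * lam ^ n * ‖v‖)
    (Ps Pu : E → E →L[ℝ] E)
    (hproj : ∀ x ∈ K, ∀ v : E, Ps x v ∈ Vs x ∧ Pu x v ∈ Vu x ∧ Ps x v + Pu x v = v)
    (hPbdd : ∃ M : ℝ, ∀ x ∈ K, ‖Ps x‖ + ‖Pu x‖ ≤ M)
    (orb : ℤ → E) (horb0 : orb 0 ∈ K) (horb : ∀ n : ℤ, orb (n + 1) = f (orb n))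
    (ν : ℤ → E →L[ℝ] ℝ)
    (hν : ∀ n : ℤ, ν n = (ν (n + 1)).comp (fderiv ℝ f (orb n)))
    (hνb : ∃ M : ℝ, ∀ n : ℤ, ‖ν n‖ ≤ M) :
    ∀ n : ℤ, ν n = 0 := by
  obtain ⟨M, hM⟩ := hνb
  have hdf : Differentiable ℝ f := hf.differentiable one_ne_zero
  have hdg : Differentiable ℝ g := hg.differentiable one_ne_zero
  have horbf : ∀ (n : ℤ) (m : ℕ), orb (n + m) = f^[m] (orb n) := by
    intro n m
    induction m with
    | zero => simp
    | succ m ih =>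
      have hc : (n + (m + 1 : ℕ) : ℤ) = (n + m) + 1 := by push_cast; ring
      rw [hc, horb, ih, Function.iterate_succ_apply']
  have horbg : ∀ (n : ℤ) (m : ℕ), g^[m] (orb n) = orb (n - m) := by
    intro n m
    have h1 : orb ((n - m) + m) = f^[m] (orb (n - m)) := horbf (n - m) m
    rw [show ((n - m) + m : ℤ) = n by ring] at h1
    rw [h1, (hgf.iterate m) (orb (n - m))]
  have horbK : ∀ n : ℤ, orb n ∈ K := by
    intro n
    induction n using Int.induction_on with
    | zero => exact horb0
    | succ k ih => rw [horb]; rw [← hfK]; exact mem_image_of_mem f ih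
    | pred k ih =>
      have h1 : orb (-(k : ℤ) - 1) = g (orb (-k)) := by
        have h2 := horb (-(k : ℤ) - 1)
        rw [show (-(k : ℤ) - 1) + 1 = -k by ring] at h2
        rw [h2, hgf]
      rw [← hfK] at ih
      obtain ⟨y, hy, hyx⟩ := ih
      rw [h1, ← hyx, hgf]; exact hy
  have hνf : ∀ (n : ℤ) (m : ℕ), ν n = (ν (n + m)).comp (fderiv ℝ (f^[m]) (orb n)) := by
    intro n m
    induction m with
    | zero =>
      ext v
      simp [Function.iterate_zero, fderiv_id']
    | succ m ih =>
      have hiter : fderiv ℝ (f^[m + 1]) (orb n)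
          = (fderiv ℝ f (f^[m] (orb n))).comp (fderiv ℝ (f^[m]) (orb n)) := by
        rw [Function.iterate_succ']
        exact fderiv_comp _ (hdf _) ((hdf.iterate m) _)
      have hc : (n + (m + 1 : ℕ) : ℤ) = (n + m) + 1 := by push_cast; ring
      rw [hc, hiter, ← ContinuousLinearMap.comp_assoc, ← horbf n m, ← hν (n + m), ih]
  have hinv : ∀ (n : ℤ) (m : ℕ) (v : E),
      fderiv ℝ (f^[m]) (orb (n - m)) (fderiv ℝ (g^[m]) (orb n) v) = v := by
    intro n m v
    have hcomp : (f^[m] ∘ g^[m]) = id := funext (hfg.iterate m)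
    have h1 : (fderiv ℝ (f^[m]) (g^[m] (orb n))).comp (fderiv ℝ (g^[m]) (orb n))
        = ContinuousLinearMap.id ℝ E := by
      rw [← fderiv_comp _ ((hdf.iterate m) _) ((hdg.iterate m) _), hcomp, fderiv_id]
    rw [← horbg n m]
    have h2 := congrArg (fun L : E →L[ℝ] E => L v) h1
    simpa using h2
  intro n
  ext v
  obtain ⟨hs, hu, hsum⟩ := hproj (orb n) (horbK n) v
  have hzs : ν n (Ps (orb n) v) = 0 := by
    apply abs_eq_zero_of_le_geom (c := M * C * ‖Ps (orb n) v‖) hlam0.le hlam1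
    intro m
    have h1 : ν n (Ps (orb n) v) = ν (n + m) (fderiv ℝ (f^[m]) (orb n) (Ps (orb n) v)) := by
      rw [hνf n m]; rfl
    rw [h1]
    calc |ν (n + m) (fderiv ℝ (f^[m]) (orb n) (Ps (orb n) v))|
        ≤ ‖ν (n + m)‖ * ‖fderiv ℝ (f^[m]) (orb n) (Ps (orb n) v)‖ :=
          (ν (n + m)).le_opNorm _
      _ ≤ M * (C * lam ^ m * ‖Ps (orb n) v‖) := by
          apply mul_le_mul (hM _) (hyps m (orb n) (horbK n) _ hs)
            (norm_nonneg _) ((norm_nonneg _).trans (hM 0))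
      _ = M * C * ‖Ps (orb n) v‖ * lam ^ m := by ring
  have hzu : ν n (Pu (orb n) v) = 0 := by
    apply abs_eq_zero_of_le_geom (c := M * C * ‖Pu (orb n) v‖) hlam0.le hlam1
    intro m
    have h1 : ν n (Pu (orb n) v)
        = ν (n - m) (fderiv ℝ (g^[m]) (orb n) (Pu (orb n) v)) := by
      have h2 := hνf (n - m) m
      rw [show ((n - m) + m : ℤ) = n by ring] at h2
      rw [h2]
      simp [hinv n m (Pu (orb n) v)]
    rw [h1]
    calc |ν (n - m) (fderiv ℝ (g^[m]) (orb n) (Pu (orb n) v))|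
        ≤ ‖ν (n - m)‖ * ‖fderiv ℝ (g^[m]) (orb n) (Pu (orb n) v)‖ :=
          (ν (n - m)).le_opNorm _
      _ ≤ M * (C * lam ^ m * ‖Pu (orb n) v‖) := by
          apply mul_le_mul (hM _) (hypu m (orb n) (horbK n) _ hu)
            (norm_nonneg _) ((norm_nonneg _).trans (hM 0))
      _ = M * C * ‖Pu (orb n) v‖ * lam ^ m := by ring
  have : ν n v = 0 := by rw [← hsum, map_add, hzs, hzu, add_zero]
  simpa using this
end

section
/- Let x_t := φ^t(x₀) be an orbit in K. Suppose v : ℝ → E is differentiable and bounded, η : ℝ → ℝ is continuous and bounded, and dv_t/dt = DF(x_t) v_t − η_t F(x_t) for all t ∈ ℝ. Then v_t lies in V^c(x_t) = span(F(x_t)) for every t; writing v_t = −h_t F(x_t), the function h : ℝ → ℝ is bounded, differentiable, and dh_t/dt = η_t for all t. -/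
open Function Set Filter MeasureTheory Topology

set_option maxHeartbeats 1000000 in
theorem center_tangent_solution_flow
    {E : Type*} [NormedAddCommGroup E] [NormedSpace ℝ E] [FiniteDimensional ℝ E]
    (F : E → E) (hF : ContDiff ℝ 2 F)
    (φ : ℝ → E → E)
    (hφ0 : ∀ x : E, φ 0 x = x)
    (hφadd : ∀ (s t : ℝ) (x : E), φ (s + t) x = φ s (φ t x))
    (hφode : ∀ (x : E) (t : ℝ), HasDerivAt (fun s => φ s x) (F (φ t x)) t)
    (hφC1 : ∀ t : ℝ, ContDiff ℝ 1 (φ t))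
    (hφD : Continuous fun p : ℝ × E => fderiv ℝ (φ p.1) p.2)
    (K : Set E) (hKc : IsCompact K) (hφK : ∀ t : ℝ, φ t '' K = K)
    (hFne : ∀ x ∈ K, F x ≠ 0)
    (Vs Vu Vc : E → Submodule ℝ E)
    (hVc : ∀ x ∈ K, Vc x = Submodule.span ℝ {F x})
    (hequivs : ∀ (t : ℝ), ∀ x ∈ K, (Vs x).map (fderiv ℝ (φ t) x : E →ₗ[ℝ] E) = Vs (φ t x))
    (hequivu : ∀ (t : ℝ), ∀ x ∈ K, (Vu x).map (fderiv ℝ (φ t) x : E →ₗ[ℝ] E) = Vu (φ t x))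
    (hequivc : ∀ (t : ℝ), ∀ x ∈ K, (Vc x).map (fderiv ℝ (φ t) x : E →ₗ[ℝ] E) = Vc (φ t x))
    (C lam : ℝ) (hC : 0 < C) (hlam0 : 0 < lam) (hlam1 : lam < 1)
    (hyps : ∀ t : ℝ, 0 ≤ t → ∀ x ∈ K, ∀ v ∈ Vs x, ‖fderiv ℝ (φ t) x v‖ ≤ C * lam ^ t * ‖v‖)
    (hypu : ∀ t : ℝ, 0 ≤ t → ∀ x ∈ K, ∀ v ∈ Vu x, ‖fderiv ℝ (φ (-t)) x v‖ ≤ C * lam ^ t * ‖v‖)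
    (Ps Pu Pc : E → E →L[ℝ] E)
    (hproj : ∀ x ∈ K, ∀ v : E, Ps x v ∈ Vs x ∧ Pu x v ∈ Vu x ∧ Pc x v ∈ Vc x ∧
      Ps x v + Pu x v + Pc x v = v)
    (hdirect : ∀ x ∈ K, ∀ vs ∈ Vs x, ∀ vu ∈ Vu x, ∀ vc ∈ Vc x,
      vs + vu + vc = 0 → vs = 0 ∧ vu = 0 ∧ vc = 0)
    (hPbdd : ∃ M : ℝ, ∀ x ∈ K, ‖Ps x‖ + ‖Pu x‖ + ‖Pc x‖ ≤ M)
    (x₀ : E) (hx₀ : x₀ ∈ K)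
    (v : ℝ → E) (hvb : ∃ M : ℝ, ∀ t : ℝ, ‖v t‖ ≤ M)
    (η : ℝ → ℝ) (hηc : Continuous η) (hηb : ∃ M : ℝ, ∀ t : ℝ, |η t| ≤ M)
    (hode : ∀ t : ℝ,
      HasDerivAt v (fderiv ℝ F (φ t x₀) (v t) - η t • F (φ t x₀)) t) :
    (∀ t : ℝ, v t ∈ Vc (φ t x₀)) ∧
    ∃ h : ℝ → ℝ, (∀ t : ℝ, v t = -h t • F (φ t x₀)) ∧
      (∃ M : ℝ, ∀ t : ℝ, |h t| ≤ M) ∧ (∀ t : ℝ, HasDerivAt h (η t) t) := by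
  classical
  obtain ⟨Mv, hMv⟩ := hvb
  obtain ⟨Mp, hMp⟩ := hPbdd
  have hMv0 : 0 ≤ Mv := le_trans (norm_nonneg _) (hMv 0)
  have hMp0 : 0 ≤ Mp := le_trans (by positivity) (hMp x₀ hx₀)
  have hFdiff : Differentiable ℝ F := (hF.of_le one_le_two).differentiable one_ne_zero
  have hFcont : Continuous F := hFdiff.continuous
  have hDFcont : Continuous (fderiv ℝ F) := hF.continuous_fderiv two_ne_zero
  have hφdiff : ∀ t : ℝ, Differentiable ℝ (φ t) := fun t => (hφC1 t).differentiable one_ne_zero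
  have hxK : ∀ t : ℝ, φ t x₀ ∈ K := fun t => (hφK t) ▸ Set.mem_image_of_mem _ hx₀
  -- cocycle property of the derivative of the flow
  have hcocycle : ∀ s t : ℝ, ∀ y : E, fderiv ℝ (φ (s + t)) y
      = (fderiv ℝ (φ s) (φ t y)).comp (fderiv ℝ (φ t) y) := by
    intro s t y
    have h1 : φ (s + t) = fun z => φ s (φ t z) := funext fun z => hφadd s t z
    rw [h1]
    exact fderiv_comp y ((hφdiff s) _) ((hφdiff t) _)
  have hid : ∀ y : E, fderiv ℝ (φ 0) y = ContinuousLinearMap.id ℝ E := by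
    intro y
    have h1 : φ 0 = fun z : E => z := funext hφ0
    rw [h1]
    exact fderiv_id
  -- pushforward of the vector field
  have hFpush : ∀ (t : ℝ) (y : E), fderiv ℝ (φ t) y (F y) = F (φ t y) := by
    intro t y
    have hout' : HasFDerivAt (φ t) (fderiv ℝ (φ t) y) (φ 0 y) := by
      rw [hφ0 y]; exact ((hφdiff t) y).hasFDerivAt
    have h1 : HasDerivAt (fun s => φ t (φ s y)) (fderiv ℝ (φ t) y (F y)) 0 := by
      have := hout'.comp_hasDerivAt 0 (hφode y 0)
      simpa [hφ0 y, Function.comp_def] using this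
    have h2 : HasDerivAt (fun s => φ t (φ s y)) (F (φ t y)) 0 := by
      have hin : HasDerivAt (fun s : ℝ => t + s) 1 0 := by
        simpa using (hasDerivAt_id (0:ℝ)).const_add t
      have h2' := (hφode y (t + 0)).scomp 0 hin
      have heq2 : ((fun s => φ s y) ∘ fun s : ℝ => t + s) = fun s => φ t (φ s y) :=
        funext fun s => hφadd t s y
      rw [heq2] at h2'
      simpa using h2'
    exact h1.unique h2
  -- joint continuity of the flow
  have hφjc : Continuous fun p : ℝ × E => φ p.1 p.2 := by
    rw [continuous_iff_continuousAt]
    rintro ⟨t₀, y₀⟩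
    have hnc : ContinuousAt (fun p : ℝ × E => ‖fderiv ℝ (φ p.1) p.2‖) (t₀, y₀) :=
      (continuous_norm.comp hφD).continuousAt
    set R : ℝ := ‖fderiv ℝ (φ t₀) y₀‖ + 1 with hR
    have hev : ∀ᶠ p : ℝ × E in 𝓝 (t₀, y₀), ‖fderiv ℝ (φ p.1) p.2‖ < R :=
      hnc (Iio_mem_nhds (by simp [hR]))
    obtain ⟨δ, hδ0, hδ⟩ := Metric.eventually_nhds_iff.mp hev
    have hball : ∀ s ∈ Metric.ball t₀ δ, ∀ y ∈ Metric.ball y₀ δ,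
        ‖fderiv ℝ (φ s) y‖ ≤ R := by
      intro s hs y hy
      have : dist ((s, y) : ℝ × E) (t₀, y₀) < δ := by
        rw [Prod.dist_eq]
        exact max_lt hs hy
      exact (hδ this).le
    have hdiffb : ∀ᶠ p : ℝ × E in 𝓝 (t₀, y₀), ‖φ p.1 p.2 - φ p.1 y₀‖ ≤ R * ‖p.2 - y₀‖ := by
      have hmem : Metric.ball t₀ δ ×ˢ Metric.ball y₀ δ ∈ 𝓝 ((t₀, y₀) : ℝ × E) :=
        prod_mem_nhds (Metric.ball_mem_nhds _ hδ0) (Metric.ball_mem_nhds _ hδ0)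
      filter_upwards [hmem] with p hp
      have h1 : ∀ z ∈ Metric.ball y₀ δ, DifferentiableAt ℝ (φ p.1) z :=
        fun z _ => (hφdiff p.1) z
      have h2 : ∀ z ∈ Metric.ball y₀ δ, ‖fderiv ℝ (φ p.1) z‖ ≤ R :=
        fun z hz => hball p.1 hp.1 z hz
      exact (convex_ball y₀ δ).norm_image_sub_le_of_norm_fderiv_le h1 h2
        (Metric.mem_ball_self hδ0) hp.2
    have ht1 : Tendsto (fun p : ℝ × E => φ p.1 p.2 - φ p.1 y₀) (𝓝 (t₀, y₀)) (𝓝 0) := by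
      apply squeeze_zero_norm' hdiffb
      have : Tendsto (fun p : ℝ × E => R * ‖p.2 - y₀‖) (𝓝 (t₀, y₀)) (𝓝 (R * ‖y₀ - y₀‖)) :=
        (continuous_const.mul ((continuous_snd.sub continuous_const).norm)).continuousAt
      simpa using this
    have ht2 : Tendsto (fun p : ℝ × E => φ p.1 y₀) (𝓝 (t₀, y₀)) (𝓝 (φ t₀ y₀)) := by
      have hc : Continuous fun s : ℝ => φ s y₀ :=
        continuous_iff_continuousAt.mpr fun s => (hφode y₀ s).continuousAt
      exact (hc.comp continuous_fst).continuousAt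
    have := ht1.add ht2
    simpa [ContinuousAt] using this
  have hcurve : ∀ y : E, Continuous fun s : ℝ => φ s y := fun y =>
    hφjc.comp (continuous_id.prodMk continuous_const)
  -- integral equation for the flow
  have hInt : ∀ (y : E) (t : ℝ), φ t y = y + ∫ s in (0:ℝ)..t, F (φ s y) := by
    intro y t
    have hc : Continuous fun s : ℝ => F (φ s y) := hFcont.comp (hcurve y)
    have hg : ∀ r : ℝ, HasDerivAt (fun u => ∫ s in (0:ℝ)..u, F (φ s y)) (F (φ r y)) r :=
      fun r => intervalIntegral.integral_hasDerivAt_right (hc.intervalIntegrable 0 r)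
        (hc.stronglyMeasurableAtFilter _ _) hc.continuousAt
    have hzero : ∀ r : ℝ, HasDerivAt
        (fun u => φ u y - (y + ∫ s in (0:ℝ)..u, F (φ s y))) 0 r := by
      intro r
      have := (hφode y r).sub ((hg r).const_add y)
      simpa [Pi.sub_def] using this
    have hconst := is_const_of_deriv_eq_zero
      (fun r => (hzero r).differentiableAt) (fun r => (hzero r).deriv) t 0
    have h0 : φ 0 y - (y + ∫ s in (0:ℝ)..(0:ℝ), F (φ s y)) = 0 := by
      simp [hφ0 y]
    rw [h0] at hconst
    exact sub_eq_zero.mp hconst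
  -- continuity of s ↦ fderiv (φ s) x₀ and of the integrand of the variational equation
  have hBcont : Continuous fun s : ℝ => fderiv ℝ (φ s) x₀ :=
    hφD.comp (continuous_id.prodMk continuous_const)
  have hGcont : Continuous fun s : ℝ =>
      (fderiv ℝ F (φ s x₀)).comp (fderiv ℝ (φ s) x₀) :=
    (hDFcont.comp (hcurve x₀)).clm_comp hBcont
  -- the derivative of the flow satisfies the integral form of the variational equation
  have hBw : ∀ (t : ℝ) (w : E), fderiv ℝ (φ t) x₀ w
      = w + ∫ s in (0:ℝ)..t, fderiv ℝ F (φ s x₀) (fderiv ℝ (φ s) x₀ w) := by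
    intro t w
    -- bound on the compact product set
    have hGjc : Continuous fun p : ℝ × E =>
        (fderiv ℝ F (φ p.1 p.2)).comp (fderiv ℝ (φ p.1) p.2) :=
      (hDFcont.comp hφjc).clm_comp hφD
    obtain ⟨R, hR⟩ := ((isCompact_Icc (a := -|t|) (b := |t|)).prod
      (isCompact_closedBall x₀ 1)).exists_bound_of_continuousOn hGjc.continuousOn
    have hsub : Set.uIoc (0:ℝ) t ⊆ Icc (-|t|) |t| := by
      intro s hs
      rw [Set.mem_uIoc] at hs
      rcases hs with ⟨h1, h2⟩ | ⟨h1, h2⟩ <;>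
        constructor <;> nlinarith [le_abs_self t, neg_abs_le t, abs_nonneg t]
    have hmeas1 : ∀ᶠ y in 𝓝 x₀, AEStronglyMeasurable (fun s : ℝ => F (φ s y))
        (volume.restrict (Set.uIoc 0 t)) :=
      Filter.Eventually.of_forall fun y => (hFcont.comp (hcurve y)).aestronglyMeasurable
    have hint1 : IntervalIntegrable (fun s : ℝ => F (φ s x₀)) volume 0 t :=
      (hFcont.comp (hcurve x₀)).intervalIntegrable 0 t
    have hmeas2 : AEStronglyMeasurable
        (fun s : ℝ => (fderiv ℝ F (φ s x₀)).comp (fderiv ℝ (φ s) x₀))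
        (volume.restrict (Set.uIoc 0 t)) := hGcont.aestronglyMeasurable
    have hbound1 : ∀ᵐ s ∂(volume : Measure ℝ), s ∈ Set.uIoc 0 t →
        ∀ y ∈ Metric.ball x₀ 1, ‖(fderiv ℝ F (φ s y)).comp (fderiv ℝ (φ s) y)‖ ≤ R :=
      Filter.Eventually.of_forall fun s hs y hy =>
        hR (s, y) ⟨hsub hs, Metric.ball_subset_closedBall hy⟩
    have hdiff1 : ∀ᵐ s ∂(volume : Measure ℝ), s ∈ Set.uIoc 0 t →
        ∀ y ∈ Metric.ball x₀ 1, HasFDerivAt (fun z => F (φ s z))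
          ((fderiv ℝ F (φ s y)).comp (fderiv ℝ (φ s) y)) y :=
      Filter.Eventually.of_forall fun s _ y _ =>
        (hFdiff (φ s y)).hasFDerivAt.comp y ((hφdiff s) y).hasFDerivAt
    have hkey : HasFDerivAt (fun y => ∫ s in (0:ℝ)..t, F (φ s y))
        (∫ s in (0:ℝ)..t, (fderiv ℝ F (φ s x₀)).comp (fderiv ℝ (φ s) x₀)) x₀ :=
      intervalIntegral.hasFDerivAt_integral_of_dominated_of_fderiv_le
        (𝕜 := ℝ) (μ := volume) (F := fun y s => F (φ s y))
        (F' := fun y s => (fderiv ℝ F (φ s y)).comp (fderiv ℝ (φ s) y))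
        (bound := fun _ => R)
        (Metric.ball_mem_nhds x₀ one_pos) hmeas1 hint1 hmeas2 hbound1 intervalIntegrable_const hdiff1
    have hphiF : HasFDerivAt (φ t)
        (ContinuousLinearMap.id ℝ E
          + ∫ s in (0:ℝ)..t, (fderiv ℝ F (φ s x₀)).comp (fderiv ℝ (φ s) x₀)) x₀ := by
      have h1 := (hasFDerivAt_id x₀).add hkey
      exact h1.congr_of_eventuallyEq (Filter.Eventually.of_forall fun y => hInt y t)
    have hBeq := hphiF.fderiv
    rw [hBeq]
    rw [ContinuousLinearMap.add_apply, ContinuousLinearMap.id_apply,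
      ContinuousLinearMap.intervalIntegral_apply (hGcont.intervalIntegrable 0 t) w]
    simp [ContinuousLinearMap.comp_apply]
  -- the variational equation in differential form
  have hBode : ∀ (w : E) (r : ℝ), HasDerivAt (fun τ => fderiv ℝ (φ τ) x₀ w)
      (fderiv ℝ F (φ r x₀) (fderiv ℝ (φ r) x₀ w)) r := by
    intro w r
    have hgc : Continuous fun s : ℝ => fderiv ℝ F (φ s x₀) (fderiv ℝ (φ s) x₀ w) :=
      (hDFcont.comp (hcurve x₀)).clm_apply (hBcont.clm_apply continuous_const)
    have h1 : HasDerivAt (fun τ => w + ∫ s in (0:ℝ)..τ,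
        fderiv ℝ F (φ s x₀) (fderiv ℝ (φ s) x₀ w))
        (fderiv ℝ F (φ r x₀) (fderiv ℝ (φ r) x₀ w)) r :=
      (intervalIntegral.integral_hasDerivAt_right (hgc.intervalIntegrable 0 r)
        (hgc.stronglyMeasurableAtFilter _ _) hgc.continuousAt).const_add w
    have heq : (fun τ => w + ∫ s in (0:ℝ)..τ,
        fderiv ℝ F (φ s x₀) (fderiv ℝ (φ s) x₀ w)) = fun τ => fderiv ℝ (φ τ) x₀ w :=
      funext fun τ => (hBw τ w).symm
    rwa [heq] at h1
  -- the integral of η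
  set I : ℝ → ℝ := fun t => ∫ s in (0:ℝ)..t, η s with hIdef
  have hIode : ∀ t : ℝ, HasDerivAt I (η t) t := fun t =>
    intervalIntegral.integral_hasDerivAt_right (hηc.intervalIntegrable 0 t)
      (hηc.stronglyMeasurableAtFilter _ _) hηc.continuousAt
  -- derivative of t ↦ F (φ t x₀)
  have hFx : ∀ t : ℝ, HasDerivAt (fun τ => F (φ τ x₀))
      (fderiv ℝ F (φ t x₀) (F (φ t x₀))) t := fun t =>
    (hFdiff _).hasFDerivAt.comp_hasDerivAt t (hφode x₀ t)
  -- the candidate solution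
  set u : ℝ → E := fun t => fderiv ℝ (φ t) x₀ (v 0) - I t • F (φ t x₀) with hudef
  have huode : ∀ t : ℝ, HasDerivAt u (fderiv ℝ F (φ t x₀) (u t) - η t • F (φ t x₀)) t := by
    intro t
    have h1 := (hBode (v 0) t).sub ((hIode t).smul (hFx t))
    have h2 : fderiv ℝ F (φ t x₀) (fderiv ℝ (φ t) x₀ (v 0))
        - (I t • fderiv ℝ F (φ t x₀) (F (φ t x₀)) + η t • F (φ t x₀))
        = fderiv ℝ F (φ t x₀) (u t) - η t • F (φ t x₀) := by
      simp only [hudef, map_sub, _root_.map_smul]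
      abel
    rw [h2] at h1
    exact h1
  -- uniqueness of the ODE solution: v = u
  obtain ⟨L0, hL0⟩ := hKc.exists_bound_of_continuousOn hDFcont.continuousOn
  have hVlip : ∀ t : ℝ, LipschitzOnWith L0.toNNReal
      (fun w => fderiv ℝ F (φ t x₀) w - η t • F (φ t x₀)) (univ : Set E) := by
    intro t
    apply LipschitzWith.lipschitzOnWith
    apply LipschitzWith.of_dist_le_mul
    intro w1 w2
    simp only [dist_eq_norm, sub_sub_sub_cancel_right, ← map_sub]
    calc ‖fderiv ℝ F (φ t x₀) (w1 - w2)‖ ≤ ‖fderiv ℝ F (φ t x₀)‖ * ‖w1 - w2‖ :=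
          (fderiv ℝ F (φ t x₀)).le_opNorm _
      _ ≤ L0.toNNReal * ‖w1 - w2‖ := by
          gcongr
          exact (hL0 _ (hxK t)).trans (Real.le_coe_toNNReal L0)
  have hveq : ∀ t : ℝ, v t = u t := by
    intro t₁
    have h0 : v 0 = u 0 := by
      simp [hudef, hIdef, hid x₀, intervalIntegral.integral_same]
    have hmem : (0:ℝ) ∈ Ioo (-(|t₁| + 1)) (|t₁| + 1) := by
      constructor <;> nlinarith [abs_nonneg t₁]
    have hmem1 : t₁ ∈ Ioo (-(|t₁| + 1)) (|t₁| + 1) := by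
      constructor <;> nlinarith [le_abs_self t₁, neg_abs_le t₁]
    exact ODE_solution_unique_of_mem_Ioo (fun t _ => hVlip t) hmem
      (fun t _ => ⟨hode t, trivial⟩) (fun t _ => ⟨huode t, trivial⟩) h0 hmem1
  -- membership facts
  have hFc : ∀ t : ℝ, F (φ t x₀) ∈ Vc (φ t x₀) := fun t =>
    (hVc _ (hxK t)).symm ▸ Submodule.mem_span_singleton_self _
  have hmapS : ∀ t : ℝ, ∀ z ∈ Vs x₀, fderiv ℝ (φ t) x₀ z ∈ Vs (φ t x₀) := fun t z hz =>
    (hequivs t x₀ hx₀) ▸ Submodule.mem_map_of_mem hz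
  have hmapU : ∀ t : ℝ, ∀ z ∈ Vu x₀, fderiv ℝ (φ t) x₀ z ∈ Vu (φ t x₀) := fun t z hz =>
    (hequivu t x₀ hx₀) ▸ Submodule.mem_map_of_mem hz
  have hmapC : ∀ t : ℝ, ∀ z ∈ Vc x₀, fderiv ℝ (φ t) x₀ z ∈ Vc (φ t x₀) := fun t z hz =>
    (hequivc t x₀ hx₀) ▸ Submodule.mem_map_of_mem hz
  -- projections are determined by any decomposition
  have hPeq : ∀ y ∈ K, ∀ z : E, ∀ ws ∈ Vs y, ∀ wu ∈ Vu y, ∀ wc ∈ Vc y,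
      ws + wu + wc = z → Ps y z = ws ∧ Pu y z = wu ∧ Pc y z = wc := by
    intro y hy z ws hws wu hwu wc hwc hz
    obtain ⟨h1, h2, h3, h4⟩ := hproj y hy z
    have h5 : (Ps y z - ws) + (Pu y z - wu) + (Pc y z - wc) = 0 := by
      have : Ps y z + Pu y z + Pc y z = ws + wu + wc := by rw [h4, hz]
      linear_combination (norm := abel) this
    obtain ⟨e1, e2, e3⟩ := hdirect y hy _ (sub_mem h1 hws) _ (sub_mem h2 hwu) _
      (sub_mem h3 hwc) h5
    exact ⟨sub_eq_zero.mp e1, sub_eq_zero.mp e2, sub_eq_zero.mp e3⟩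
  obtain ⟨hs₀, hu₀, hc₀, hsum₀⟩ := hproj x₀ hx₀ (v 0)
  -- decomposition of v t at φ t x₀
  have hdecomp : ∀ t : ℝ,
      fderiv ℝ (φ t) x₀ (Ps x₀ (v 0)) + fderiv ℝ (φ t) x₀ (Pu x₀ (v 0))
        + (fderiv ℝ (φ t) x₀ (Pc x₀ (v 0)) - I t • F (φ t x₀)) = v t := by
    intro t
    rw [hveq t]
    simp only [hudef]
    have h4 := congrArg (fderiv ℝ (φ t) x₀) hsum₀
    simp only [map_add] at h4
    rw [← h4]
    abel
  have hPvt : ∀ t : ℝ, Ps (φ t x₀) (v t) = fderiv ℝ (φ t) x₀ (Ps x₀ (v 0))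
      ∧ Pu (φ t x₀) (v t) = fderiv ℝ (φ t) x₀ (Pu x₀ (v 0)) := by
    intro t
    have := hPeq (φ t x₀) (hxK t) (v t)
      _ (hmapS t _ hs₀) _ (hmapU t _ hu₀)
      _ (sub_mem (hmapC t _ hc₀) (Submodule.smul_mem _ _ (hFc t))) (hdecomp t)
    exact ⟨this.1, this.2.1⟩
  -- norm bounds on projections applied to v t
  have hPnorm : ∀ t : ℝ, ‖Ps (φ t x₀) (v t)‖ ≤ Mp * Mv ∧ ‖Pu (φ t x₀) (v t)‖ ≤ Mp * Mv := by
    intro t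
    have hps : ‖Ps (φ t x₀)‖ ≤ Mp := by
      have := hMp _ (hxK t); have h1 := norm_nonneg (Pu (φ t x₀))
      have h2 := norm_nonneg (Pc (φ t x₀)); linarith
    have hpu : ‖Pu (φ t x₀)‖ ≤ Mp := by
      have := hMp _ (hxK t); have h1 := norm_nonneg (Ps (φ t x₀))
      have h2 := norm_nonneg (Pc (φ t x₀)); linarith
    constructor
    · calc ‖Ps (φ t x₀) (v t)‖ ≤ ‖Ps (φ t x₀)‖ * ‖v t‖ := (Ps _).le_opNorm _
        _ ≤ Mp * Mv := mul_le_mul hps (hMv t) (norm_nonneg _) hMp0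
    · calc ‖Pu (φ t x₀) (v t)‖ ≤ ‖Pu (φ t x₀)‖ * ‖v t‖ := (Pu _).le_opNorm _
        _ ≤ Mp * Mv := mul_le_mul hpu (hMv t) (norm_nonneg _) hMp0
  -- the limit of C * lam ^ t * (Mp * Mv)
  have hten : Tendsto (fun t : ℝ => C * lam ^ t * (Mp * Mv)) atTop (𝓝 0) := by
    have h1 := tendsto_rpow_atTop_of_base_lt_one lam (by linarith) hlam1
    have := (h1.const_mul C).mul_const (Mp * Mv)
    simpa using this
  -- unstable component of v 0 vanishes
  have hu0 : Pu x₀ (v 0) = 0 := by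
    have key : ∀ t : ℝ, 0 ≤ t → ‖Pu x₀ (v 0)‖ ≤ C * lam ^ t * (Mp * Mv) := by
      intro t ht
      have h1 : Pu x₀ (v 0) = fderiv ℝ (φ (-t)) (φ t x₀) (fderiv ℝ (φ t) x₀ (Pu x₀ (v 0))) := by
        have hcc := hcocycle (-t) t x₀
        rw [neg_add_cancel, hid x₀] at hcc
        calc Pu x₀ (v 0) = (ContinuousLinearMap.id ℝ E) (Pu x₀ (v 0)) := rfl
          _ = ((fderiv ℝ (φ (-t)) (φ t x₀)).comp (fderiv ℝ (φ t) x₀)) (Pu x₀ (v 0)) := by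
              rw [← hcc]
          _ = fderiv ℝ (φ (-t)) (φ t x₀) (fderiv ℝ (φ t) x₀ (Pu x₀ (v 0))) := rfl
      have h2 := hypu t ht (φ t x₀) (hxK t) _ (hmapU t _ hu₀)
      have h3 : ‖fderiv ℝ (φ t) x₀ (Pu x₀ (v 0))‖ ≤ Mp * Mv := by
        rw [← (hPvt t).2]; exact (hPnorm t).2
      calc ‖Pu x₀ (v 0)‖ = ‖fderiv ℝ (φ (-t)) (φ t x₀) (fderiv ℝ (φ t) x₀ (Pu x₀ (v 0)))‖ := by
            rw [← h1]
        _ ≤ C * lam ^ t * ‖fderiv ℝ (φ t) x₀ (Pu x₀ (v 0))‖ := h2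
        _ ≤ C * lam ^ t * (Mp * Mv) := by
            have hpos : 0 ≤ C * lam ^ t := by positivity
            exact mul_le_mul_of_nonneg_left h3 hpos
    have hle : ‖Pu x₀ (v 0)‖ ≤ 0 :=
      ge_of_tendsto hten (eventually_atTop.mpr ⟨0, fun t ht => key t ht⟩)
    simpa using norm_le_zero_iff.mp hle
  -- stable component of v 0 vanishes
  have hs0 : Ps x₀ (v 0) = 0 := by
    have key : ∀ t : ℝ, 0 ≤ t → ‖Ps x₀ (v 0)‖ ≤ C * lam ^ t * (Mp * Mv) := by
      intro t ht
      have h1 : Ps x₀ (v 0)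
          = fderiv ℝ (φ t) (φ (-t) x₀) (fderiv ℝ (φ (-t)) x₀ (Ps x₀ (v 0))) := by
        have hcc := hcocycle t (-t) x₀
        rw [add_neg_cancel, hid x₀] at hcc
        calc Ps x₀ (v 0) = (ContinuousLinearMap.id ℝ E) (Ps x₀ (v 0)) := rfl
          _ = ((fderiv ℝ (φ t) (φ (-t) x₀)).comp (fderiv ℝ (φ (-t)) x₀)) (Ps x₀ (v 0)) := by
              rw [← hcc]
          _ = fderiv ℝ (φ t) (φ (-t) x₀) (fderiv ℝ (φ (-t)) x₀ (Ps x₀ (v 0))) := rfl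
      have h2 := hyps t ht (φ (-t) x₀) (hxK (-t)) _ (hmapS (-t) _ hs₀)
      have h3 : ‖fderiv ℝ (φ (-t)) x₀ (Ps x₀ (v 0))‖ ≤ Mp * Mv := by
        rw [← (hPvt (-t)).1]; exact (hPnorm (-t)).1
      calc ‖Ps x₀ (v 0)‖
          = ‖fderiv ℝ (φ t) (φ (-t) x₀) (fderiv ℝ (φ (-t)) x₀ (Ps x₀ (v 0)))‖ := by rw [← h1]
        _ ≤ C * lam ^ t * ‖fderiv ℝ (φ (-t)) x₀ (Ps x₀ (v 0))‖ := h2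
        _ ≤ C * lam ^ t * (Mp * Mv) := by
            have hpos : 0 ≤ C * lam ^ t := by positivity
            exact mul_le_mul_of_nonneg_left h3 hpos
    have hle : ‖Ps x₀ (v 0)‖ ≤ 0 :=
      ge_of_tendsto hten (eventually_atTop.mpr ⟨0, fun t ht => key t ht⟩)
    simpa using norm_le_zero_iff.mp hle
  -- hence v 0 is in the center direction
  have hv0c : v 0 ∈ Vc x₀ := by
    have h : Pc x₀ (v 0) = v 0 := by
      have h := hsum₀; rw [hs0, hu0] at h; simpa using h
    exact h ▸ hc₀
  rw [hVc x₀ hx₀, Submodule.mem_span_singleton] at hv0c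
  obtain ⟨a, ha⟩ := hv0c
  -- explicit formula for v t
  have hvt : ∀ t : ℝ, v t = (a - I t) • F (φ t x₀) := by
    intro t
    rw [hveq t]
    simp only [hudef]
    have h1 : fderiv ℝ (φ t) x₀ (v 0) = a • F (φ t x₀) := by
      rw [← ha, _root_.map_smul, hFpush t x₀]
    rw [h1, sub_smul]
  -- lower bound on ‖F‖ on K
  obtain ⟨y₀, hy₀K, hy₀min⟩ := hKc.exists_isMinOn ⟨x₀, hx₀⟩ (hFcont.norm.continuousOn)
  have hm : 0 < ‖F y₀‖ := norm_pos_iff.mpr (hFne y₀ hy₀K)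
  refine ⟨fun t => ?_, fun t => I t - a, fun t => ?_, ⟨Mv / ‖F y₀‖, fun t => ?_⟩,
    fun t => (hIode t).sub_const a⟩
  · rw [hVc _ (hxK t), hvt t]
    exact Submodule.smul_mem _ _ (Submodule.mem_span_singleton_self _)
  · rw [hvt t, neg_smul]
    congr 1
    rw [← neg_smul]
    congr 1
    ring
  · have h1 : |a - I t| * ‖F y₀‖ ≤ Mv := by
      calc |a - I t| * ‖F y₀‖ ≤ |a - I t| * ‖F (φ t x₀)‖ := by
            gcongr; exact hy₀min (hxK t)
        _ = ‖v t‖ := by rw [hvt t, norm_smul, Real.norm_eq_abs]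
        _ ≤ Mv := hMv t
    rw [abs_sub_comm]
    exact (le_div_iff₀ hm).mpr h1
end
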